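/- arXiv:2110.01046 — 9 statements merged into one kernel-verified Lean document; each statement's English description precedes it below -/
import Mathlib

section
/- Let f : ℝ → ℝ be twice differentiable and strictly increasing on some ray [x₀, ∞) with f(x) → ∞ as x → ∞ and f'(x) > 0 there, and suppose f satisfies the growth condition with exponent λ ∈ (0, 1], i.e., there exist constants 0 < c₁ ≤ c₂ such that c₁ x^{-λ} ≤ f''(x)/f'(x) ≤ c₂ x^{-λ} for all sufficiently large x. Then f'(x)·x^λ ≍ f(x) as x → ∞, i.e., there exist constants 0 < C₁ ≤ C₂ such that C₁ f(x) ≤ f'(x)·x^λ ≤ C₂ f(x) for all sufficiently large x. -/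
open Filter Set Topology

/-- The growth condition with exponent `lam` on the ray `[x₀, ∞)`:
`f` is twice differentiable and strictly increasing on the ray, tends to infinity,
has positive derivative there, and `f''/f' ≍ x^(-lam)` at infinity. -/
def GrowthCondition (f : ℝ → ℝ) (lam x₀ : ℝ) : Prop :=
  (∀ x ∈ Set.Ici x₀, DifferentiableAt ℝ f x) ∧
  (∀ x ∈ Set.Ici x₀, DifferentiableAt ℝ (deriv f) x) ∧
  StrictMonoOn f (Set.Ici x₀) ∧
  Filter.Tendsto f Filter.atTop Filter.atTop ∧
  (∀ x ∈ Set.Ici x₀, 0 < deriv f x) ∧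
  ∃ c₁ c₂ : ℝ, 0 < c₁ ∧ c₁ ≤ c₂ ∧
    ∀ᶠ x in Filter.atTop,
      c₁ * x ^ (-lam) ≤ deriv (deriv f) x / deriv f x ∧
      deriv (deriv f) x / deriv f x ≤ c₂ * x ^ (-lam)

/-- If `f` satisfies the growth condition with exponent `lam ∈ (0,1]`, then
`f'(x)·x^lam ≍ f(x)` as `x → ∞`. -/
theorem deriv_mul_rpow_asymp_self (f : ℝ → ℝ) (lam x₀ : ℝ)
    (hlam : lam ∈ Set.Ioc (0 : ℝ) 1)
    (hf : GrowthCondition f lam x₀) :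
    ∃ C₁ C₂ : ℝ, 0 < C₁ ∧ C₁ ≤ C₂ ∧
      ∀ᶠ x in atTop,
        C₁ * f x ≤ deriv f x * x ^ lam ∧ deriv f x * x ^ lam ≤ C₂ * f x := by
  obtain ⟨hlam0, hlam1⟩ := hlam
  obtain ⟨hd1, hd2, hmono, htend, hpos, c₁, c₂, hc₁, hc12, hev⟩ := hf
  obtain ⟨b, hb⟩ := eventually_atTop.mp hev
  set a : ℝ := max x₀ (max 1 b) with ha
  have hax₀ : x₀ ≤ a := le_max_left _ _
  have ha1 : (1:ℝ) ≤ a := le_trans (le_max_left 1 b) (le_max_right _ _)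
  have hab : b ≤ a := le_trans (le_max_right 1 b) (le_max_right _ _)
  -- derivative of u y = deriv f y * y ^ lam on [a, ∞)
  have key : ∀ x ∈ Set.Ici a, HasDerivAt (fun y => deriv f y * y ^ lam)
      (deriv (deriv f) x * x ^ lam + deriv f x * (lam * x ^ (lam - 1))) x := by
    intro x hx
    have hx1 : (1:ℝ) ≤ x := le_trans ha1 hx
    have hx0 : x ≠ 0 := by linarith
    have h1 : HasDerivAt (deriv f) (deriv (deriv f) x) x :=
      (hd2 x (le_trans hax₀ hx)).hasDerivAt
    have h2 : HasDerivAt (fun y : ℝ => y ^ lam) (lam * x ^ (lam - 1)) x :=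
      Real.hasDerivAt_rpow_const (Or.inl hx0)
    exact h1.mul h2
  -- pointwise bounds on [a, ∞)
  have hbnd : ∀ x ∈ Set.Ici a,
      c₁ * deriv f x ≤ deriv (deriv f) x * x ^ lam ∧
      deriv (deriv f) x * x ^ lam ≤ c₂ * deriv f x := by
    intro x hx
    have hx1 : (1:ℝ) ≤ x := le_trans ha1 hx
    have hx0 : (0:ℝ) < x := lt_of_lt_of_le one_pos hx1
    have hp : 0 < deriv f x := hpos x (le_trans hax₀ hx)
    obtain ⟨hl, hr⟩ := hb x (le_trans hab hx)
    have hxl : (0:ℝ) < x ^ lam := Real.rpow_pos_of_pos hx0 _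
    have hneg : x ^ (-lam) = (x ^ lam)⁻¹ := Real.rpow_neg hx0.le _
    rw [hneg] at hl hr
    constructor
    · have h1 : c₁ * (x ^ lam)⁻¹ * deriv f x ≤ deriv (deriv f) x :=
        (le_div_iff₀ hp).mp hl
      have h2 : (c₁ * (x ^ lam)⁻¹ * deriv f x) * x ^ lam ≤ deriv (deriv f) x * x ^ lam :=
        mul_le_mul_of_nonneg_right h1 hxl.le
      calc c₁ * deriv f x = (c₁ * (x ^ lam)⁻¹ * deriv f x) * x ^ lam := by
            field_simp
        _ ≤ deriv (deriv f) x * x ^ lam := h2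
    · have h1 : deriv (deriv f) x ≤ c₂ * (x ^ lam)⁻¹ * deriv f x :=
        (div_le_iff₀ hp).mp hr
      have h2 : deriv (deriv f) x * x ^ lam ≤ (c₂ * (x ^ lam)⁻¹ * deriv f x) * x ^ lam :=
        mul_le_mul_of_nonneg_right h1 hxl.le
      calc deriv (deriv f) x * x ^ lam ≤ (c₂ * (x ^ lam)⁻¹ * deriv f x) * x ^ lam := h2
        _ = c₂ * deriv f x := by field_simp
  -- g is antitone on [a, ∞)
  have hgd : ∀ x ∈ Set.Ici a, HasDerivAt (fun y => f y - (1/c₁) * (deriv f y * y ^ lam))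
      (deriv f x - (1/c₁) * (deriv (deriv f) x * x ^ lam + deriv f x * (lam * x ^ (lam - 1)))) x := by
    intro x hx
    exact ((hd1 x (le_trans hax₀ hx)).hasDerivAt).sub ((key x hx).const_mul _)
  have hg : AntitoneOn (fun y => f y - (1/c₁) * (deriv f y * y ^ lam)) (Set.Ici a) := by
    apply antitoneOn_of_deriv_nonpos (convex_Ici a)
    · exact fun x hx => (hgd x hx).differentiableAt.continuousAt.continuousWithinAt
    · intro x hx
      rw [interior_Ici] at hx
      exact (hgd x (Set.Ioi_subset_Ici_self hx)).differentiableAt.differentiableWithinAt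
    · intro x hx
      rw [interior_Ici] at hx
      have hx' : x ∈ Set.Ici a := Set.Ioi_subset_Ici_self hx
      rw [(hgd x hx').deriv]
      have hp : 0 < deriv f x := hpos x (le_trans hax₀ hx')
      have hx1 : (1:ℝ) ≤ x := le_trans ha1 hx'
      have hx0 : (0:ℝ) < x := lt_of_lt_of_le one_pos hx1
      have h1 := (hbnd x hx').1
      have h3 : 0 ≤ deriv f x * (lam * x ^ (lam - 1)) := by positivity
      have h6 : deriv f x ≤
          1 / c₁ * (deriv (deriv f) x * x ^ lam + deriv f x * (lam * x ^ (lam - 1))) := by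
        rw [one_div, ← div_eq_inv_mul, le_div_iff₀ hc₁]
        nlinarith
      linarith
  -- h is monotone on [a, ∞)
  have hhderiv : ∀ x ∈ Set.Ici a, HasDerivAt (fun y => (c₂ + lam) * f y - deriv f y * y ^ lam)
      ((c₂ + lam) * deriv f x - (deriv (deriv f) x * x ^ lam + deriv f x * (lam * x ^ (lam - 1)))) x := by
    intro x hx
    exact (((hd1 x (le_trans hax₀ hx)).hasDerivAt).const_mul _).sub (key x hx)
  have hh : MonotoneOn (fun y => (c₂ + lam) * f y - deriv f y * y ^ lam) (Set.Ici a) := by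
    apply monotoneOn_of_deriv_nonneg (convex_Ici a)
    · exact fun x hx => (hhderiv x hx).differentiableAt.continuousAt.continuousWithinAt
    · intro x hx
      rw [interior_Ici] at hx
      exact (hhderiv x (Set.Ioi_subset_Ici_self hx)).differentiableAt.differentiableWithinAt
    · intro x hx
      rw [interior_Ici] at hx
      have hx' : x ∈ Set.Ici a := Set.Ioi_subset_Ici_self hx
      rw [(hhderiv x hx').deriv]
      have hp : 0 < deriv f x := hpos x (le_trans hax₀ hx')
      have hx1 : (1:ℝ) ≤ x := le_trans ha1 hx'
      have h2 := (hbnd x hx').2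
      have h4 : x ^ (lam - 1) ≤ 1 :=
        Real.rpow_le_one_of_one_le_of_nonpos hx1 (by linarith)
      have h5 : deriv f x * (lam * x ^ (lam - 1)) ≤ deriv f x * lam := by
        have : lam * x ^ (lam - 1) ≤ lam * 1 :=
          mul_le_mul_of_nonneg_left h4 hlam0.le
        nlinarith
      nlinarith
  -- finish
  refine ⟨c₁ / 2, 2 * (c₂ + lam), by positivity, by nlinarith, ?_⟩
  have hfa : ∀ᶠ x in atTop, (2:ℝ) * f a ≤ f x := htend.eventually_ge_atTop _
  have hfb : ∀ᶠ x in atTop, -((c₂ + lam) * f a - deriv f a * a ^ lam) / (c₂ + lam) ≤ f x :=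
    htend.eventually_ge_atTop _
  filter_upwards [eventually_ge_atTop a, hfa, hfb] with x hxa h2fa hfb'
  have hx' : x ∈ Set.Ici a := hxa
  have haa : a ∈ Set.Ici a := le_refl a
  have hpa : 0 < deriv f a := hpos a hax₀
  have ha0 : (0:ℝ) < a := lt_of_lt_of_le one_pos ha1
  have hua : 0 < deriv f a * a ^ lam := by positivity
  have hclam : (0:ℝ) < c₂ + lam := by linarith
  constructor
  · have hga := hg haa hx' hxa
    simp only at hga
    -- f x - (1/c₁) * u x ≤ f a - (1/c₁) * u a ≤ f a
    have h1 : f x - f a ≤ (1/c₁) * (deriv f x * x ^ lam) := by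
      have hc₁' : (0:ℝ) < 1 / c₁ := by positivity
      nlinarith [mul_pos hc₁' hua]
    -- f x ≥ 2 f a  ⇒ f x - f a ≥ f x / 2
    have h2 : f x / 2 ≤ f x - f a := by linarith
    have h3 : f x / 2 ≤ (1/c₁) * (deriv f x * x ^ lam) := le_trans h2 h1
    have := mul_le_mul_of_nonneg_left h3 hc₁.le
    calc c₁ / 2 * f x = c₁ * (f x / 2) := by ring
      _ ≤ c₁ * ((1/c₁) * (deriv f x * x ^ lam)) := by
          exact mul_le_mul_of_nonneg_left h3 hc₁.le
      _ = deriv f x * x ^ lam := by field_simp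
  · have hmono' := hh haa hx' hxa
    simp only at hmono'
    -- (c₂+lam) f a - u a ≤ (c₂+lam) f x - u x
    have h1 : deriv f x * x ^ lam ≤ (c₂ + lam) * f x - ((c₂ + lam) * f a - deriv f a * a ^ lam) := by
      linarith
    have h2 : -((c₂ + lam) * f a - deriv f a * a ^ lam) ≤ (c₂ + lam) * f x := by
      have := mul_le_mul_of_nonneg_left hfb' hclam.le
      rw [mul_div_cancel₀] at this
      · linarith
      · exact ne_of_gt hclam
    linarith
end

section
/- Let f satisfy the growth condition with exponent λ ∈ (0, 1). Then the inverse function f⁻¹ satisfies f⁻¹(x) ≍ (ln x)^{1/(1−λ)} as x → ∞, i.e., there exist constants 0 < C₁ ≤ C₂ such that C₁ (ln x)^{1/(1−λ)} ≤ f⁻¹(x) ≤ C₂ (ln x)^{1/(1−λ)} for all sufficiently large x. -/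
open Filter Set Topology

/-- `g` is a (two-sided) inverse of `f` relative to the ray `[x₀, ∞)`. -/
def IsInverseOn (f g : ℝ → ℝ) (x₀ : ℝ) : Prop :=
  (∀ x ∈ Set.Ici x₀, g (f x) = x) ∧ (∀ y ∈ Set.Ici (f x₀), f (g y) = y)


lemma monoAux {F F' : ℝ → ℝ} {a : ℝ}
    (hd : ∀ x ∈ Set.Ici a, HasDerivAt F (F' x) x)
    (h0 : ∀ x ∈ Set.Ici a, 0 ≤ F' x) : MonotoneOn F (Set.Ici a) := by
  apply monotoneOn_of_deriv_nonneg (convex_Ici a)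
  · exact fun x hx => (hd x hx).continuousAt.continuousWithinAt
  · intro x hx
    rw [interior_Ici] at hx
    exact ((hd x (Set.mem_Ici.mpr (le_of_lt (Set.mem_Ioi.mp hx)))).differentiableAt).differentiableWithinAt
  · intro x hx
    rw [interior_Ici] at hx
    rw [(hd x (Set.mem_Ici.mpr (le_of_lt (Set.mem_Ioi.mp hx)))).deriv]
    exact h0 x (Set.mem_Ici.mpr (le_of_lt (Set.mem_Ioi.mp hx)))

lemma log_f_asymp (f : ℝ → ℝ) (lam x₀ : ℝ)
    (hlam : lam ∈ Set.Ioo (0 : ℝ) 1)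
    (hdf : ∀ x ∈ Set.Ici x₀, DifferentiableAt ℝ f x)
    (hdf2 : ∀ x ∈ Set.Ici x₀, DifferentiableAt ℝ (deriv f) x)
    (htop : Filter.Tendsto f Filter.atTop Filter.atTop)
    (hpos : ∀ x ∈ Set.Ici x₀, 0 < deriv f x)
    (c₁ c₂ : ℝ) (hc₁ : 0 < c₁) (hc12 : c₁ ≤ c₂)
    (hev : ∀ᶠ x in Filter.atTop,
      c₁ * x ^ (-lam) ≤ deriv (deriv f) x / deriv f x ∧
      deriv (deriv f) x / deriv f x ≤ c₂ * x ^ (-lam)) :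
    ∃ A B : ℝ, 0 < A ∧ 0 < B ∧
      ∀ᶠ x in atTop, (A * x ^ (1 - lam) ≤ Real.log (f x) ∧
        Real.log (f x) ≤ B * x ^ (1 - lam)) ∧ 0 < f x := by
  obtain ⟨hlam0, hlam1⟩ := hlam
  set s : ℝ := 1 - lam with hs_def
  have hs : 0 < s := by simp only [hs_def]; linarith
  have hc₂ : 0 < c₂ := lt_of_lt_of_le hc₁ hc12
  obtain ⟨t₀, ht₀⟩ := eventually_atTop.mp hev
  set x₁ : ℝ := max t₀ (max x₀ 1) + 1 with hx₁def
  have hx₁t : t₀ ≤ x₁ := le_trans (le_max_left _ _) (by linarith)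
  have hx₁0 : x₀ ≤ x₁ := le_trans (le_trans (le_max_left _ _) (le_max_right t₀ _)) (by linarith)
  have hx₁1 : (1:ℝ) ≤ x₁ := le_trans (le_trans (le_max_right _ _) (le_max_right t₀ _)) (by linarith)
  have hx₁pos : (0:ℝ) < x₁ := lt_of_lt_of_le one_pos hx₁1
  have hmem : ∀ x, x₁ ≤ x → (x₀ ≤ x ∧ 0 < x ∧ t₀ ≤ x) :=
    fun x hx => ⟨le_trans hx₁0 hx, lt_of_lt_of_le hx₁pos hx, le_trans hx₁t hx⟩
  set k₁ : ℝ := c₁ / s with hk₁def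
  set k₂ : ℝ := c₂ / s with hk₂def
  have hk₁ : 0 < k₁ := div_pos hc₁ hs
  have hk₂ : 0 < k₂ := div_pos hc₂ hs
  have hD : ∀ k : ℝ, ∀ x, x₁ ≤ x → HasDerivAt (fun y => Real.log (deriv f y) - k * y ^ s)
      (deriv (deriv f) x / deriv f x - (k * s) * x ^ (-lam)) x := by
    intro k x hx
    obtain ⟨hx0, hxp, _⟩ := hmem x hx
    have h1 : HasDerivAt (fun y => Real.log (deriv f y))
        (deriv (deriv f) x / deriv f x) x :=
      ((hdf2 x hx0).hasDerivAt).log (ne_of_gt (hpos x hx0))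
    have h2 : HasDerivAt (fun y : ℝ => y ^ s) (s * x ^ (s - 1)) x :=
      Real.hasDerivAt_rpow_const (Or.inl (ne_of_gt hxp))
    have h3 : HasDerivAt (fun y : ℝ => k * y ^ s) (k * (s * x ^ (s - 1))) x := h2.const_mul k
    have h4 := h1.sub h3
    have he : s - 1 = -lam := by simp [hs_def]
    rw [he] at h4
    exact h4.congr_deriv (by ring)
  set m₁ : ℝ := Real.log (deriv f x₁) - k₁ * x₁ ^ s with hm₁def
  have hlow : ∀ x, x₁ ≤ x → Real.exp (m₁ + k₁ * x ^ s) ≤ deriv f x := by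
    intro x hx
    have hmono : MonotoneOn (fun y => Real.log (deriv f y) - k₁ * y ^ s) (Set.Ici x₁) := by
      apply monoAux (F' := fun x => deriv (deriv f) x / deriv f x - (k₁ * s) * x ^ (-lam))
      · exact fun x hx => hD k₁ x hx
      · intro x hx
        obtain ⟨hx0, hxp, hxt⟩ := hmem x hx
        have hk : k₁ * s = c₁ := by rw [hk₁def]; exact div_mul_cancel₀ c₁ (ne_of_gt hs)
        rw [hk]
        have := (ht₀ x hxt).1
        linarith
    have h5 := hmono self_mem_Ici hx hx
    simp only at h5
    have hpx := hpos x (hmem x hx).1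
    rw [← Real.exp_log hpx]
    apply Real.exp_le_exp.mpr
    simp only [hm₁def] at *
    linarith
  set m₂ : ℝ := Real.log (deriv f x₁) - k₂ * x₁ ^ s with hm₂def
  have hhigh : ∀ x, x₁ ≤ x → deriv f x ≤ Real.exp (m₂ + k₂ * x ^ s) := by
    intro x hx
    have hmono : MonotoneOn (fun y => k₂ * y ^ s - Real.log (deriv f y)) (Set.Ici x₁) := by
      apply monoAux (F' := fun x => (k₂ * s) * x ^ (-lam) - deriv (deriv f) x / deriv f x)
      · intro x hx
        have h6 := (hD k₂ x hx).neg
        exact (h6.congr_deriv (by ring)).congr_of_eventuallyEq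
          (Filter.Eventually.of_forall (fun y => by simp only [Pi.neg_apply]; ring))
      · intro x hx
        obtain ⟨hx0, hxp, hxt⟩ := hmem x hx
        have hk : k₂ * s = c₂ := by rw [hk₂def]; exact div_mul_cancel₀ c₂ (ne_of_gt hs)
        rw [hk]
        have := (ht₀ x hxt).2
        linarith
    have h5 := hmono self_mem_Ici hx hx
    simp only at h5
    have hpx := hpos x (hmem x hx).1
    rw [← Real.exp_log hpx]
    apply Real.exp_le_exp.mpr
    simp only [hm₂def] at *
    linarith
  have hf'mono : MonotoneOn (deriv f) (Set.Ici x₁) := by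
    apply monoAux (F' := fun x => deriv (deriv f) x)
    · exact fun x hx => ((hdf2 x (hmem x hx).1).hasDerivAt)
    · intro x hx
      obtain ⟨hx0, hxp, hxt⟩ := hmem x hx
      have h1 := (ht₀ x hxt).1
      have h2 := hpos x hx0
      have h3 : 0 < c₁ * x ^ (-lam) := by positivity
      have h4 : 0 < deriv (deriv f) x / deriv f x := lt_of_lt_of_le h3 h1
      rcases div_pos_iff.mp h4 with ⟨h5, _⟩ | ⟨_, h6⟩
      · exact le_of_lt h5
      · linarith
  obtain ⟨T, hT⟩ := eventually_atTop.mp (htop.eventually_ge_atTop 0)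
  have hflow : ∀ x, x₁ + 1 ≤ x → T + 1 ≤ x → Real.exp (m₁ + k₁ * (x - 1) ^ s) ≤ f x := by
    intro x hx hxT
    have hlt : x - 1 < x := by linarith
    have hx1' : x₁ ≤ x - 1 := by linarith
    have hcont : ContinuousOn f (Set.Icc (x-1) x) := fun u hu =>
      ((hdf u (le_trans (le_trans hx₁0 hx1') hu.1)).continuousAt).continuousWithinAt
    obtain ⟨ξ, hξ, hξeq⟩ := exists_hasDerivAt_eq_slope f (deriv f) hlt hcont
      (fun y hy => (hdf y (le_trans hx₁0 (le_trans hx1' (le_of_lt hy.1)))).hasDerivAt)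
    have hsub : x - (x - 1) = 1 := by ring
    rw [hsub, div_one] at hξeq
    have h1 : deriv f (x-1) ≤ deriv f ξ :=
      hf'mono hx1' (le_trans hx1' (le_of_lt hξ.1)) (le_of_lt hξ.1)
    have h2 := hlow (x-1) hx1'
    have h3 : 0 ≤ f (x-1) := hT (x-1) (by linarith)
    linarith [hξeq]
  have hfhigh : ∀ x, x₁ + 1 ≤ x → f x ≤ f x₁ + x * Real.exp (m₂ + k₂ * x ^ s) := by
    intro x hx
    have hlt : x₁ < x := by linarith
    have hcont : ContinuousOn f (Set.Icc x₁ x) := fun u hu =>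
      ((hdf u (le_trans hx₁0 hu.1)).continuousAt).continuousWithinAt
    obtain ⟨ξ, hξ, hξeq⟩ := exists_hasDerivAt_eq_slope f (deriv f) hlt hcont
      (fun y hy => (hdf y (le_trans hx₁0 (le_of_lt hy.1))).hasDerivAt)
    have hξ1 : x₁ ≤ ξ := le_of_lt hξ.1
    have h1 : deriv f ξ ≤ deriv f x := hf'mono hξ1 (le_of_lt hlt) (le_of_lt hξ.2)
    have h2 := hhigh x (le_of_lt hlt)
    have hd : 0 < deriv f ξ := hpos ξ (le_trans hx₁0 hξ1)
    have heq : deriv f ξ * (x - x₁) = f x - f x₁ := by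
      rw [eq_div_iff (by linarith : x - x₁ ≠ 0)] at hξeq
      exact hξeq
    have hx0 : 0 < x := lt_trans hx₁pos hlt
    nlinarith [mul_le_mul_of_nonneg_left h2 (le_of_lt hx0),
      mul_le_mul_of_nonneg_left h1 (le_of_lt hx0),
      mul_le_mul_of_nonneg_right (show x - x₁ ≤ x by linarith) (le_of_lt hd)]
  -- the constants
  set A : ℝ := k₁ / (2:ℝ) ^ s / 2 with hAdef
  set B : ℝ := k₂ + 2 with hBdef
  have h2s : (0:ℝ) < (2:ℝ) ^ s := Real.rpow_pos_of_pos two_pos s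
  have hA : 0 < A := by positivity
  have hB : 0 < B := by positivity
  refine ⟨A, B, hA, hB, ?_⟩
  have e1 : ∀ᶠ x : ℝ in atTop, x₁ + 1 ≤ x := eventually_ge_atTop _
  have e2 : ∀ᶠ x : ℝ in atTop, T + 1 ≤ x := eventually_ge_atTop _
  have e3 : ∀ᶠ x : ℝ in atTop, (2:ℝ) ≤ x := eventually_ge_atTop _
  have e4 : ∀ᶠ x : ℝ in atTop, -m₁ / A ≤ x ^ s :=
    (tendsto_rpow_atTop hs).eventually_ge_atTop _
  have e6 : ∀ᶠ x : ℝ in atTop, Real.log x ≤ x ^ s := by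
    have h := (isLittleO_log_rpow_atTop hs).def one_pos
    filter_upwards [h, eventually_ge_atTop (1:ℝ)] with x hx hx1
    have h1 : Real.log x ≤ |Real.log x| := le_abs_self _
    have h2 : |x ^ s| = x ^ s := abs_of_nonneg (Real.rpow_nonneg (by linarith) s)
    simpa [Real.norm_eq_abs, h2, one_mul] using le_trans h1 hx
  have e7 : ∀ᶠ x : ℝ in atTop, m₂ + Real.log 2 ≤ x ^ s :=
    (tendsto_rpow_atTop hs).eventually_ge_atTop _
  have e8 : ∀ᶠ x : ℝ in atTop, 2 * f x₁ ≤ Real.exp (B * x ^ s) := by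
    have ht : Tendsto (fun x : ℝ => Real.exp (B * x ^ s)) atTop atTop :=
      Real.tendsto_exp_atTop.comp ((tendsto_rpow_atTop hs).const_mul_atTop hB)
    exact ht.eventually_ge_atTop _
  filter_upwards [e1, e2, e3, e4, e6, e7, e8] with x h1 h2 h3 h4 h6 h7 h8
  have hx0 : (0:ℝ) < x := by linarith
  have hfx : Real.exp (m₁ + k₁ * (x - 1) ^ s) ≤ f x := hflow x h1 h2
  have hfxpos : 0 < f x := lt_of_lt_of_le (Real.exp_pos _) hfx
  constructor
  · constructor
    · -- lower bound on log f x
      have hl1 : m₁ + k₁ * (x - 1) ^ s ≤ Real.log (f x) :=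
        (Real.le_log_iff_exp_le hfxpos).mpr hfx
      have hl2 : (x/2) ^ s ≤ (x-1) ^ s :=
        Real.rpow_le_rpow (by linarith) (by linarith) (le_of_lt hs)
      have hl3 : (x/2) ^ s = x ^ s / (2:ℝ) ^ s :=
        Real.div_rpow (le_of_lt hx0) (by norm_num : (0:ℝ) ≤ 2) s
      have hl4 : k₁ * (x/2) ^ s = 2 * A * x ^ s := by
        rw [hl3, hAdef]; ring
      have hl5 : k₁ * (x/2)^s ≤ k₁ * (x-1)^s := mul_le_mul_of_nonneg_left hl2 (le_of_lt hk₁)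
      have hl6 : -m₁ ≤ x ^ s * A := (div_le_iff₀ hA).mp h4
      linarith
    · -- upper bound on log f x
      have hu1 := hfhigh x h1
      have hu2 : x * Real.exp (m₂ + k₂ * x ^ s) = Real.exp (Real.log x + (m₂ + k₂ * x ^ s)) := by
        conv_rhs => rw [Real.exp_add, Real.exp_log hx0]
      have hu3 : Real.log x + (m₂ + k₂ * x ^ s) ≤ B * x ^ s - Real.log 2 := by
        rw [hBdef]; linarith
      have hu4 : x * Real.exp (m₂ + k₂ * x ^ s) ≤ Real.exp (B * x ^ s) / 2 := by
        rw [hu2]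
        calc Real.exp (Real.log x + (m₂ + k₂ * x ^ s)) ≤ Real.exp (B * x ^ s - Real.log 2) :=
              Real.exp_le_exp.mpr hu3
          _ = Real.exp (B * x ^ s) / 2 := by
              rw [Real.exp_sub, Real.exp_log two_pos]
      have hu5 : f x₁ ≤ Real.exp (B * x ^ s) / 2 := by linarith
      have hu6 : f x ≤ Real.exp (B * x ^ s) := by linarith
      exact (Real.log_le_iff_le_exp hfxpos).mpr hu6
  · exact hfxpos

/-- If `f` satisfies the growth condition with exponent `lam ∈ (0,1)`, then
`f⁻¹(x) ≍ (ln x)^(1/(1-lam))` as `x → ∞`. -/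
theorem inv_asymp_log_rpow (f g : ℝ → ℝ) (lam x₀ : ℝ)
    (hlam : lam ∈ Set.Ioo (0 : ℝ) 1)
    (hf : GrowthCondition f lam x₀)
    (hg : IsInverseOn f g x₀) :
    ∃ C₁ C₂ : ℝ, 0 < C₁ ∧ C₁ ≤ C₂ ∧
      ∀ᶠ x in atTop,
        C₁ * Real.log x ^ (1 / (1 - lam)) ≤ g x ∧
        g x ≤ C₂ * Real.log x ^ (1 / (1 - lam)) := by
  obtain ⟨hdf, hdf2, hmono, htop, hpos, c₁, c₂, hc₁, hc12, hev⟩ := hf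
  obtain ⟨hg1, hg2⟩ := hg
  obtain ⟨hlam0, hlam1⟩ := hlam
  have hs : 0 < 1 - lam := by linarith
  have hsne : (1 - lam) ≠ 0 := ne_of_gt hs
  obtain ⟨A, B, hA, hB, hkey⟩ :=
    log_f_asymp f lam x₀ ⟨hlam0, hlam1⟩ hdf hdf2 htop hpos c₁ c₂ hc₁ hc12 hev
  obtain ⟨X₀, hX₀⟩ := eventually_atTop.mp hkey
  set X : ℝ := max X₀ (max x₀ 0) + 1 with hXdef
  have hXX₀ : X₀ ≤ X := le_trans (le_max_left _ _) (by linarith)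
  have hXx₀ : x₀ ≤ X := le_trans (le_trans (le_max_left _ _) (le_max_right X₀ _)) (by linarith)
  have hX1 : (1:ℝ) ≤ X := le_trans (by simp) (by linarith [le_max_right X₀ (max x₀ 0)] : max X₀ (max x₀ 0) + 1 ≥ max x₀ 0 + 1)
  have hginv : ∀ y, f X ≤ y → x₀ ≤ g y ∧ X ≤ g y ∧ f (g y) = y := by
    intro y hy
    obtain ⟨b₀, hb₀⟩ := eventually_atTop.mp (htop.eventually_ge_atTop y)
    have hXb : X ≤ max b₀ X := le_max_right _ _
    have hfb : y ≤ f (max b₀ X) := hb₀ _ (le_max_left _ _)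
    have hcont : ContinuousOn f (Set.Icc X (max b₀ X)) := fun u hu =>
      ((hdf u (le_trans hXx₀ hu.1)).continuousAt).continuousWithinAt
    obtain ⟨x, hx, hfx⟩ := intermediate_value_Icc hXb hcont ⟨hy, hfb⟩
    have hgyx : g y = x := by rw [← hfx]; exact hg1 x (le_trans hXx₀ hx.1)
    exact ⟨by rw [hgyx]; exact le_trans hXx₀ hx.1, by rw [hgyx]; exact hx.1,
      by rw [hgyx]; exact hfx⟩
  have hBp : 0 < B ^ ((1:ℝ)/(1-lam)) := Real.rpow_pos_of_pos hB _
  have hAp : 0 < A ^ ((1:ℝ)/(1-lam)) := Real.rpow_pos_of_pos hA _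
  set C : ℝ := (B ^ ((1:ℝ)/(1-lam)))⁻¹ with hCdef
  set D : ℝ := (A ^ ((1:ℝ)/(1-lam)))⁻¹ with hDdef
  refine ⟨min C D, max C D, lt_min (inv_pos.mpr hBp) (inv_pos.mpr hAp),
    le_trans (min_le_left _ _) (le_max_left _ _), ?_⟩
  filter_upwards [eventually_ge_atTop (f X)] with y hy
  obtain ⟨hgy0, hgyX, hfgy⟩ := hginv y hy
  obtain ⟨⟨hk1, hk2⟩, hfxpos⟩ := hX₀ (g y) (le_trans hXX₀ hgyX)
  rw [hfgy] at hk1 hk2 hfxpos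
  have hxpos : 0 < g y := lt_of_lt_of_le (lt_of_lt_of_le one_pos hX1) hgyX
  have hlogy0 : 0 ≤ Real.log y := by
    have h0 : 0 ≤ A * g y ^ (1 - lam) := by positivity
    linarith
  have hxs : (g y ^ (1-lam)) ^ ((1:ℝ)/(1-lam)) = g y := by
    rw [← Real.rpow_mul (le_of_lt hxpos), mul_one_div, div_self hsne, Real.rpow_one]
  constructor
  · have hl : Real.log y / B ≤ g y ^ (1-lam) := (div_le_iff₀ hB).mpr (by linarith)
    have hl2 : (Real.log y / B) ^ ((1:ℝ)/(1-lam)) ≤ g y := by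
      calc (Real.log y / B) ^ ((1:ℝ)/(1-lam))
          ≤ (g y ^ (1-lam)) ^ ((1:ℝ)/(1-lam)) :=
            Real.rpow_le_rpow (div_nonneg hlogy0 (le_of_lt hB)) hl (by positivity)
        _ = g y := hxs
    have hl3 : (Real.log y / B) ^ ((1:ℝ)/(1-lam)) = C * Real.log y ^ ((1:ℝ)/(1-lam)) := by
      rw [Real.div_rpow hlogy0 (le_of_lt hB), div_eq_inv_mul, hCdef]
    calc min C D * Real.log y ^ (1/(1-lam)) ≤ C * Real.log y ^ ((1:ℝ)/(1-lam)) :=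
          mul_le_mul_of_nonneg_right (min_le_left _ _) (Real.rpow_nonneg hlogy0 _)
      _ ≤ g y := by rw [← hl3]; exact hl2
  · have hl : g y ^ (1-lam) ≤ Real.log y / A := (le_div_iff₀ hA).mpr (by linarith)
    have hl2 : g y ≤ (Real.log y / A) ^ ((1:ℝ)/(1-lam)) := by
      calc g y = (g y ^ (1-lam)) ^ ((1:ℝ)/(1-lam)) := hxs.symm
        _ ≤ (Real.log y / A) ^ ((1:ℝ)/(1-lam)) :=
            Real.rpow_le_rpow (Real.rpow_nonneg (le_of_lt hxpos) _) hl (by positivity)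
    have hl3 : (Real.log y / A) ^ ((1:ℝ)/(1-lam)) = D * Real.log y ^ ((1:ℝ)/(1-lam)) := by
      rw [Real.div_rpow hlogy0 (le_of_lt hA), div_eq_inv_mul, hDdef]
    calc g y ≤ D * Real.log y ^ ((1:ℝ)/(1-lam)) := by rw [← hl3]; exact hl2
      _ ≤ max C D * Real.log y ^ (1/(1-lam)) :=
          mul_le_mul_of_nonneg_right (le_max_right _ _) (Real.rpow_nonneg hlogy0 _)
end

section
/- Let f satisfy the growth condition with exponent λ ∈ (0, 1). Then the derivative of the inverse function satisfies (f⁻¹)'(x) ≍ (ln x)^{λ/(1−λ)}/x as x → ∞, i.e., there exist constants 0 < C₁ ≤ C₂ such that C₁ (ln x)^{λ/(1−λ)}/x ≤ (f⁻¹)'(x) ≤ C₂ (ln x)^{λ/(1−λ)}/x for all sufficiently large x. -/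
open Filter Set Topology

lemma monoAux_s2 {φ φ' : ℝ → ℝ} {a : ℝ} (hφ : ∀ x ∈ Set.Ici a, HasDerivAt φ (φ' x) x)
    (h0 : ∀ x ∈ Set.Ioi a, 0 ≤ φ' x) : MonotoneOn φ (Set.Ici a) := by
  apply monotoneOn_of_deriv_nonneg (convex_Ici a)
  · exact fun x hx => (hφ x hx).continuousAt.continuousWithinAt
  · rw [interior_Ici]
    exact fun x hx => ((hφ x (show a ≤ x from le_of_lt hx)).differentiableAt).differentiableWithinAt
  · rw [interior_Ici]
    intro x hx
    rw [(hφ x (show a ≤ x from le_of_lt hx)).deriv]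
    exact h0 x hx

set_option maxHeartbeats 2000000 in
/-- If `f` satisfies the growth condition with exponent `lam ∈ (0,1)`, then
`(f⁻¹)'(x) ≍ (ln x)^(lam/(1-lam)) / x` as `x → ∞`. -/
theorem deriv_inv_asymp (f g : ℝ → ℝ) (lam x₀ : ℝ)
    (hlam : lam ∈ Set.Ioo (0 : ℝ) 1)
    (hf : GrowthCondition f lam x₀)
    (hg : IsInverseOn f g x₀) :
    ∃ C₁ C₂ : ℝ, 0 < C₁ ∧ C₁ ≤ C₂ ∧
      ∀ᶠ x in atTop,
        C₁ * (Real.log x ^ (lam / (1 - lam)) / x) ≤ deriv g x ∧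
        deriv g x ≤ C₂ * (Real.log x ^ (lam / (1 - lam)) / x) := by
  obtain ⟨hlam0, hlam1⟩ := hlam
  obtain ⟨hdiff, hdiff2, hmono, htop, hpos, c₁, c₂, hc₁, hc₁₂, hev⟩ := hf
  obtain ⟨hg1, hg2⟩ := hg
  have hc₂ : 0 < c₂ := lt_of_lt_of_le hc₁ hc₁₂
  have hμ : 0 < 1 - lam := by linarith
  ---- basic facts about g ----
  have hsurj : ∀ y, f x₀ ≤ y → ∃ x, x₀ ≤ x ∧ f x = y := by
    intro y hy
    obtain ⟨b, hb1, hb2⟩ := ((htop.eventually_ge_atTop y).and (eventually_ge_atTop x₀)).exists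
    have hcont : ContinuousOn f (Set.Icc x₀ b) := fun t ht =>
      (hdiff t ht.1).continuousAt.continuousWithinAt
    obtain ⟨x, hx1, hx2⟩ := intermediate_value_Icc hb2 hcont ⟨hy, hb1⟩
    exact ⟨x, hx1.1, hx2⟩
  have hgval : ∀ y, f x₀ ≤ y → x₀ ≤ g y ∧ f (g y) = y := by
    intro y hy
    obtain ⟨x, hx1, hx2⟩ := hsurj y hy
    have : g y = x := by rw [← hx2, hg1 x hx1]
    rw [this, hx2]
    exact ⟨hx1, rfl⟩
  have hgge : ∀ M, x₀ ≤ M → ∀ y, f M ≤ y → M ≤ g y := by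
    intro M hM y hy
    have hyF : f x₀ ≤ y := le_trans (hmono.monotoneOn (le_refl x₀) hM hM) hy
    obtain ⟨h1, h2⟩ := hgval y hyF
    by_contra h
    push_neg at h
    have := hmono h1 hM h
    rw [h2] at this
    exact absurd hy (not_le.mpr this)
  have hderivg : ∀ y, f x₀ < y → deriv g y = (deriv f (g y))⁻¹ := by
    intro y hy
    have hgy : x₀ ≤ g y := (hgval y hy.le).1
    have hgmono : StrictMonoOn g (Set.Ici (f x₀)) := by
      intro y₁ hy₁ y₂ hy₂ h12
      by_contra h
      push_neg at h
      have := hmono.monotoneOn (hgval y₂ hy₂).1 (hgval y₁ hy₁).1 h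
      rw [(hgval y₁ hy₁).2, (hgval y₂ hy₂).2] at this
      exact absurd h12 (not_lt.mpr this)
    have hgy0 : x₀ < g y := by
      have := hgmono (le_refl (f x₀)) hy.le hy
      rwa [hg1 x₀ (le_refl x₀)] at this
    have himg : Set.Ici x₀ ⊆ g '' Set.Ici (f x₀) := fun x hx =>
      ⟨f x, hmono.monotoneOn (le_refl x₀) hx hx, hg1 x hx⟩
    have hcont : ContinuousAt g y :=
      hgmono.continuousAt_of_image_mem_nhds (Ici_mem_nhds hy)
        (mem_of_superset (Ici_mem_nhds hgy0) himg)
    have hfg : ∀ᶠ z in nhds y, f (g z) = z :=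
      (Filter.Tendsto.eventually_const_le hy (Filter.tendsto_id)).mono (fun z hz => hg2 z hz)
    exact (HasDerivAt.of_local_left_inverse hcont ((hdiff (g y) hgy).hasDerivAt)
      (ne_of_gt (hpos (g y) hgy)) hfg).deriv
  ---- choice of X₁ ----
  obtain ⟨x₁', hx₁'⟩ := eventually_atTop.mp hev
  set X₁ : ℝ := max x₁' (max x₀ 1) with hX₁def
  have hX₁1 : (1:ℝ) ≤ X₁ := le_max_of_le_right (le_max_right _ _)
  have hX₁x₀ : x₀ ≤ X₁ := le_max_of_le_right (le_max_left _ _)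
  have hx0 : ∀ x, X₁ ≤ x → (0:ℝ) < x := fun x hx => lt_of_lt_of_le one_pos (le_trans hX₁1 hx)
  have hIci : ∀ x, X₁ ≤ x → x ∈ Set.Ici x₀ := fun x hx => le_trans hX₁x₀ hx
  have hD : ∀ x, X₁ ≤ x → 0 < deriv f x := fun x hx => hpos x (hIci x hx)
  have hbd : ∀ x, X₁ ≤ x → c₁ * x ^ (-lam) ≤ deriv (deriv f) x / deriv f x ∧
      deriv (deriv f) x / deriv f x ≤ c₂ * x ^ (-lam) :=
    fun x hx => hx₁' x (le_trans (le_max_left _ _) hx)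
  ---- derivative facts ----
  have hlog : ∀ x, X₁ ≤ x →
      HasDerivAt (fun t => Real.log (deriv f t)) (deriv (deriv f) x / deriv f x) x :=
    fun x hx => HasDerivAt.log ((hdiff2 x (hIci x hx)).hasDerivAt) (ne_of_gt (hD x hx))
  have hrp : ∀ (c : ℝ) (x : ℝ), X₁ ≤ x →
      HasDerivAt (fun t : ℝ => c/(1-lam) * t ^ (1-lam)) (c * x ^ (-lam)) x := by
    intro c x hx
    have h2 : HasDerivAt (fun t : ℝ => t ^ (1-lam)) ((1-lam) * x ^ (1-lam-1)) x :=
      Real.hasDerivAt_rpow_const (Or.inl (ne_of_gt (hx0 x hx)))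
    have h3 := h2.const_mul (c/(1-lam))
    refine h3.congr_deriv ?_
    rw [show (1-lam-1 : ℝ) = -lam by ring, ← mul_assoc, div_mul_cancel₀ c hμ.ne']
  have hrpow : ∀ (c : ℝ) (x : ℝ), X₁ ≤ x →
      HasDerivAt (fun t : ℝ => c * t ^ lam * deriv f t)
        (c * (lam * x ^ (lam-1)) * deriv f x + c * x ^ lam * deriv (deriv f) x) x := by
    intro c x hx
    have h2 : HasDerivAt (fun t : ℝ => c * t ^ lam) (c * (lam * x ^ (lam-1))) x :=
      (Real.hasDerivAt_rpow_const (Or.inl (ne_of_gt (hx0 x hx)))).const_mul c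
    exact h2.mul ((hdiff2 x (hIci x hx)).hasDerivAt)
  have hcancel : ∀ x, X₁ ≤ x → x ^ lam * x ^ (-lam) = 1 := by
    intro x hx
    rw [← Real.rpow_add (hx0 x hx)]
    simp
  ---- Step A : bounds on log (deriv f) ----
  have hlogD : ∀ x, X₁ ≤ x →
      (Real.log (deriv f X₁) - c₁/(1-lam)*X₁^(1-lam) + c₁/(1-lam)*x^(1-lam)
          ≤ Real.log (deriv f x)) ∧
      (Real.log (deriv f x) ≤ Real.log (deriv f X₁) + c₂/(1-lam)*x^(1-lam)) := by
    have hA : MonotoneOn (fun x => Real.log (deriv f x) - c₁/(1-lam) * x^(1-lam))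
        (Set.Ici X₁) := by
      apply monoAux_s2 (φ' := fun x => deriv (deriv f) x / deriv f x - c₁ * x^(-lam))
      · exact fun x hx => (hlog x hx).sub (hrp c₁ x hx)
      · intro x hx
        have := (hbd x (le_of_lt hx)).1
        linarith
    have hB : MonotoneOn (fun x => c₂/(1-lam) * x^(1-lam) - Real.log (deriv f x))
        (Set.Ici X₁) := by
      apply monoAux_s2 (φ' := fun x => c₂ * x^(-lam) - deriv (deriv f) x / deriv f x)
      · exact fun x hx => (hrp c₂ x hx).sub (hlog x hx)
      · intro x hx
        have := (hbd x (le_of_lt hx)).2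
        linarith
    intro x hx
    have h1' : Real.log (deriv f X₁) - c₁/(1-lam)*X₁^(1-lam)
        ≤ Real.log (deriv f x) - c₁/(1-lam)*x^(1-lam) := hA self_mem_Ici hx hx
    have h2' : c₂/(1-lam)*X₁^(1-lam) - Real.log (deriv f X₁)
        ≤ c₂/(1-lam)*x^(1-lam) - Real.log (deriv f x) := hB self_mem_Ici hx hx
    have h3 : 0 ≤ c₂/(1-lam)*X₁^(1-lam) :=
      mul_nonneg (le_of_lt (div_pos hc₂ hμ)) (Real.rpow_nonneg (hx0 X₁ le_rfl).le _)
    constructor <;> linarith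
  set A₀ : ℝ := Real.log (deriv f X₁) - c₁/(1-lam)*X₁^(1-lam) with hA₀def
  set B₀ : ℝ := Real.log (deriv f X₁) with hB₀def
  ---- deriv f tends to infinity ----
  have hDtop : Tendsto (deriv f) atTop atTop := by
    apply tendsto_atTop_mono' atTop
      (show ∀ᶠ x in atTop, Real.exp (A₀ + c₁/(1-lam)*x^(1-lam)) ≤ deriv f x from ?_) ?_
    · filter_upwards [eventually_ge_atTop X₁] with x hx
      have h1 := (hlogD x hx).1
      have := Real.exp_le_exp.mpr (show A₀ + c₁/(1-lam)*x^(1-lam) ≤ Real.log (deriv f x) by linarith)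
      rwa [Real.exp_log (hD x hx)] at this
    · apply Real.tendsto_exp_atTop.comp
      apply tendsto_atTop_add_const_left
      exact (tendsto_rpow_atTop hμ).const_mul_atTop (div_pos hc₁ hμ)
  ---- Step B : f ≍ x^lam * deriv f ----
  have hψ : MonotoneOn (fun x => (2/c₁) * x ^ lam * deriv f x - 2 * f x) (Set.Ici X₁) := by
    apply monoAux_s2 (φ' := fun x => ((2/c₁) * (lam * x ^ (lam-1)) * deriv f x
      + (2/c₁) * x ^ lam * deriv (deriv f) x) - 2 * deriv f x)
    · exact fun x hx => (hrpow (2/c₁) x hx).sub (((hdiff x (hIci x hx)).hasDerivAt).const_mul 2)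
    · intro x hx
      have hx' := le_of_lt (show X₁ < x from hx)
      have hD' := hD x hx'
      have h1 := (hbd x hx').1
      have hD2 : c₁ * x^(-lam) * deriv f x ≤ deriv (deriv f) x :=
        (le_div_iff₀ hD').mp h1
      have he : x ^ lam * x ^ (-lam) = 1 := hcancel x hx'
      have hel : 0 ≤ x ^ (lam - 1) := Real.rpow_nonneg (hx0 x hx').le _
      have hterm : 2 * deriv f x ≤ (2/c₁) * x ^ lam * deriv (deriv f) x := by
        have h2 : (2/c₁) * x ^ lam * (c₁ * x^(-lam) * deriv f x)
            ≤ (2/c₁) * x ^ lam * deriv (deriv f) x := by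
          apply mul_le_mul_of_nonneg_left hD2
          exact mul_nonneg (div_nonneg (by norm_num) hc₁.le) (Real.rpow_nonneg (hx0 x hx').le _)
        calc 2 * deriv f x
            = (c₁ / c₁) * (x ^ lam * x ^ (-lam)) * (2 * deriv f x) := by
              rw [div_self hc₁.ne', he]; ring
          _ = (2/c₁) * x ^ lam * (c₁ * x^(-lam) * deriv f x) := by ring
          _ ≤ _ := h2
      have hterm2 : 0 ≤ (2/c₁) * (lam * x ^ (lam-1)) * deriv f x := by positivity
      linarith
  have hθ : MonotoneOn (fun x => f x - (1/(2*(c₂+lam))) * x ^ lam * deriv f x)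
      (Set.Ici X₁) := by
    apply monoAux_s2 (φ' := fun x => deriv f x - ((1/(2*(c₂+lam))) * (lam * x ^ (lam-1)) * deriv f x
      + (1/(2*(c₂+lam))) * x ^ lam * deriv (deriv f) x))
    · exact fun x hx => ((hdiff x (hIci x hx)).hasDerivAt).sub (hrpow (1/(2*(c₂+lam))) x hx)
    · intro x hx
      have hx' := le_of_lt (show X₁ < x from hx)
      have hx1 : (1:ℝ) ≤ x := le_trans hX₁1 hx'
      have hD' := hD x hx'
      have hck : 0 < c₂ + lam := by linarith
      have h2 := (hbd x hx').2
      have hD2 : deriv (deriv f) x ≤ c₂ * x^(-lam) * deriv f x :=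
        (div_le_iff₀ hD').mp h2
      have he : x ^ lam * x ^ (-lam) = 1 := hcancel x hx'
      have hel : x ^ (lam - 1) ≤ 1 :=
        Real.rpow_le_one_of_one_le_of_nonpos hx1 (by linarith)
      have ht1 : (1/(2*(c₂+lam))) * (lam * x ^ (lam-1)) * deriv f x
          ≤ (1/(2*(c₂+lam))) * lam * deriv f x := by
        apply mul_le_mul_of_nonneg_right _ hD'.le
        have : lam * x ^ (lam-1) ≤ lam * 1 := by
          apply mul_le_mul_of_nonneg_left hel hlam0.le
        calc (1/(2*(c₂+lam))) * (lam * x ^ (lam-1)) ≤ (1/(2*(c₂+lam))) * (lam * 1) := by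
              apply mul_le_mul_of_nonneg_left this
              exact le_of_lt (one_div_pos.mpr (by linarith))
          _ = (1/(2*(c₂+lam))) * lam := by ring
      have ht2 : (1/(2*(c₂+lam))) * x ^ lam * deriv (deriv f) x
          ≤ (1/(2*(c₂+lam))) * c₂ * deriv f x := by
        calc (1/(2*(c₂+lam))) * x ^ lam * deriv (deriv f) x
            ≤ (1/(2*(c₂+lam))) * x ^ lam * (c₂ * x^(-lam) * deriv f x) := by
              apply mul_le_mul_of_nonneg_left hD2
              exact mul_nonneg (le_of_lt (one_div_pos.mpr (by linarith)))
                (Real.rpow_nonneg (hx0 x hx').le _)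
          _ = (1/(2*(c₂+lam))) * c₂ * (x ^ lam * x ^ (-lam)) * deriv f x := by ring
          _ = (1/(2*(c₂+lam))) * c₂ * deriv f x := by rw [he]; ring
      have hhalf : (1/(2*(c₂+lam))) * lam + (1/(2*(c₂+lam))) * c₂ = 1/2 := by
        field_simp
        ring
      nlinarith [hD'.le]
  -- eventual two-sided bound on f
  have hfub : ∀ᶠ x in atTop, f x ≤ (2/c₁) * x ^ lam * deriv f x := by
    have hCK := htop.eventually_ge_atTop (-(((2/c₁) * X₁ ^ lam * deriv f X₁ - 2 * f X₁)))
    filter_upwards [eventually_ge_atTop X₁, hCK] with x hx hfx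
    have h1 : (2/c₁) * X₁ ^ lam * deriv f X₁ - 2 * f X₁
        ≤ (2/c₁) * x ^ lam * deriv f x - 2 * f x := hψ self_mem_Ici hx hx
    linarith
  have hflb : ∀ᶠ x in atTop, (1/(4*(c₂+lam))) * x ^ lam * deriv f x ≤ f x := by
    have hck : 0 < c₂ + lam := by linarith
    set Cθ : ℝ := f X₁ - (1/(2*(c₂+lam))) * X₁ ^ lam * deriv f X₁ with hCθdef
    have hev2 : ∀ᶠ x in atTop, -Cθ ≤ (1/(4*(c₂+lam))) * deriv f x := by
      have : Tendsto (fun x => (1/(4*(c₂+lam))) * deriv f x) atTop atTop :=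
        hDtop.const_mul_atTop (one_div_pos.mpr (by linarith))
      exact this.eventually_ge_atTop _
    filter_upwards [eventually_ge_atTop X₁, hev2] with x hx hx2
    have h1 : Cθ ≤ f x - (1/(2*(c₂+lam))) * x ^ lam * deriv f x := hθ self_mem_Ici hx hx
    have hx1 : (1:ℝ) ≤ x := le_trans hX₁1 hx
    have hxl : (1:ℝ) ≤ x ^ lam := Real.one_le_rpow hx1 hlam0.le
    have hDx := hD x hx
    have hk4 : 0 < 1/(4*(c₂+lam)) := one_div_pos.mpr (by linarith)
    have h5 : deriv f x ≤ x ^ lam * deriv f x := le_mul_of_one_le_left hDx.le hxl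
    have h6 : (1/(4*(c₂+lam))) * deriv f x ≤ (1/(4*(c₂+lam))) * (x ^ lam * deriv f x) :=
      mul_le_mul_of_nonneg_left h5 hk4.le
    have hkk : (1/(2*(c₂+lam))) = 2 * (1/(4*(c₂+lam))) := by
      have hne : (c₂+lam) ≠ 0 := by linarith
      field_simp
      ring
    nlinarith [h1, hx2, h6]
  ---- Step C : bounds on log (f x) ----
  have ha₁ : 0 < c₁/(1-lam)/2 := by positivity
  have ha₂ : 0 < c₂/(1-lam)+1 := by positivity
  have hlogf : ∀ᶠ x in atTop,
      (c₁/(1-lam)/2) * x^(1-lam) ≤ Real.log (f x) ∧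
      Real.log (f x) ≤ (c₂/(1-lam)+1) * x^(1-lam) := by
    have hlittle : ∀ᶠ x in atTop, lam * Real.log x ≤ (1/2) * x^(1-lam) := by
      have h := (isLittleO_log_rpow_atTop hμ).bound
        (show (0:ℝ) < 1/(2*lam) from one_div_pos.mpr (by linarith))
      filter_upwards [h, eventually_ge_atTop 1] with x hx hx1
      rw [Real.norm_eq_abs, Real.norm_eq_abs, abs_of_nonneg (Real.log_nonneg hx1),
        abs_of_nonneg (Real.rpow_nonneg (by linarith) _)] at hx
      have := mul_le_mul_of_nonneg_left hx hlam0.le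
      calc lam * Real.log x ≤ lam * (1/(2*lam) * x^(1-lam)) := this
        _ = (lam/lam) * (x^(1-lam)/2) := by ring
        _ = (1/2) * x^(1-lam) := by rw [div_self hlam0.ne']; ring
    have hbig1 : ∀ᶠ x in atTop,
        2 * (Real.log (2/c₁) + B₀) ≤ x^(1-lam) :=
      (tendsto_rpow_atTop hμ).eventually_ge_atTop _
    have hbig2 : ∀ᶠ x in atTop,
        -(Real.log (1/(4*(c₂+lam))) + A₀) ≤ (c₁/(1-lam)/2) * x^(1-lam) :=
      ((tendsto_rpow_atTop hμ).const_mul_atTop ha₁).eventually_ge_atTop _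
    filter_upwards [eventually_ge_atTop X₁, eventually_ge_atTop 1, hfub, hflb,
      hlittle, hbig1, hbig2] with x hX hx1 hub hlb hlit hb1 hb2
    have hxpos : (0:ℝ) < x := hx0 x hX
    have hDx := hD x hX
    have hck : (0:ℝ) < c₂ + lam := by linarith
    have hk4 : (0:ℝ) < 1/(4*(c₂+lam)) := one_div_pos.mpr (by linarith)
    have hxlpos : (0:ℝ) < x ^ lam := Real.rpow_pos_of_pos hxpos _
    have hfpos : 0 < f x := lt_of_lt_of_le (by positivity) hlb
    have hKpos : (0:ℝ) < 2/c₁ := by positivity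
    have hlogub : Real.log (f x) ≤ Real.log (2/c₁) + lam * Real.log x
        + Real.log (deriv f x) := by
      have := Real.log_le_log hfpos hub
      rwa [Real.log_mul (by positivity) hDx.ne', Real.log_mul hKpos.ne' hxlpos.ne',
        Real.log_rpow hxpos] at this
    have hloglb : Real.log (1/(4*(c₂+lam))) + lam * Real.log x
        + Real.log (deriv f x) ≤ Real.log (f x) := by
      have := Real.log_le_log (by positivity) hlb
      rwa [Real.log_mul (by positivity) hDx.ne', Real.log_mul hk4.ne' hxlpos.ne',
        Real.log_rpow hxpos] at this
    have hlD := hlogD x hX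
    have hlamlog : 0 ≤ lam * Real.log x :=
      mul_nonneg hlam0.le (Real.log_nonneg hx1)
    constructor
    · calc (c₁/(1-lam)/2) * x^(1-lam)
          = c₁/(1-lam) * x^(1-lam) - (c₁/(1-lam)/2) * x^(1-lam) := by ring
        _ ≤ Real.log (f x) := by linarith [hlD.1]
    · calc Real.log (f x) ≤ Real.log (2/c₁) + lam * Real.log x + B₀
            + c₂/(1-lam) * x^(1-lam) := by linarith [hlD.2]
        _ ≤ (c₂/(1-lam)+1) * x^(1-lam) := by linarith
  ---- Step D : assemble pointwise bounds beyond some X₃ ----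
  obtain ⟨X₃', hX₃'⟩ := eventually_atTop.mp ((hfub.and hflb).and hlogf)
  set X₃ : ℝ := max X₃' X₁ with hX₃def
  have hX₃X₁ : X₁ ≤ X₃ := le_max_right _ _
  have hX₃x₀ : x₀ ≤ X₃ := le_trans hX₁x₀ hX₃X₁
  ---- Step E : conclusion ----
  set mu : ℝ := lam / (1 - lam) with hmudef
  have hmu0 : 0 ≤ mu := le_of_lt (div_pos hlam0 hμ)
  set a₁ : ℝ := c₁/(1-lam)/2
  set a₂ : ℝ := c₂/(1-lam)+1
  set k2 : ℝ := 1/(4*(c₂+lam)) with hk2def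
  have hk2 : 0 < k2 := one_div_pos.mpr (by linarith)
  set CL : ℝ := k2 / a₂ ^ mu with hCLdef
  set CR : ℝ := (2/c₁) / a₁ ^ mu with hCRdef
  have hCL : 0 < CL := div_pos hk2 (Real.rpow_pos_of_pos ha₂ _)
  refine ⟨CL, max CL CR, hCL, le_max_left _ _, ?_⟩
  rw [eventually_atTop]
  refine ⟨max (f X₃ + 1) (Real.exp 1), fun y hy => ?_⟩
  have hyexp : Real.exp 1 ≤ y := le_trans (le_max_right _ _) hy
  have hy0 : (0:ℝ) < y := lt_of_lt_of_le (Real.exp_pos 1) hyexp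
  have hlogy : 1 ≤ Real.log y := (Real.le_log_iff_exp_le hy0).mpr hyexp
  have hlogy0 : 0 < Real.log y := lt_of_lt_of_le one_pos hlogy
  have hyfX₃ : f X₃ ≤ y := by
    have := le_trans (le_max_left (f X₃ + 1) (Real.exp 1)) hy
    linarith
  have hyfx₀ : f x₀ < y := by
    have h2 : f x₀ ≤ f X₃ := hmono.monotoneOn self_mem_Ici hX₃x₀ hX₃x₀
    have := le_trans (le_max_left (f X₃ + 1) (Real.exp 1)) hy
    linarith
  have hxX₃ : X₃ ≤ g y := hgge X₃ hX₃x₀ y hyfX₃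
  set x := g y with hxdef
  have hX₁x : X₁ ≤ x := le_trans hX₃X₁ hxX₃
  have hfx : f x = y := (hgval y hyfx₀.le).2
  have hdg : deriv g y = (deriv f x)⁻¹ := hderivg y hyfx₀
  have hxpos : (0:ℝ) < x := hx0 x hX₁x
  have hDx : 0 < deriv f x := hD x hX₁x
  obtain ⟨⟨hub, hlb⟩, hlf1, hlf2⟩ := hX₃' x (le_trans (le_max_left _ _) hxX₃)
  rw [hfx] at hub hlb hlf1 hlf2
  -- bounds on x ^ lam in terms of log y
  have hpowmul : (x^(1-lam))^mu = x^lam := by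
    rw [← Real.rpow_mul hxpos.le]
    congr 1
    rw [hmudef]
    field_simp
  have hxlam_ub : x^lam ≤ (Real.log y / a₁)^mu := by
    rw [← hpowmul]
    apply Real.rpow_le_rpow (Real.rpow_nonneg hxpos.le _) _ hmu0
    rw [le_div_iff₀ ha₁]
    linarith
  have hxlam_lb : (Real.log y / a₂)^mu ≤ x^lam := by
    rw [← hpowmul]
    apply Real.rpow_le_rpow (div_nonneg hlogy0.le ha₂.le) _ hmu0
    rw [div_le_iff₀ ha₂]
    linarith
  have hdiv1 : (Real.log y / a₁)^mu = (Real.log y)^mu / a₁^mu :=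
    Real.div_rpow hlogy0.le ha₁.le _
  have hdiv2 : (Real.log y / a₂)^mu = (Real.log y)^mu / a₂^mu :=
    Real.div_rpow hlogy0.le ha₂.le _
  -- bounds on (deriv f x)⁻¹
  have hDinv_ub : (deriv f x)⁻¹ ≤ (2/c₁) * x^lam / y := by
    rw [show (deriv f x)⁻¹ = 1 / deriv f x from (one_div _).symm,
      div_le_div_iff₀ hDx hy0]
    nlinarith [hub]
  have hDinv_lb : k2 * x^lam / y ≤ (deriv f x)⁻¹ := by
    rw [show (deriv f x)⁻¹ = 1 / deriv f x from (one_div _).symm,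
      div_le_div_iff₀ hy0 hDx]
    nlinarith [hlb]
  rw [hdg]
  constructor
  · calc CL * (Real.log y ^ mu / y)
        = k2 * ((Real.log y)^mu / a₂^mu) / y := by
          rw [hCLdef]; ring
      _ = k2 * ((Real.log y / a₂)^mu) / y := by rw [hdiv2]
      _ ≤ k2 * x^lam / y := by
          exact (div_le_div_iff_of_pos_right hy0).mpr (mul_le_mul_of_nonneg_left hxlam_lb hk2.le)
      _ ≤ (deriv f x)⁻¹ := hDinv_lb
  · calc (deriv f x)⁻¹ ≤ (2/c₁) * x^lam / y := hDinv_ub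
      _ ≤ (2/c₁) * ((Real.log y / a₁)^mu) / y := by
          exact (div_le_div_iff_of_pos_right hy0).mpr
            (mul_le_mul_of_nonneg_left hxlam_ub (by positivity))
      _ = CR * (Real.log y ^ mu / y) := by
          rw [hCRdef, hdiv1]; ring
      _ ≤ max CL CR * (Real.log y ^ mu / y) := by
          apply mul_le_mul_of_nonneg_right (le_max_right _ _)
          exact div_nonneg (Real.rpow_nonneg hlogy0.le _) hy0.le
end

section
/- Let f satisfy the growth condition with exponent λ ∈ (0, 1). Then, as ε → 0⁺, the quantity 2·ln((f⁻¹)'(1/ε)/ε) equals (2λ/(1−λ))·ln(ln(1/ε)) + O(1); consequently, √(2·ln((f⁻¹)'(1/ε)/ε)) ~ √((2λ/(1−λ))·ln(ln(1/ε))) as ε → 0⁺ (i.e., the ratio of the two sides tends to 1). -/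
open Filter Set Topology

private lemma mono_aux {u u' : ℝ → ℝ} {X : ℝ}
    (hu : ∀ x ∈ Set.Ici X, HasDerivAt u (u' x) x)
    (h0 : ∀ x ∈ Set.Ici X, 0 ≤ u' x) : MonotoneOn u (Set.Ici X) := by
  apply monotoneOn_of_deriv_nonneg (convex_Ici X)
  · exact fun x hx => (hu x hx).differentiableAt.continuousAt.continuousWithinAt
  · intro x hx
    rw [interior_Ici] at hx
    exact ((hu x (Set.mem_Ici.2 (le_of_lt (Set.mem_Ioi.1 hx)))).differentiableAt).differentiableWithinAt
  · intro x hx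
    rw [interior_Ici] at hx
    rw [(hu x (Set.mem_Ici.2 (le_of_lt (Set.mem_Ioi.1 hx)))).deriv]
    exact h0 x (Set.mem_Ici.2 (le_of_lt (Set.mem_Ioi.1 hx)))

set_option maxHeartbeats 2000000

/-- If `f` satisfies the growth condition with exponent `lam ∈ (0,1)`, then as `ε → 0⁺`,
`2·ln((f⁻¹)'(1/ε)/ε) = (2lam/(1-lam))·ln ln(1/ε) + O(1)`, and consequently
`√(2·ln((f⁻¹)'(1/ε)/ε)) ~ √((2lam/(1-lam))·ln ln(1/ε))`. -/
theorem log_deriv_inv_asymp (f g : ℝ → ℝ) (lam x₀ : ℝ)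
    (hlam : lam ∈ Set.Ioo (0 : ℝ) 1)
    (hf : GrowthCondition f lam x₀)
    (hg : IsInverseOn f g x₀) :
    (∃ M : ℝ, ∀ᶠ ε in 𝓝[>] (0 : ℝ),
        |2 * Real.log (deriv g (1 / ε) / ε) -
          (2 * lam / (1 - lam)) * Real.log (Real.log (1 / ε))| ≤ M) ∧
    Tendsto (fun ε : ℝ =>
        Real.sqrt (2 * Real.log (deriv g (1 / ε) / ε)) /
        Real.sqrt ((2 * lam / (1 - lam)) * Real.log (Real.log (1 / ε))))
      (𝓝[>] (0 : ℝ)) (𝓝 1) := by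
  obtain ⟨hlam0, hlam1⟩ := hlam
  obtain ⟨hd1, hd2, hsm, htop, hpos, c₁, c₂, hc1, hc12, hcc⟩ := hf
  obtain ⟨hg1, hg2⟩ := hg
  have h1l : (0:ℝ) < 1 - lam := by linarith
  have hc2 : (0:ℝ) < c₂ := lt_of_lt_of_le hc1 hc12
  obtain ⟨r, hr⟩ : ∃ r : ℝ, r = 2 * lam / (1 - lam) := ⟨_, rfl⟩
  rw [← hr]
  have hrpos : 0 < r := by rw [hr]; exact div_pos (by linarith) h1l
  obtain ⟨N, hN⟩ := eventually_atTop.1 hcc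
  obtain ⟨X, hXdef⟩ : ∃ X : ℝ, X = max (max x₀ 1) N := ⟨_, rfl⟩
  have hXx₀ : x₀ ≤ X := by rw [hXdef]; exact le_trans (le_max_left _ _) (le_max_left _ _)
  have hX1 : (1:ℝ) ≤ X := by rw [hXdef]; exact le_trans (le_max_right x₀ 1) (le_max_left _ _)
  have hXN : N ≤ X := by rw [hXdef]; exact le_max_right _ _
  have hmem : ∀ {x : ℝ}, X ≤ x → x ∈ Set.Ici x₀ := fun hx => Set.mem_Ici.2 (hXx₀.trans hx)
  have hx0' : ∀ {x : ℝ}, X ≤ x → 0 < x := fun hx => lt_of_lt_of_le one_pos (hX1.trans hx)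
  -- derivative of log ∘ deriv f
  have hL : ∀ x, X ≤ x → HasDerivAt (fun t => Real.log (deriv f t))
      (deriv (deriv f) x / deriv f x) x := fun x hx =>
    ((hd2 x (hmem hx)).hasDerivAt).log (ne_of_gt (hpos x (hmem hx)))
  have hR : ∀ (p : ℝ) (x : ℝ), X ≤ x → HasDerivAt (fun t : ℝ => t ^ p) (p * x ^ (p - 1)) x :=
    fun p x hx => Real.hasDerivAt_rpow_const (Or.inl (hx0' hx).ne')
  -- L1 : bounds for log (deriv f)
  have hlow : ∀ x, X ≤ x → c₁/(1-lam) * x^(1-lam) +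
      (Real.log (deriv f X) - c₁/(1-lam) * X^(1-lam)) ≤ Real.log (deriv f x) := by
    have hm : MonotoneOn (fun t => Real.log (deriv f t) - c₁/(1-lam) * t^(1-lam)) (Set.Ici X) := by
      apply mono_aux (u' := fun x => deriv (deriv f) x / deriv f x - c₁ * x ^ (-lam))
      · intro x hx
        have hx' := Set.mem_Ici.1 hx
        have h2 := (hR (1-lam) x hx').const_mul (c₁/(1-lam))
        have he : c₁/(1-lam) * ((1-lam) * x ^ ((1-lam) - 1)) = c₁ * x ^ (-lam) := by
          rw [show (1:ℝ)-lam-1 = -lam by ring]; field_simp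
        exact (hL x hx').sub (he ▸ h2)
      · intro x hx
        have hx' := Set.mem_Ici.1 hx
        have h1 := (hN x (hXN.trans hx')).1
        linarith
    intro x hx
    have h := hm Set.self_mem_Ici (Set.mem_Ici.2 hx) hx
    dsimp only at h
    linarith
  have hupp : ∀ x, X ≤ x → Real.log (deriv f x) ≤ c₂/(1-lam) * x^(1-lam) +
      (Real.log (deriv f X) - c₂/(1-lam) * X^(1-lam)) := by
    have hm : MonotoneOn (fun t => c₂/(1-lam) * t^(1-lam) - Real.log (deriv f t)) (Set.Ici X) := by
      apply mono_aux (u' := fun x => c₂ * x ^ (-lam) - deriv (deriv f) x / deriv f x)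
      · intro x hx
        have hx' := Set.mem_Ici.1 hx
        have h2 := (hR (1-lam) x hx').const_mul (c₂/(1-lam))
        have he : c₂/(1-lam) * ((1-lam) * x ^ ((1-lam) - 1)) = c₂ * x ^ (-lam) := by
          rw [show (1:ℝ)-lam-1 = -lam by ring]; field_simp
        exact (he ▸ h2).sub (hL x hx')
      · intro x hx
        have hx' := Set.mem_Ici.1 hx
        have h1 := (hN x (hXN.trans hx')).2
        linarith
    intro x hx
    have h := hm Set.self_mem_Ici (Set.mem_Ici.2 hx) hx
    dsimp only at h
    linarith
  -- L2 : bounds for f in terms of x^lam * deriv f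
  obtain ⟨A, hAdef⟩ : ∃ A : ℝ, A = (2 * max c₂ lam)⁻¹ := ⟨_, rfl⟩
  have hmaxpos : 0 < max c₂ lam := lt_of_lt_of_le hc2 (le_max_left _ _)
  have hA : 0 < A := by rw [hAdef]; positivity
  have hAc₂ : A * c₂ ≤ 1/2 := by
    rw [hAdef, inv_mul_le_iff₀ (by positivity)]
    have := le_max_left c₂ lam
    linarith
  have hAlam : A * lam ≤ 1/2 := by
    rw [hAdef, inv_mul_le_iff₀ (by positivity)]
    have := le_max_right c₂ lam
    linarith
  have hflow : ∀ x, X ≤ x → A * (x^lam * deriv f x) +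
      (f X - A * (X^lam * deriv f X)) ≤ f x := by
    have hm : MonotoneOn (fun t => f t - A * (t^lam * deriv f t)) (Set.Ici X) := by
      apply mono_aux (u' := fun x => deriv f x -
        A * (lam * x^(lam-1) * deriv f x + x^lam * deriv (deriv f) x))
      · intro x hx
        have hx' := Set.mem_Ici.1 hx
        exact (hd1 x (hmem hx')).hasDerivAt.sub
          (((hR lam x hx').mul (hd2 x (hmem hx')).hasDerivAt).const_mul A)
      · intro x hx
        have hx' := Set.mem_Ici.1 hx
        have hub := (hN x (hXN.trans hx')).2
        have hp := hpos x (hmem hx')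
        have hx0 := hx0' hx'
        have hf'' : deriv (deriv f) x ≤ c₂ * x^(-lam) * deriv f x := by
          rw [div_le_iff₀ hp] at hub; linarith
        have hxinv : x^lam * x^(-lam) = 1 := by
          rw [← Real.rpow_add hx0]; simp
        have hxl : (0:ℝ) ≤ x ^ lam := (Real.rpow_pos_of_pos hx0 lam).le
        have h1 : x^lam * deriv (deriv f) x ≤ c₂ * deriv f x := by
          calc x^lam * deriv (deriv f) x ≤ x^lam * (c₂ * x^(-lam) * deriv f x) :=
                mul_le_mul_of_nonneg_left hf'' hxl
            _ = c₂ * (x^lam * x^(-lam)) * deriv f x := by ring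
            _ = c₂ * deriv f x := by rw [hxinv]; ring
        have h2 : x^(lam-1) ≤ 1 :=
          Real.rpow_le_one_of_one_le_of_nonpos (hX1.trans hx') (by linarith)
        have h3 : (0:ℝ) ≤ x^(lam-1) := (Real.rpow_pos_of_pos hx0 _).le
        have t1 : A * (x^lam * deriv (deriv f) x) ≤ A * (c₂ * deriv f x) :=
          mul_le_mul_of_nonneg_left h1 hA.le
        have t2 : A * c₂ * deriv f x ≤ 1/2 * deriv f x :=
          mul_le_mul_of_nonneg_right hAc₂ hp.le
        have t3 : (A * lam) * x^(lam-1) * deriv f x ≤ (A * lam) * 1 * deriv f x := by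
          apply mul_le_mul_of_nonneg_right _ hp.le
          exact mul_le_mul_of_nonneg_left h2 (by positivity)
        have t4 : A * lam * deriv f x ≤ 1/2 * deriv f x :=
          mul_le_mul_of_nonneg_right hAlam hp.le
        nlinarith [t1, t2, t3, t4]
    intro x hx
    have h := hm Set.self_mem_Ici (Set.mem_Ici.2 hx) hx
    dsimp only at h
    linarith
  have hfupp : ∀ x, X ≤ x → f x ≤ c₁⁻¹ * (x^lam * deriv f x) +
      (f X - c₁⁻¹ * (X^lam * deriv f X)) := by
    have hm : MonotoneOn (fun t => c₁⁻¹ * (t^lam * deriv f t) - f t) (Set.Ici X) := by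
      apply mono_aux (u' := fun x =>
        c₁⁻¹ * (lam * x^(lam-1) * deriv f x + x^lam * deriv (deriv f) x) - deriv f x)
      · intro x hx
        have hx' := Set.mem_Ici.1 hx
        exact (((hR lam x hx').mul (hd2 x (hmem hx')).hasDerivAt).const_mul c₁⁻¹).sub
          (hd1 x (hmem hx')).hasDerivAt
      · intro x hx
        have hx' := Set.mem_Ici.1 hx
        have hlb := (hN x (hXN.trans hx')).1
        have hp := hpos x (hmem hx')
        have hx0 := hx0' hx'
        have hf'' : c₁ * x^(-lam) * deriv f x ≤ deriv (deriv f) x := by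
          rw [le_div_iff₀ hp] at hlb; linarith
        have hxinv : x^lam * x^(-lam) = 1 := by
          rw [← Real.rpow_add hx0]; simp
        have hxl : (0:ℝ) ≤ x ^ lam := (Real.rpow_pos_of_pos hx0 lam).le
        have h1 : c₁ * deriv f x ≤ x^lam * deriv (deriv f) x := by
          calc c₁ * deriv f x = c₁ * (x^lam * x^(-lam)) * deriv f x := by rw [hxinv]; ring
            _ = x^lam * (c₁ * x^(-lam) * deriv f x) := by ring
            _ ≤ x^lam * deriv (deriv f) x := mul_le_mul_of_nonneg_left hf'' hxl
        have h3 : (0:ℝ) ≤ x^(lam-1) := (Real.rpow_pos_of_pos hx0 _).le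
        have t1 : c₁⁻¹ * (c₁ * deriv f x) ≤ c₁⁻¹ * (x^lam * deriv (deriv f) x) :=
          mul_le_mul_of_nonneg_left h1 (by positivity)
        have t2 : c₁⁻¹ * (c₁ * deriv f x) = deriv f x := by
          field_simp
        have t3 : 0 ≤ c₁⁻¹ * (lam * x^(lam-1) * deriv f x) := by positivity
        nlinarith [t1, t3]
    intro x hx
    have h := hm Set.self_mem_Ici (Set.mem_Ici.2 hx) hx
    dsimp only at h
    linarith
  -- tendsto facts
  have hrpowtop : Tendsto (fun x : ℝ => x^(1-lam)) atTop atTop := tendsto_rpow_atTop h1l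
  have hφ : Tendsto (fun x : ℝ => c₁/(1-lam) * x^(1-lam) +
      (Real.log (deriv f X) - c₁/(1-lam) * X^(1-lam))) atTop atTop :=
    tendsto_atTop_add_const_right _ _ (hrpowtop.const_mul_atTop (div_pos hc1 h1l))
  have hlogf'top : Tendsto (fun x => Real.log (deriv f x)) atTop atTop :=
    tendsto_atTop_mono' atTop ((eventually_ge_atTop X).mono fun x hx => hlow x hx) hφ
  have hf'top : Tendsto (deriv f) atTop atTop := by
    apply (Real.tendsto_exp_atTop.comp hlogf'top).congr'
    filter_upwards [eventually_ge_atTop X] with x hx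
    exact Real.exp_log (hpos x (hmem hx))
  have hWtop : Tendsto (fun x => x^lam * deriv f x) atTop atTop := by
    apply tendsto_atTop_mono' atTop _ hf'top
    filter_upwards [eventually_ge_atTop X] with x hx
    have h1 : (1:ℝ) ≤ x ^ lam := Real.one_le_rpow (hX1.trans hx) hlam0.le
    nlinarith [(hpos x (hmem hx)).le, hpos x (hmem hx)]
  -- small-term bound
  have hsmalls : ∀ c k : ℝ, 0 < c → ∀ᶠ x in atTop, |lam * Real.log x + k| ≤ c * x^(1-lam) := by
    intro c k hc
    have h1 := (isLittleO_log_rpow_atTop h1l).const_mul_left lam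
    have h2 := h1.def (show (0:ℝ) < c/2 by positivity)
    filter_upwards [h2, hrpowtop.eventually_ge_atTop (|k| / (c/2)),
      eventually_ge_atTop (0:ℝ)] with x hx1 hx2 hx3
    have hxp : (0:ℝ) ≤ x^(1-lam) := Real.rpow_nonneg hx3 _
    rw [Real.norm_eq_abs, Real.norm_eq_abs, abs_of_nonneg hxp] at hx1
    have hk : |k| ≤ c/2 * x^(1-lam) := by
      rw [div_le_iff₀ (by positivity)] at hx2; linarith
    calc |lam * Real.log x + k| ≤ |lam * Real.log x| + |k| := abs_add_le _ _
      _ ≤ c/2 * x^(1-lam) + c/2 * x^(1-lam) := add_le_add hx1 hk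
      _ = c * x^(1-lam) := by ring
  -- constants
  obtain ⟨α₁, hα₁def⟩ : ∃ α₁ : ℝ, α₁ = c₁/(2*(1-lam)) := ⟨_, rfl⟩
  obtain ⟨α₂, hα₂def⟩ : ∃ α₂ : ℝ, α₂ = c₂/(1-lam) + 1 := ⟨_, rfl⟩
  obtain ⟨A2, hA2def⟩ : ∃ A2 : ℝ, A2 = A/2 := ⟨_, rfl⟩
  obtain ⟨B2, hB2def⟩ : ∃ B2 : ℝ, B2 = 2 * c₁⁻¹ := ⟨_, rfl⟩
  obtain ⟨β₁, hβ₁def⟩ : ∃ β₁ : ℝ, β₁ = α₁/2 := ⟨_, rfl⟩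
  obtain ⟨β₂, hβ₂def⟩ : ∃ β₂ : ℝ, β₂ = α₂ + 1 := ⟨_, rfl⟩
  have hα₁ : 0 < α₁ := by rw [hα₁def]; exact div_pos hc1 (by linarith)
  have hα₂ : 0 < α₂ := by rw [hα₂def]; have := div_pos hc2 h1l; linarith
  have hA2 : 0 < A2 := by rw [hA2def]; linarith
  have hB2 : 0 < B2 := by rw [hB2def]; have := inv_pos.2 hc1; linarith
  have hβ₁ : 0 < β₁ := by rw [hβ₁def]; linarith
  have hβ₂ : 0 < β₂ := by rw [hβ₂def]; linarith
  obtain ⟨k₁, hk₁def⟩ : ∃ k₁ : ℝ, k₁ = Real.log A2 := ⟨_, rfl⟩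
  obtain ⟨k₂, hk₂def⟩ : ∃ k₂ : ℝ, k₂ = Real.log B2 := ⟨_, rfl⟩
  obtain ⟨q₁, hq₁def⟩ : ∃ q₁ : ℝ, q₁ = Real.log β₁ := ⟨_, rfl⟩
  obtain ⟨q₂, hq₂def⟩ : ∃ q₂ : ℝ, q₂ = Real.log β₂ := ⟨_, rfl⟩
  obtain ⟨M0, hM0def⟩ : ∃ M0 : ℝ, M0 = |2*k₂ - r*q₁| + |2*k₁ - r*q₂| := ⟨_, rfl⟩
  -- the main estimate along atTop
  have hQ : ∀ᶠ x in atTop, |2*(Real.log (f x) - Real.log (deriv f x)) -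
      r * Real.log (Real.log (f x))| ≤ M0 := by
    obtain ⟨K₁, hK₁def⟩ : ∃ K₁ : ℝ, K₁ = Real.log (deriv f X) - c₁/(1-lam) * X^(1-lam) := ⟨_, rfl⟩
    obtain ⟨K₂, hK₂def⟩ : ∃ K₂ : ℝ, K₂ = Real.log (deriv f X) - c₂/(1-lam) * X^(1-lam) := ⟨_, rfl⟩
    obtain ⟨Cu, hCudef⟩ : ∃ Cu : ℝ, Cu = f X - A * (X^lam * deriv f X) := ⟨_, rfl⟩
    obtain ⟨Cv, hCvdef⟩ : ∃ Cv : ℝ, Cv = f X - c₁⁻¹ * (X^lam * deriv f X) := ⟨_, rfl⟩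
    filter_upwards [eventually_ge_atTop X,
      hrpowtop.eventually_ge_atTop (|K₁| / α₁),
      hrpowtop.eventually_ge_atTop (|K₂|),
      hWtop.eventually_ge_atTop (|Cu| / A2),
      hWtop.eventually_ge_atTop (|Cv| / c₁⁻¹),
      hsmalls (α₁/2) k₁ (by positivity),
      hsmalls 1 k₂ one_pos,
      hrpowtop.eventually_ge_atTop (1/β₁)] with x hx hK1 hK2 hCu hCv hs1 hs2 hβ
    have hx0 : 0 < x := hx0' hx
    have hp : 0 < deriv f x := hpos x (hmem hx)
    have hW : 0 < x^lam * deriv f x := mul_pos (Real.rpow_pos_of_pos hx0 _) hp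
    -- log deriv f bounds
    have e1 : α₁ * x^(1-lam) ≤ Real.log (deriv f x) := by
      have h1 := hlow x hx
      rw [← hK₁def] at h1
      rw [div_le_iff₀ hα₁] at hK1
      have h3 : c₁/(1-lam) * x^(1-lam) = 2*(α₁ * x^(1-lam)) := by
        rw [hα₁def]; field_simp
      have h4 := neg_abs_le K₁
      linarith
    have e2 : Real.log (deriv f x) ≤ α₂ * x^(1-lam) := by
      have h1 := hupp x hx
      rw [← hK₂def] at h1
      have h2 := le_abs_self K₂
      rw [hα₂def]
      linarith
    -- f bounds
    have e3 : A2 * (x^lam * deriv f x) ≤ f x := by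
      have h1 := hflow x hx
      rw [← hCudef] at h1
      rw [div_le_iff₀ hA2] at hCu
      have h4 := neg_abs_le Cu
      have h3 : A * (x^lam * deriv f x) = 2*(A2 * (x^lam * deriv f x)) := by
        rw [hA2def]; ring
      linarith
    have e4 : f x ≤ B2 * (x^lam * deriv f x) := by
      have h1 := hfupp x hx
      rw [← hCvdef] at h1
      rw [div_le_iff₀ (inv_pos.2 hc1)] at hCv
      have h4 := le_abs_self Cv
      have h3 : B2 * (x^lam * deriv f x) = 2*(c₁⁻¹ * (x^lam * deriv f x)) := by
        rw [hB2def]; ring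
      linarith
    have hfpos : 0 < f x := lt_of_lt_of_le (mul_pos hA2 hW) e3
    -- log f bounds
    have e5 : k₁ + (lam * Real.log x + Real.log (deriv f x)) ≤ Real.log (f x) := by
      have h1 := (Real.log_le_log_iff (mul_pos hA2 hW) hfpos).2 e3
      rw [Real.log_mul hA2.ne' hW.ne',
        Real.log_mul (Real.rpow_pos_of_pos hx0 lam).ne' hp.ne',
        Real.log_rpow hx0] at h1
      rw [hk₁def]; linarith
    have e6 : Real.log (f x) ≤ k₂ + (lam * Real.log x + Real.log (deriv f x)) := by
      have h1 := (Real.log_le_log_iff hfpos (mul_pos hB2 hW)).2 e4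
      rw [Real.log_mul hB2.ne' hW.ne',
        Real.log_mul (Real.rpow_pos_of_pos hx0 lam).ne' hp.ne',
        Real.log_rpow hx0] at h1
      rw [hk₂def]; linarith
    have e7 : β₁ * x^(1-lam) ≤ Real.log (f x) := by
      have habs := (abs_le.1 hs1).1
      rw [hβ₁def]; linarith
    have e8 : Real.log (f x) ≤ β₂ * x^(1-lam) := by
      have habs := le_trans (le_abs_self _) hs2
      rw [hβ₂def]; linarith
    have hlf1 : 1 ≤ Real.log (f x) := by
      rw [div_le_iff₀ hβ₁] at hβ
      linarith
    -- log log f bounds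
    have hxp : 0 < x^(1-lam) := Real.rpow_pos_of_pos hx0 _
    have e9 : q₁ + (1-lam) * Real.log x ≤ Real.log (Real.log (f x)) := by
      have h1 := (Real.log_le_log_iff (mul_pos hβ₁ hxp) (by linarith)).2 e7
      rw [Real.log_mul hβ₁.ne' hxp.ne', Real.log_rpow hx0] at h1
      rw [hq₁def]; linarith
    have e10 : Real.log (Real.log (f x)) ≤ q₂ + (1-lam) * Real.log x := by
      have h1 := (Real.log_le_log_iff (by linarith) (mul_pos hβ₂ hxp)).2 e8
      rw [Real.log_mul hβ₂.ne' hxp.ne', Real.log_rpow hx0] at h1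
      rw [hq₂def]; linarith
    have hrr : r * (1-lam) = 2*lam := by rw [hr]; field_simp
    have e11 : r*q₁ + 2*lam*Real.log x ≤ r * Real.log (Real.log (f x)) := by
      calc r*q₁ + 2*lam*Real.log x = r * (q₁ + (1-lam)*Real.log x) := by
            rw [mul_add, ← mul_assoc, hrr]
        _ ≤ r * Real.log (Real.log (f x)) := mul_le_mul_of_nonneg_left e9 hrpos.le
    have e12 : r * Real.log (Real.log (f x)) ≤ r*q₂ + 2*lam*Real.log x := by
      calc r * Real.log (Real.log (f x)) ≤ r * (q₂ + (1-lam)*Real.log x) :=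
            mul_le_mul_of_nonneg_left e10 hrpos.le
        _ = r*q₂ + 2*lam*Real.log x := by rw [mul_add, ← mul_assoc, hrr]
    rw [abs_le]
    constructor
    · have := neg_abs_le (2*k₁ - r*q₂)
      have h2 := abs_nonneg (2*k₂ - r*q₁)
      rw [hM0def]; linarith
    · have := le_abs_self (2*k₂ - r*q₁)
      have h2 := abs_nonneg (2*k₁ - r*q₂)
      rw [hM0def]; linarith
  -- inverse function facts
  have hgmap : ∀ y, f x₀ ≤ y → x₀ ≤ g y := by
    intro y hy
    obtain ⟨c, hc⟩ := ((eventually_ge_atTop x₀).and (htop.eventually_ge_atTop y)).exists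
    have hcont : ContinuousOn f (Set.Icc x₀ c) := fun z hz =>
      ((hd1 z (Set.mem_Ici.2 hz.1)).continuousAt).continuousWithinAt
    obtain ⟨x, hxmem, hfx⟩ := intermediate_value_Icc hc.1 hcont ⟨hy, hc.2⟩
    rw [← hfx, hg1 x (Set.mem_Ici.2 hxmem.1)]
    exact hxmem.1
  have hgge : ∀ c y : ℝ, x₀ ≤ c → f c ≤ y → c ≤ g y := by
    intro c y hc hcy
    have hfy : f x₀ ≤ y :=
      le_trans (hsm.monotoneOn Set.self_mem_Ici (Set.mem_Ici.2 hc) hc) hcy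
    have h0 : x₀ ≤ g y := hgmap y hfy
    by_contra h
    push_neg at h
    have h1 := hsm (Set.mem_Ici.2 h0) (Set.mem_Ici.2 hc) h
    rw [hg2 y (Set.mem_Ici.2 hfy)] at h1
    linarith
  have hgcont : ∀ y, f (x₀+1) ≤ y → ContinuousAt g y := by
    intro y hy
    have hx01 : f x₀ < f (x₀+1) :=
      hsm Set.self_mem_Ici (Set.mem_Ici.2 (by linarith)) (by linarith)
    have hy₀ : f x₀ < y := lt_of_lt_of_le hx01 hy
    have hfgy : f (g y) = y := hg2 y (Set.mem_Ici.2 hy₀.le)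
    have hgy1 : x₀ + 1 ≤ g y := hgge (x₀+1) y (by linarith) hy
    rw [ContinuousAt, tendsto_order]
    constructor
    · intro a ha
      have h1 : a < max ((a + g y)/2) x₀ := lt_of_lt_of_le (by linarith) (le_max_left _ _)
      have h2 : max ((a + g y)/2) x₀ < g y := max_lt (by linarith) (by linarith)
      have h3 : x₀ ≤ max ((a + g y)/2) x₀ := le_max_right _ _
      have h4 : f (max ((a + g y)/2) x₀) < y :=
        lt_of_lt_of_eq (hsm (Set.mem_Ici.2 h3) (Set.mem_Ici.2 (by linarith : x₀ ≤ g y)) h2) hfgy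
      filter_upwards [Ioi_mem_nhds h4] with z hz
      exact lt_of_lt_of_le h1 (hgge _ z h3 (le_of_lt hz))
    · intro c hc
      have h3 : y < f c :=
        lt_of_eq_of_lt hfgy.symm (hsm (Set.mem_Ici.2 (by linarith : x₀ ≤ g y))
          (Set.mem_Ici.2 (by linarith : x₀ ≤ c)) hc)
      filter_upwards [Ioi_mem_nhds hy₀, Iio_mem_nhds h3] with z hz1 hz2
      by_contra h
      push_neg at h
      have h5 : f c ≤ f (g z) := hsm.monotoneOn (Set.mem_Ici.2 (by linarith : x₀ ≤ c))
        (Set.mem_Ici.2 (le_trans (by linarith) h)) h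
      rw [hg2 z (Set.mem_Ici.2 (le_of_lt hz1))] at h5
      exact absurd hz2 (not_lt.2 h5)
  -- transfer to ε → 0⁺
  obtain ⟨X₃, hX₃⟩ := eventually_atTop.1 hQ
  obtain ⟨b, hbdef⟩ : ∃ b : ℝ, b = max X₃ (max X (x₀+1)) := ⟨_, rfl⟩
  have hbx₁ : x₀ + 1 ≤ b := by
    rw [hbdef]; exact le_trans (le_max_right X (x₀+1)) (le_max_right _ _)
  have hbx₀ : x₀ ≤ b := by linarith
  have hbX₃ : X₃ ≤ b := by rw [hbdef]; exact le_max_left _ _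
  have hinv : Tendsto (fun ε : ℝ => 1/ε) (𝓝[>] (0:ℝ)) atTop := by
    simpa only [one_div] using tendsto_inv_nhdsGT_zero
  have hkey : ∀ᶠ ε in 𝓝[>] (0:ℝ),
      |2 * Real.log (deriv g (1/ε)/ε) - r * Real.log (Real.log (1/ε))| ≤ M0 := by
    filter_upwards [hinv.eventually (eventually_ge_atTop (max (f b) 1)),
      self_mem_nhdsWithin] with ε hY hε
    have hε0 : (0:ℝ) < ε := hε
    have hy1 : (1:ℝ) ≤ 1/ε := le_trans (le_max_right _ _) hY
    have hyb : f b ≤ 1/ε := le_trans (le_max_left _ _) hY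
    obtain ⟨u, hu⟩ : ∃ u : ℝ, u = g (1/ε) := ⟨_, rfl⟩
    have hgyb : b ≤ u := by rw [hu]; exact hgge b (1/ε) hbx₀ hyb
    have hgy₀ : x₀ ≤ u := hbx₀.trans hgyb
    have hfx₀ : f x₀ ≤ 1/ε :=
      le_trans (hsm.monotoneOn Set.self_mem_Ici (Set.mem_Ici.2 hbx₀) hbx₀) hyb
    have hfx₀' : f x₀ < 1/ε :=
      lt_of_lt_of_le (hsm Set.self_mem_Ici (Set.mem_Ici.2 hbx₀) (by linarith)) hyb
    have hfgy : f u = 1/ε := by rw [hu]; exact hg2 _ (Set.mem_Ici.2 hfx₀)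
    have hcont : ContinuousAt g (1/ε) := hgcont _
      (le_trans (hsm.monotoneOn (Set.mem_Ici.2 (by linarith)) (Set.mem_Ici.2 hbx₀) hbx₁) hyb)
    have hp : 0 < deriv f u := hpos _ (Set.mem_Ici.2 hgy₀)
    have hgy₀' : x₀ ≤ g (1/ε) := by rw [← hu]; exact hgy₀
    have hp' : 0 < deriv f (g (1/ε)) := by rw [← hu]; exact hp
    have hder : HasDerivAt g (deriv f (g (1/ε)))⁻¹ (1/ε) := by
      apply HasDerivAt.of_local_left_inverse hcont
        ((hd1 _ (Set.mem_Ici.2 hgy₀')).hasDerivAt) hp'.ne'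
      filter_upwards [Ioi_mem_nhds hfx₀'] with z hz
      exact hg2 z (Set.mem_Ici.2 (le_of_lt hz))
    have hdd : deriv g (1/ε) = (deriv f u)⁻¹ := by rw [hu]; exact hder.deriv
    have hy0 : (0:ℝ) < 1/ε := by positivity
    have hcalc : deriv g (1/ε) / ε = (1/ε) / deriv f u := by
      rw [hdd]
      field_simp [hε0.ne', hp.ne']
    rw [hcalc, Real.log_div hy0.ne' hp.ne', ← hfgy]
    exact hX₃ u (hbX₃.trans hgyb)
  constructor
  · exact ⟨M0, hkey⟩
  · have hS : Tendsto (fun ε : ℝ => r * Real.log (Real.log (1/ε))) (𝓝[>] (0:ℝ)) atTop := by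
      have h1 : Tendsto (fun ε : ℝ => Real.log (Real.log (1/ε))) (𝓝[>] (0:ℝ)) atTop :=
        Real.tendsto_log_atTop.comp (Real.tendsto_log_atTop.comp hinv)
      exact h1.const_mul_atTop hrpos
    have hS1 : ∀ᶠ ε in 𝓝[>] (0:ℝ),
        max 1 (M0 + 1) ≤ r * Real.log (Real.log (1/ε)) :=
      hS.eventually (eventually_ge_atTop _)
    have hratio : Tendsto (fun ε : ℝ => (2 * Real.log (deriv g (1/ε)/ε)) /
        (r * Real.log (Real.log (1/ε)))) (𝓝[>] (0:ℝ)) (𝓝 1) := by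
      have hd : Tendsto (fun ε : ℝ =>
          (2 * Real.log (deriv g (1/ε)/ε) - r * Real.log (Real.log (1/ε))) /
          (r * Real.log (Real.log (1/ε)))) (𝓝[>] (0:ℝ)) (𝓝 0) := by
        apply squeeze_zero_norm' (a := fun ε => M0 / (r * Real.log (Real.log (1/ε))))
        · filter_upwards [hkey, hS1] with ε h1 h2
          have hS0 : 0 < r * Real.log (Real.log (1/ε)) :=
            lt_of_lt_of_le one_pos (le_trans (le_max_left _ _) h2)
          rw [Real.norm_eq_abs, abs_div, abs_of_pos hS0]
          exact div_le_div_of_nonneg_right h1 hS0.le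
        · exact tendsto_const_nhds.div_atTop hS
      have h2 := hd.add (tendsto_const_nhds (x := (1:ℝ)))
      rw [zero_add] at h2
      apply h2.congr'
      filter_upwards [hS1] with ε h2'
      have hS0 : r * Real.log (Real.log (1/ε)) ≠ 0 :=
        ne_of_gt (lt_of_lt_of_le one_pos (le_trans (le_max_left _ _) h2'))
      rw [div_add_one hS0, sub_add_cancel]
    have hT0 : ∀ᶠ ε in 𝓝[>] (0:ℝ), 0 ≤ 2 * Real.log (deriv g (1/ε)/ε) := by
      filter_upwards [hkey, hS1] with ε h1 h2
      have h3 := (abs_le.1 h1).1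
      have h4 := le_trans (le_max_right 1 (M0+1)) h2
      linarith
    have hsq : Tendsto (fun ε : ℝ => Real.sqrt ((2 * Real.log (deriv g (1/ε)/ε)) /
        (r * Real.log (Real.log (1/ε))))) (𝓝[>] (0:ℝ)) (𝓝 1) := by
      have h5 := (Real.continuous_sqrt.tendsto 1).comp hratio
      rw [Real.sqrt_one] at h5
      exact h5
    apply hsq.congr'
    filter_upwards [hT0] with ε h
    rw [Real.sqrt_div h]
end

section
/- Let f satisfy the growth condition with exponent λ = 1. Then ln f⁻¹(x) ≍ ln x as x → ∞, and ln((f⁻¹)'(1/ε)/ε) ≍ ln(1/ε) as ε → 0⁺; that is, there exist constants 0 < C₁ ≤ C₂ such that C₁ ln(1/ε) ≤ ln((f⁻¹)'(1/ε)/ε) ≤ C₂ ln(1/ε) for all sufficiently small ε > 0. -/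
open Filter Set Topology

set_option maxHeartbeats 1000000 in
/-- If `f` satisfies the growth condition with exponent `lam = 1`, then
`ln f⁻¹(x) ≍ ln x` as `x → ∞` and `ln((f⁻¹)'(1/ε)/ε) ≍ ln(1/ε)` as `ε → 0⁺`. -/
theorem log_inv_asymp_lambda_one (f g : ℝ → ℝ) (x₀ : ℝ)
    (hf : GrowthCondition f 1 x₀)
    (hg : IsInverseOn f g x₀) :
    (∃ C₁ C₂ : ℝ, 0 < C₁ ∧ C₁ ≤ C₂ ∧
      ∀ᶠ x in atTop,
        C₁ * Real.log x ≤ Real.log (g x) ∧ Real.log (g x) ≤ C₂ * Real.log x) ∧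
    (∃ C₁ C₂ : ℝ, 0 < C₁ ∧ C₁ ≤ C₂ ∧
      ∀ᶠ ε in 𝓝[>] (0 : ℝ),
        C₁ * Real.log (1 / ε) ≤ Real.log (deriv g (1 / ε) / ε) ∧
        Real.log (deriv g (1 / ε) / ε) ≤ C₂ * Real.log (1 / ε)) := by
  obtain ⟨hdiff, hdiff2, hmono, htop, hpos, c₁, c₂, hc₁, hc12, hcc⟩ := hf
  obtain ⟨hgf, hfg⟩ := hg
  have hc₂ : 0 < c₂ := hc₁.trans_le hc12
  obtain ⟨a, ha⟩ := eventually_atTop.1 hcc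
  set x₁ : ℝ := max a (max x₀ 1) with hx₁def
  have hx₁a : a ≤ x₁ := le_max_left _ _
  have hx₁x₀ : x₀ ≤ x₁ := (le_max_left _ _).trans (le_max_right _ _)
  have hx₁1 : (1:ℝ) ≤ x₁ := (le_max_right _ _).trans (le_max_right _ _)
  have hx₁pos : (0:ℝ) < x₁ := lt_of_lt_of_le one_pos hx₁1
  have hpos' : ∀ x ∈ Ici x₁, 0 < deriv f x := fun x hx => hpos x (le_trans hx₁x₀ hx)
  have key : ∀ x ∈ Ici x₁,
      c₁ * x⁻¹ ≤ deriv (deriv f) x / deriv f x ∧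
        deriv (deriv f) x / deriv f x ≤ c₂ * x⁻¹ := by
    intro x hx
    have := ha x (le_trans hx₁a hx)
    rwa [Real.rpow_neg_one] at this
  have hLder : ∀ x ∈ Ici x₁, HasDerivAt (fun t => Real.log (deriv f t))
      (deriv (deriv f) x / deriv f x) x := fun x hx =>
    ((hdiff2 x (le_trans hx₁x₀ hx)).hasDerivAt).log (ne_of_gt (hpos' x hx))
  -- u = log f' - c₁ log is monotone on [x₁, ∞)
  have humono : MonotoneOn (fun x => Real.log (deriv f x) - c₁ * Real.log x) (Ici x₁) := by
    have hd : ∀ x ∈ Ici x₁, HasDerivAt (fun t => Real.log (deriv f t) - c₁ * Real.log t)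
        (deriv (deriv f) x / deriv f x - c₁ * x⁻¹) x := fun x hx =>
      (hLder x hx).sub
        ((Real.hasDerivAt_log (ne_of_gt (lt_of_lt_of_le hx₁pos hx))).const_mul c₁)
    apply monotoneOn_of_deriv_nonneg (convex_Ici x₁)
    · exact fun x hx => (hd x hx).differentiableAt.continuousAt.continuousWithinAt
    · intro x hx
      rw [interior_Ici] at hx
      exact (hd x (mem_Ici.2 (le_of_lt (mem_Ioi.1 hx)))).differentiableAt.differentiableWithinAt
    · intro x hx
      rw [interior_Ici] at hx
      rw [(hd x (mem_Ici.2 (le_of_lt (mem_Ioi.1 hx)))).deriv]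
      have := (key x (mem_Ici.2 (le_of_lt (mem_Ioi.1 hx)))).1
      linarith
  -- v = log f' - c₂ log is antitone on [x₁, ∞)
  have hvanti : AntitoneOn (fun x => Real.log (deriv f x) - c₂ * Real.log x) (Ici x₁) := by
    have hd : ∀ x ∈ Ici x₁, HasDerivAt (fun t => Real.log (deriv f t) - c₂ * Real.log t)
        (deriv (deriv f) x / deriv f x - c₂ * x⁻¹) x := fun x hx =>
      (hLder x hx).sub
        ((Real.hasDerivAt_log (ne_of_gt (lt_of_lt_of_le hx₁pos hx))).const_mul c₂)
    apply antitoneOn_of_deriv_nonpos (convex_Ici x₁)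
    · exact fun x hx => (hd x hx).differentiableAt.continuousAt.continuousWithinAt
    · intro x hx
      rw [interior_Ici] at hx
      exact (hd x (mem_Ici.2 (le_of_lt (mem_Ioi.1 hx)))).differentiableAt.differentiableWithinAt
    · intro x hx
      rw [interior_Ici] at hx
      rw [(hd x (mem_Ici.2 (le_of_lt (mem_Ioi.1 hx)))).deriv]
      have := (key x (mem_Ici.2 (le_of_lt (mem_Ioi.1 hx)))).2
      linarith
  -- pointwise log-power bounds for f'
  have h_lo : ∀ x ∈ Ici x₁, c₁ * Real.log x + (Real.log (deriv f x₁) - c₁ * Real.log x₁)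
      ≤ Real.log (deriv f x) := by
    intro x hx
    have := humono self_mem_Ici hx hx
    simp only at this
    linarith
  have h_up : ∀ x ∈ Ici x₁, Real.log (deriv f x)
      ≤ c₂ * Real.log x + (Real.log (deriv f x₁) - c₂ * Real.log x₁) := by
    intro x hx
    have := hvanti self_mem_Ici hx hx
    simp only at this
    linarith
  have h_half : ∀ x, 2 * x₁ ≤ x →
      Real.log (deriv f x) ≤ Real.log (deriv f (x/2)) + c₂ * Real.log 2 := by
    intro x hx
    have hx2 : x/2 ∈ Ici x₁ := by simp only [mem_Ici]; linarith
    have hxI : x ∈ Ici x₁ := by simp only [mem_Ici]; linarith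
    have hv := hvanti hx2 hxI (by linarith : x/2 ≤ x)
    simp only at hv
    have hxpos : (0:ℝ) < x := by linarith
    have hld : Real.log (x/2) = Real.log x - Real.log 2 :=
      Real.log_div (ne_of_gt hxpos) two_ne_zero
    have h2 : c₂ * Real.log (x/2) = c₂ * Real.log x - c₂ * Real.log 2 := by
      rw [hld]; ring
    linarith
  -- f' is monotone on [x₁, ∞)
  have hfmono : MonotoneOn (deriv f) (Ici x₁) := by
    intro x hx y hy hxy
    have h1 := humono hx hy hxy
    simp only at h1
    have h3 : Real.log x ≤ Real.log y := Real.log_le_log (lt_of_lt_of_le hx₁pos hx) hxy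
    have h4 : c₁ * Real.log x ≤ c₁ * Real.log y := mul_le_mul_of_nonneg_left h3 hc₁.le
    exact (Real.log_le_log_iff (hpos' x hx) (hpos' y hy)).1 (by linarith)
  -- MVT upper bound for f
  have h_fup : ∀ x ∈ Ici x₁, f x ≤ f x₁ + x * deriv f x := by
    intro x hx
    rcases eq_or_lt_of_le (mem_Ici.1 hx) with heq | hlt
    · have := mul_pos hx₁pos (hpos' x₁ self_mem_Ici)
      rw [← heq]
      linarith
    · obtain ⟨c, hc, hceq⟩ := exists_hasDerivAt_eq_slope f (deriv f) hlt
        (fun t ht => (hdiff t (le_trans hx₁x₀ ht.1)).continuousAt.continuousWithinAt)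
        (fun t ht => (hdiff t (le_trans hx₁x₀ ht.1.le)).hasDerivAt)
      have hcx : deriv f c ≤ deriv f x := hfmono (mem_Ici.2 hc.1.le) hx hc.2.le
      have hxx : (0:ℝ) < x - x₁ := by linarith
      have heq2 : deriv f c * (x - x₁) = f x - f x₁ := by
        rw [hceq]; exact div_mul_cancel₀ _ (ne_of_gt hxx)
      have h5 : deriv f c * (x - x₁) ≤ deriv f x * (x - x₁) :=
        mul_le_mul_of_nonneg_right hcx hxx.le
      have h6 : deriv f x * (x - x₁) ≤ deriv f x * x :=
        mul_le_mul_of_nonneg_left (by linarith) (hpos' x hx).le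
      nlinarith
  -- MVT lower bound for f
  have h_flo : ∀ x, 2 * x₁ ≤ x → f (x/2) + (x/2) * deriv f (x/2) ≤ f x := by
    intro x hx
    have hx2 : x/2 ∈ Ici x₁ := by simp only [mem_Ici]; linarith
    have hlt : x/2 < x := by nlinarith
    obtain ⟨c, hc, hceq⟩ := exists_hasDerivAt_eq_slope f (deriv f) hlt
      (fun t ht => (hdiff t (le_trans hx₁x₀ (le_trans (mem_Ici.1 hx2) ht.1))).continuousAt.continuousWithinAt)
      (fun t ht => (hdiff t (le_trans hx₁x₀ (le_trans (mem_Ici.1 hx2) ht.1.le))).hasDerivAt)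
    have hcx : deriv f (x/2) ≤ deriv f c := hfmono hx2 (mem_Ici.2 (le_trans (mem_Ici.1 hx2) hc.1.le)) hc.1.le
    have hxx : (0:ℝ) < x - x/2 := by linarith
    have heq2 : deriv f c * (x - x/2) = f x - f (x/2) := by
      rw [hceq]; exact div_mul_cancel₀ _ (ne_of_gt hxx)
    have h5 : deriv f (x/2) * (x - x/2) ≤ deriv f c * (x - x/2) :=
      mul_le_mul_of_nonneg_right hcx hxx.le
    have hhalf : x - x/2 = x/2 := by ring
    rw [hhalf] at h5 heq2
    nlinarith
  -- eventual log bounds for f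
  have hl2 : (0:ℝ) < Real.log 2 := Real.log_pos one_lt_two
  have tdiv : Tendsto (fun x : ℝ => x / 2) atTop atTop :=
    tendsto_id.atTop_div_const (by norm_num)
  have e1 : ∀ᶠ x : ℝ in atTop, 2 * x₁ ≤ x := eventually_ge_atTop _
  have e2 : ∀ᶠ x : ℝ in atTop, 0 < f (x/2) := by
    have := (htop.comp tdiv).eventually_gt_atTop 0
    filter_upwards [this] with x hx using hx
  have e3 : ∀ᶠ x : ℝ in atTop, f x₁ ≤ x * deriv f x₁ :=
    (tendsto_id.atTop_mul_const (hpos' x₁ self_mem_Ici)).eventually_ge_atTop _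
  have e4 : ∀ᶠ x : ℝ in atTop,
      Real.log 2 ≤ c₁ * Real.log (x/2) + (Real.log (deriv f x₁) - c₁ * Real.log x₁) := by
    have t : Tendsto (fun x : ℝ => c₁ * Real.log (x/2)
        + (Real.log (deriv f x₁) - c₁ * Real.log x₁)) atTop atTop := by
      apply tendsto_atTop_add_const_right
      apply Tendsto.const_mul_atTop hc₁
      exact Real.tendsto_log_atTop.comp tdiv
    exact t.eventually_ge_atTop _
  have e5 : ∀ᶠ x : ℝ in atTop,
      Real.log 2 + (Real.log (deriv f x₁) - c₂ * Real.log x₁) ≤ Real.log x :=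
    Real.tendsto_log_atTop.eventually_ge_atTop _
  have EKey : ∀ᶠ x : ℝ in atTop,
      (Real.log x + Real.log (deriv f x) - (1 + c₂) * Real.log 2 ≤ Real.log (f x)) ∧
      (Real.log (f x) ≤ Real.log x + Real.log (deriv f x) + Real.log 2) ∧
      (Real.log x ≤ Real.log (f x)) ∧
      (Real.log (f x) ≤ (c₂ + 2) * Real.log x) ∧ 0 < f x := by
    filter_upwards [e1, e2, e3, e4, e5] with x h1 h2 h3 h4 h5
    have hxpos : (0:ℝ) < x := by linarith
    have hxI : x ∈ Ici x₁ := by simp only [mem_Ici]; linarith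
    have hx2I : x/2 ∈ Ici x₁ := by simp only [mem_Ici]; linarith
    have hf'x := hpos' x hxI
    have hf'x2 := hpos' _ hx2I
    have hflo := h_flo x h1
    have hfx_lo : (x/2) * deriv f (x/2) ≤ f x := by linarith
    have hfxpos : 0 < f x :=
      lt_of_lt_of_le (mul_pos (by linarith : (0:ℝ) < x/2) hf'x2) hfx_lo
    have hlog_lo : Real.log x - Real.log 2 + Real.log (deriv f (x/2)) ≤ Real.log (f x) := by
      have h := Real.log_le_log (mul_pos (by linarith : (0:ℝ) < x/2) hf'x2) hfx_lo
      rw [Real.log_mul (by positivity) (ne_of_gt hf'x2),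
        Real.log_div (ne_of_gt hxpos) two_ne_zero] at h
      linarith
    have hhalf := h_half x h1
    have i1 : Real.log x + Real.log (deriv f x) - (1 + c₂) * Real.log 2 ≤ Real.log (f x) := by
      nlinarith [hlog_lo, hhalf]
    have hfup := h_fup x hxI
    have h3' : f x₁ ≤ x * deriv f x :=
      le_trans h3 (mul_le_mul_of_nonneg_left (hfmono self_mem_Ici hxI (mem_Ici.1 hxI)) hxpos.le)
    have hfup2 : f x ≤ 2 * (x * deriv f x) := by linarith
    have ii : Real.log (f x) ≤ Real.log x + Real.log (deriv f x) + Real.log 2 := by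
      have h := Real.log_le_log hfxpos hfup2
      rw [Real.log_mul two_ne_zero (by positivity),
        Real.log_mul (ne_of_gt hxpos) (ne_of_gt hf'x)] at h
      linarith
    have hlo2 := h_lo (x/2) hx2I
    have iii : Real.log x ≤ Real.log (f x) := by linarith
    have hupx := h_up x hxI
    have iv : Real.log (f x) ≤ (c₂ + 2) * Real.log x := by nlinarith [ii, hupx, h5]
    exact ⟨i1, ii, iii, iv, hfxpos⟩
  -- basic facts about g
  have hsurj : ∀ y, f x₀ ≤ y → x₀ ≤ g y ∧ f (g y) = y := by
    intro y hy
    refine ⟨?_, hfg y hy⟩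
    obtain ⟨b, hb1, hb2⟩ := ((htop.eventually_ge_atTop y).and (eventually_ge_atTop x₀)).exists
    have hcont : ContinuousOn f (Icc x₀ b) := fun t ht =>
      (hdiff t ht.1).continuousAt.continuousWithinAt
    obtain ⟨x, hxmem, hxeq⟩ := intermediate_value_Icc hb2 hcont ⟨hy, hb1⟩
    have hgx : g y = x := by rw [← hxeq, hgf x hxmem.1]
    rw [hgx]; exact hxmem.1
  have hgtop : Tendsto g atTop atTop := by
    rw [tendsto_atTop]
    intro b
    filter_upwards [eventually_ge_atTop (max (f x₀) (f (max b x₀)))] with y hy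
    have h1 : f x₀ ≤ y := le_trans (le_max_left _ _) hy
    obtain ⟨hgy0, hgyf⟩ := hsurj y h1
    have h2 : f (max b x₀) ≤ f (g y) := by
      rw [hgyf]; exact le_trans (le_max_right _ _) hy
    have h3 : max b x₀ ≤ g y :=
      (hmono.le_iff_le (Set.mem_Ici.2 (le_max_right b x₀)) (Set.mem_Ici.2 hgy0)).1 h2
    exact le_trans (le_max_left _ _) h3
  constructor
  · -- Part 1
    refine ⟨1/(c₂+2), 1, div_pos one_pos (by linarith), ?_, ?_⟩
    · rw [div_le_one (by linarith)]; linarith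
    · filter_upwards [eventually_ge_atTop (f x₀), hgtop.eventually EKey] with y hy hQ
      obtain ⟨hgy0, hgyf⟩ := hsurj y hy
      obtain ⟨_, _, hx3, hx4, _⟩ := hQ
      rw [hgyf] at hx3 hx4
      constructor
      · rw [div_mul_eq_mul_div, div_le_iff₀ (by linarith : (0:ℝ) < c₂+2)]
        linarith
      · linarith
  · -- Part 2
    have hgcont : ∀ y, f x₀ < y → ContinuousAt g y := by
      intro y hy
      obtain ⟨hgy0, hgyf⟩ := hsurj y hy.le
      have hgygt : x₀ < g y := by
        rcases eq_or_lt_of_le hgy0 with h | h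
        · exfalso; rw [← h] at hgyf; linarith
        · exact h
      refine tendsto_order.2 ⟨?_, ?_⟩
      · intro b hb
        have hb' : max b x₀ < g y := max_lt hb hgygt
        have hfb : f (max b x₀) < y := by
          rw [← hgyf]
          exact hmono (Set.mem_Ici.2 (le_max_right _ _)) (Set.mem_Ici.2 hgy0) hb'
        filter_upwards [eventually_gt_nhds hfb, eventually_gt_nhds hy] with z hz1 hz2
        obtain ⟨hgz0, hgzf⟩ := hsurj z hz2.le
        have h4 : max b x₀ < g z := by
          refine (hmono.lt_iff_lt (Set.mem_Ici.2 (le_max_right _ _)) (Set.mem_Ici.2 hgz0)).1 ?_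
          rw [hgzf]; exact hz1
        exact lt_of_le_of_lt (le_max_left _ _) h4
      · intro b hb
        have hbx₀ : x₀ ≤ b := le_trans hgy0 hb.le
        have hfb : y < f b := by
          rw [← hgyf]
          exact hmono (Set.mem_Ici.2 hgy0) (Set.mem_Ici.2 hbx₀) hb
        filter_upwards [eventually_lt_nhds hfb, eventually_gt_nhds hy] with z hz1 hz2
        obtain ⟨hgz0, hgzf⟩ := hsurj z hz2.le
        refine (hmono.lt_iff_lt (Set.mem_Ici.2 hgz0) (Set.mem_Ici.2 hbx₀)).1 ?_
        rw [hgzf]; exact hz1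
    have hgderiv : ∀ y, f x₀ < y → HasDerivAt g ((deriv f (g y))⁻¹) y := by
      intro y hy
      obtain ⟨hgy0, hgyf⟩ := hsurj y hy.le
      refine HasDerivAt.of_local_left_inverse (hgcont y hy)
        ((hdiff (g y) hgy0).hasDerivAt) (ne_of_gt (hpos _ hgy0)) ?_
      filter_upwards [eventually_gt_nhds hy] with z hz
      exact (hsurj z hz.le).2
    refine ⟨1/(2*(c₂+2)), 2, div_pos one_pos (by linarith), ?_, ?_⟩
    · rw [div_le_iff₀ (by linarith : (0:ℝ) < 2*(c₂+2))]; nlinarith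
    · have hmain : ∀ᶠ y in atTop,
          (1/(2*(c₂+2))) * Real.log y ≤ Real.log (deriv g y * y) ∧
          Real.log (deriv g y * y) ≤ 2 * Real.log y := by
        filter_upwards [eventually_gt_atTop (f x₀), hgtop.eventually EKey,
          Real.tendsto_log_atTop.eventually_ge_atTop (Real.log 2),
          Real.tendsto_log_atTop.eventually_ge_atTop (2*(c₂+2)*((1+c₂)*Real.log 2))]
          with y hy hQ hly1 hly2
        obtain ⟨hgy0, hgyf⟩ := hsurj y hy.le
        obtain ⟨q1, q2, q3, q4, q5⟩ := hQ
        rw [hgyf] at q1 q2 q3 q4 q5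
        have hd := (hgderiv y hy).deriv
        have hf'pos : 0 < deriv f (g y) := hpos _ hgy0
        have hlogprod : Real.log (deriv g y * y) =
            Real.log y - Real.log (deriv f (g y)) := by
          rw [hd, Real.log_mul (by positivity) (ne_of_gt q5), Real.log_inv]; ring
        constructor
        · rw [hlogprod]
          have h1 : Real.log y / (c₂+2) ≤ Real.log (g y) := by
            rw [div_le_iff₀ (by linarith : (0:ℝ) < c₂+2)]; linarith
          have hK : (1+c₂)*Real.log 2 ≤ Real.log y / (2*(c₂+2)) := by
            rw [le_div_iff₀ (by linarith : (0:ℝ) < 2*(c₂+2))]; nlinarith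
          have heq : Real.log y / (c₂+2) - Real.log y/(2*(c₂+2))
              = 1/(2*(c₂+2)) * Real.log y := by
            field_simp; ring
          linarith
        · rw [hlogprod]
          linarith
      filter_upwards [tendsto_inv_nhdsGT_zero.eventually hmain] with ε hε
      simp only [one_div, div_eq_mul_inv, one_mul] at hε ⊢
      exact hε
end

section
/- Let f : ℝ → ℝ be twice differentiable and strictly increasing on some ray [x₀, ∞) with f(x) → ∞ as x → ∞ and f'(x) > 0 there, and suppose that for some constants ν > 0 and λ ∈ (0, 1) one has f''(x)/f'(x) = ν·x^{−λ}·(1 + o(1)) as x → ∞. Then, as ε → 0⁺, 2·ln((f⁻¹)'(1/ε)/ε) = (2λ/(1−λ))·ln(ln(1/ε)) + (2λ/(1−λ))·ln(1−λ) − (2/(1−λ))·ln ν + o(1). -/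
open Filter Set Topology

lemma aux_upper (F G F' G' : ℝ → ℝ) (m c : ℝ) (hmc : m < c)
    (hF : ∀ᶠ x in atTop, HasDerivAt F (F' x) x)
    (hG : ∀ᶠ x in atTop, HasDerivAt G (G' x) x)
    (hle : ∀ᶠ x in atTop, F' x ≤ m * G' x)
    (hGtop : Tendsto G atTop atTop) :
    ∀ᶠ x in atTop, F x / G x < c := by
  obtain ⟨X, hX⟩ := eventually_atTop.1 ((hF.and hG).and hle)
  set H : ℝ → ℝ := fun x => m * G x - F x with hH
  have hHderiv : ∀ x ∈ Ici X, HasDerivAt H (m * G' x - F' x) x := by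
    intro x hx
    exact ((hX x hx).1.2.const_mul m).sub (hX x hx).1.1
  have hmono : MonotoneOn H (Ici X) := by
    apply monotoneOn_of_deriv_nonneg (convex_Ici X)
    · exact fun x hx => (hHderiv x hx).continuousAt.continuousWithinAt
    · intro x hx
      rw [interior_Ici] at hx
      exact (hHderiv x (mem_Ici.2 (le_of_lt (mem_Ioi.1 hx)))).differentiableAt.differentiableWithinAt
    · intro x hx
      rw [interior_Ici] at hx
      rw [(hHderiv x (mem_Ici.2 (le_of_lt (mem_Ioi.1 hx)))).deriv]
      have := (hX x (le_of_lt (mem_Ioi.1 hx))).2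
      linarith
  have hC : Tendsto (fun x => m + (F X - m * G X) / G x) atTop (𝓝 (m + 0)) :=
    tendsto_const_nhds.add (hGtop.const_div_atTop _)
  have hCc : ∀ᶠ x in atTop, m + (F X - m * G X) / G x < c :=
    hC.eventually_lt_const (by simpa using hmc)
  filter_upwards [eventually_ge_atTop X, hGtop.eventually_gt_atTop 0, hCc] with x hx hGpos hlt
  have hkey : F x ≤ m * G x + (F X - m * G X) := by
    have := hmono (self_mem_Ici) hx hx
    simp only [hH] at this
    linarith
  have : F x / G x ≤ m + (F X - m * G X) / G x := by
    rw [div_le_iff₀ hGpos]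
    calc F x ≤ m * G x + (F X - m * G X) := hkey
    _ = (m + (F X - m * G X) / G x) * G x := by field_simp
  linarith

lemma lhopital_one (F G F' G' : ℝ → ℝ)
    (hF : ∀ᶠ x in atTop, HasDerivAt F (F' x) x)
    (hG : ∀ᶠ x in atTop, HasDerivAt G (G' x) x)
    (hG' : ∀ᶠ x in atTop, 0 < G' x)
    (hGtop : Tendsto G atTop atTop)
    (hr : Tendsto (fun x => F' x / G' x) atTop (𝓝 1)) :
    Tendsto (fun x => F x / G x) atTop (𝓝 1) := by
  rw [tendsto_order]
  constructor
  · intro c hc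
    have hm : c < (c + 1) / 2 ∧ (c + 1) / 2 < 1 := by constructor <;> linarith
    have hFle : ∀ᶠ x in atTop, -F' x ≤ (-(c + 1) / 2) * G' x := by
      filter_upwards [hr.eventually_const_lt hm.2, hG'] with x h1 h2
      rw [lt_div_iff₀ h2] at h1
      nlinarith
    have := aux_upper (fun x => -F x) G (fun x => -F' x) G' (-(c + 1) / 2) (-c)
      (by linarith) (hF.mono fun x h => h.neg) hG hFle hGtop
    filter_upwards [this] with x hx
    rw [neg_div] at hx
    linarith
  · intro c hc
    have hm : 1 < (1 + c) / 2 ∧ (1 + c) / 2 < c := by constructor <;> linarith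
    have hFle : ∀ᶠ x in atTop, F' x ≤ ((1 + c) / 2) * G' x := by
      filter_upwards [hr.eventually_lt_const hm.1, hG'] with x h1 h2
      rw [div_lt_iff₀ h2] at h1
      linarith
    exact aux_upper F G F' G' _ c hm.2 hF hG hFle hGtop

/-- If `f` is twice differentiable, strictly increasing to `∞` with positive derivative on a
ray, and `f''(x)/f'(x) = ν·x^(-lam)·(1 + o(1))` as `x → ∞` for some `ν > 0`, `lam ∈ (0,1)`,
then `2·ln((f⁻¹)'(1/ε)/ε) = (2lam/(1-lam))·ln ln(1/ε) + (2lam/(1-lam))·ln(1-lam)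
− (2/(1-lam))·ln ν + o(1)` as `ε → 0⁺`. -/
theorem log_deriv_inv_precise (f g : ℝ → ℝ) (lam ν x₀ : ℝ)
    (hlam : lam ∈ Set.Ioo (0 : ℝ) 1) (hν : 0 < ν)
    (hdiff : ∀ x ∈ Set.Ici x₀, DifferentiableAt ℝ f x)
    (hdiff2 : ∀ x ∈ Set.Ici x₀, DifferentiableAt ℝ (deriv f) x)
    (hmono : StrictMonoOn f (Set.Ici x₀))
    (htop : Tendsto f atTop atTop)
    (hpos : ∀ x ∈ Set.Ici x₀, 0 < deriv f x)
    (hratio : Tendsto (fun x : ℝ =>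
        (deriv (deriv f) x / deriv f x) / (ν * x ^ (-lam))) atTop (𝓝 1))
    (hg : IsInverseOn f g x₀) :
    Tendsto (fun ε : ℝ =>
        2 * Real.log (deriv g (1 / ε) / ε) -
          ((2 * lam / (1 - lam)) * Real.log (Real.log (1 / ε)) +
            (2 * lam / (1 - lam)) * Real.log (1 - lam) -
            (2 / (1 - lam)) * Real.log ν))
      (𝓝[>] (0 : ℝ)) (𝓝 0) := by
  obtain ⟨hlam0, hlam1⟩ := hlam
  have h1l : (0:ℝ) < 1 - lam := by linarith
  -- Step A: log f' (x) / (ν/(1-lam) * x^(1-lam)) → 1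
  have hF1 : ∀ᶠ x in atTop, HasDerivAt (fun x => Real.log (deriv f x))
      (deriv (deriv f) x / deriv f x) x := by
    filter_upwards [eventually_ge_atTop x₀] with x hx
    have hd2 : HasDerivAt (deriv f) (deriv (deriv f) x) x := (hdiff2 x hx).hasDerivAt
    have := (Real.hasDerivAt_log (hpos x hx).ne').comp x hd2
    rw [div_eq_inv_mul]; exact this
  have hG1 : ∀ᶠ x in atTop, HasDerivAt (fun x : ℝ => ν / (1 - lam) * x ^ (1 - lam))
      (ν * x ^ (-lam)) x := by
    filter_upwards [eventually_gt_atTop 0] with x hx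
    have := (Real.hasDerivAt_rpow_const (x := x) (p := 1 - lam) (Or.inl hx.ne')).const_mul
      (ν / (1 - lam))
    refine this.congr_deriv ?_
    rw [show (1 : ℝ) - lam - 1 = -lam by ring]
    field_simp
  have hG1' : ∀ᶠ x in atTop, (0:ℝ) < ν * x ^ (-lam) := by
    filter_upwards [eventually_gt_atTop 0] with x hx
    exact mul_pos hν (Real.rpow_pos_of_pos hx _)
  have hVtop : Tendsto (fun x : ℝ => ν / (1 - lam) * x ^ (1 - lam)) atTop atTop :=
    (tendsto_rpow_atTop h1l).const_mul_atTop (by positivity)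
  have limA : Tendsto (fun x => Real.log (deriv f x) / (ν / (1 - lam) * x ^ (1 - lam)))
      atTop (𝓝 1) := lhopital_one _ _ _ _ hF1 hG1 hG1' hVtop hratio
  -- log f' → ∞ and f' → ∞
  have hlogf'top : Tendsto (fun x => Real.log (deriv f x)) atTop atTop := by
    have h := limA.pos_mul_atTop one_pos hVtop
    apply h.congr'
    filter_upwards [eventually_gt_atTop 0] with x hx
    have : ν / (1 - lam) * x ^ (1 - lam) ≠ 0 := by positivity
    field_simp
  have hf'top : Tendsto (deriv f) atTop atTop := by
    have h := Real.tendsto_exp_atTop.comp hlogf'top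
    apply h.congr'
    filter_upwards [eventually_ge_atTop x₀] with x hx
    exact Real.exp_log (hpos x hx)
  -- eventually f'' > 0
  have hf''pos : ∀ᶠ x in atTop, 0 < deriv (deriv f) x := by
    filter_upwards [hratio.eventually_const_lt (show (1:ℝ)/2 < 1 by norm_num),
      eventually_gt_atTop 0, eventually_ge_atTop x₀] with x h hx0 hx₀
    have hden : (0:ℝ) < ν * x ^ (-lam) := mul_pos hν (Real.rpow_pos_of_pos hx0 _)
    have h2 : 0 < deriv (deriv f) x / deriv f x := by
      have := (div_pos_iff.1 (lt_trans one_half_pos h)).resolve_right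
        (fun hc => absurd hden (not_lt.2 hc.2.le))
      exact this.1
    exact (div_pos_iff.1 h2).resolve_right
      (fun hc => absurd (hpos x hx₀) (not_lt.2 hc.2.le)) |>.1
  -- Step B: f / (f' x^lam / ν) → 1
  have hF2 : ∀ᶠ x in atTop, HasDerivAt f (deriv f x) x := by
    filter_upwards [eventually_ge_atTop x₀] with x hx
    exact (hdiff x hx).hasDerivAt
  have hG2 : ∀ᶠ x in atTop, HasDerivAt (fun x => deriv f x * x ^ lam / ν)
      ((deriv (deriv f) x * x ^ lam + deriv f x * (lam * x ^ (lam - 1))) / ν) x := by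
    filter_upwards [eventually_ge_atTop x₀, eventually_gt_atTop 0] with x hx hx0
    exact ((hdiff2 x hx).hasDerivAt.mul
      (Real.hasDerivAt_rpow_const (Or.inl hx0.ne'))).div_const ν
  have hG2' : ∀ᶠ x in atTop,
      (0:ℝ) < (deriv (deriv f) x * x ^ lam + deriv f x * (lam * x ^ (lam - 1))) / ν := by
    filter_upwards [hf''pos, eventually_ge_atTop x₀, eventually_gt_atTop 0] with x h2 hx hx0
    have := hpos x hx
    have h3 : (0:ℝ) < x ^ lam := Real.rpow_pos_of_pos hx0 _
    have h4 : (0:ℝ) < x ^ (lam - 1) := Real.rpow_pos_of_pos hx0 _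
    positivity
  have hG2top : Tendsto (fun x => deriv f x * x ^ lam / ν) atTop atTop := by
    refine tendsto_atTop_mono' atTop ?_ (hf'top.atTop_div_const hν)
    filter_upwards [eventually_ge_atTop 1, hf'top.eventually_gt_atTop 0] with x hx hf'
    have h1 : (1:ℝ) ≤ x ^ lam := by
      calc (1:ℝ) = (1:ℝ) ^ lam := (Real.one_rpow lam).symm
      _ ≤ x ^ lam := Real.rpow_le_rpow zero_le_one hx hlam0.le
    have : deriv f x ≤ deriv f x * x ^ lam := by nlinarith
    exact (div_le_div_iff_of_pos_right hν).2 this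
  have hr2 : Tendsto (fun x => deriv f x /
      ((deriv (deriv f) x * x ^ lam + deriv f x * (lam * x ^ (lam - 1))) / ν)) atTop (𝓝 1) := by
    have hs : Tendsto (fun x : ℝ => lam * x ^ (lam - 1) / ν) atTop (𝓝 0) := by
      have := ((tendsto_rpow_neg_atTop h1l).const_mul lam).div_const ν
      simp only [show -(1 - lam) = lam - 1 by ring] at this
      simpa using this
    have hsum : Tendsto (fun x => (deriv (deriv f) x / deriv f x) / (ν * x ^ (-lam)) +
        lam * x ^ (lam - 1) / ν) atTop (𝓝 (1 + 0)) := hratio.add hs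
    have hinv := hsum.inv₀ (by norm_num)
    simp only [add_zero, inv_one] at hinv
    apply hinv.congr'
    filter_upwards [eventually_ge_atTop x₀, eventually_gt_atTop 0] with x hx hx0
    have hf' := (hpos x hx).ne'
    have hxl : x ^ (-lam) = (x ^ lam)⁻¹ := Real.rpow_neg hx0.le lam
    have hxlne : x ^ lam ≠ 0 := (Real.rpow_pos_of_pos hx0 _).ne'
    have hkey : deriv (deriv f) x / deriv f x / (ν * x ^ (-lam)) + lam * x ^ (lam - 1) / ν =
        (deriv (deriv f) x * x ^ lam + deriv f x * (lam * x ^ (lam - 1))) / (ν * deriv f x) := by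
      rw [hxl]
      field_simp
    rw [hkey, inv_div, div_div_eq_mul_div]
    ring
  have limB : Tendsto (fun x => f x / (deriv f x * x ^ lam / ν)) atTop (𝓝 1) :=
    lhopital_one _ _ _ _ hF2 hG2 hG2' hG2top hr2
  -- L1 : log(f/f') - (lam log x - log ν) → 0
  have hfpos : ∀ᶠ x in atTop, 0 < f x := htop.eventually_gt_atTop 0
  have L1 : Tendsto (fun x => Real.log (f x / deriv f x) - (lam * Real.log x - Real.log ν))
      atTop (𝓝 0) := by
    have h := (Real.continuousAt_log one_ne_zero).tendsto.comp limB
    rw [Real.log_one] at h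
    apply h.congr'
    filter_upwards [hfpos, eventually_ge_atTop x₀, eventually_gt_atTop 0] with x hf hx hx0
    have hf' := hpos x hx
    have hxl : (0:ℝ) < x ^ lam := Real.rpow_pos_of_pos hx0 _
    show Real.log (f x / (deriv f x * x ^ lam / ν)) = _
    rw [Real.log_div hf.ne' (by positivity), Real.log_div hf.ne' hf'.ne',
      Real.log_div (by positivity) hν.ne', Real.log_mul hf'.ne' hxl.ne',
      Real.log_rpow hx0]
    ring
  -- L2a : log f / V → 1
  have hVne : ∀ᶠ x in atTop, ν / (1 - lam) * x ^ (1 - lam) ≠ 0 := by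
    filter_upwards [eventually_gt_atTop 0] with x hx
    positivity
  have L2a : Tendsto (fun x => Real.log (f x) / (ν / (1 - lam) * x ^ (1 - lam)))
      atTop (𝓝 1) := by
    have t2 : Tendsto (fun x => (Real.log (f x / deriv f x) - (lam * Real.log x - Real.log ν)) /
        (ν / (1 - lam) * x ^ (1 - lam))) atTop (𝓝 0) := L1.div_atTop hVtop
    have t3 : Tendsto (fun x : ℝ => lam * Real.log x / (ν / (1 - lam) * x ^ (1 - lam)))
        atTop (𝓝 0) := by
      have hlo := (isLittleO_log_rpow_atTop h1l).tendsto_div_nhds_zero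
      have := (hlo.const_mul lam).div_const (ν / (1 - lam))
      simp only [mul_zero, zero_div] at this
      apply this.congr'
      filter_upwards [eventually_gt_atTop 0] with x hx
      show lam * (Real.log x / x ^ (1 - lam)) / (ν / (1 - lam)) = _
      rw [mul_div_assoc', div_div, mul_comm (x ^ (1 - lam))]
    have t4 : Tendsto (fun x : ℝ => Real.log ν / (ν / (1 - lam) * x ^ (1 - lam)))
        atTop (𝓝 0) := hVtop.const_div_atTop _
    have hsum := (limA.add t2).add (t3.sub t4)
    simp only [add_zero, sub_zero] at hsum
    apply hsum.congr'
    filter_upwards [hfpos, eventually_ge_atTop x₀, eventually_gt_atTop 0, hVne]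
      with x hf hx hx0 hV
    have hf' := hpos x hx
    rw [Real.log_div hf.ne' hf'.ne']
    field_simp
    ring
  -- L2 : log log f - ((1-lam) log x + log ν - log (1-lam)) → 0
  have L2 : Tendsto (fun x => Real.log (Real.log (f x)) -
      ((1 - lam) * Real.log x + Real.log ν - Real.log (1 - lam))) atTop (𝓝 0) := by
    have h := (Real.continuousAt_log one_ne_zero).tendsto.comp L2a
    rw [Real.log_one] at h
    apply h.congr'
    filter_upwards [htop.eventually_gt_atTop 1, eventually_gt_atTop 0,
      L2a.eventually_const_lt (show (1:ℝ)/2 < 1 by norm_num)] with x hf1 hx0 hQ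
    have hlogf : 0 < Real.log (f x) := Real.log_pos hf1
    have hV : (0:ℝ) < ν / (1 - lam) * x ^ (1 - lam) := by positivity
    show Real.log (Real.log (f x) / (ν / (1 - lam) * x ^ (1 - lam))) = _
    rw [Real.log_div hlogf.ne' hV.ne', Real.log_mul (by positivity) (by positivity),
      Real.log_rpow hx0, Real.log_div hν.ne' h1l.ne']
    ring
  -- Phi
  have hne : (1:ℝ) - lam ≠ 0 := h1l.ne'
  have Phi : Tendsto (fun x => 2 * Real.log (f x / deriv f x) -
      ((2 * lam / (1 - lam)) * Real.log (Real.log (f x)) +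
        (2 * lam / (1 - lam)) * Real.log (1 - lam) -
        (2 / (1 - lam)) * Real.log ν)) atTop (𝓝 0) := by
    have h := (L1.const_mul 2).sub (L2.const_mul (2 * lam / (1 - lam)))
    norm_num at h
    refine h.congr fun x => ?_
    field_simp
    ring
  -- facts about g
  have hsurj : ∀ y, f x₀ ≤ y → ∃ x, x₀ ≤ x ∧ f x = y := by
    intro y hy
    obtain ⟨b, hb1, hb2⟩ := ((htop.eventually_ge_atTop y).and (eventually_ge_atTop x₀)).exists
    have hc : ContinuousOn f (Icc x₀ b) := fun z hz =>
      (hdiff z hz.1).continuousAt.continuousWithinAt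
    obtain ⟨x, hx, hfx⟩ := intermediate_value_Icc hb2 hc ⟨hy, hb1⟩
    exact ⟨x, hx.1, hfx⟩
  have hgspec : ∀ y, f x₀ ≤ y → x₀ ≤ g y ∧ f (g y) = y := by
    intro y hy
    obtain ⟨x, hx, hfx⟩ := hsurj y hy
    have hgy : g y = x := by rw [← hfx, hg.1 x hx]
    rw [hgy, hfx]
    exact ⟨hx, rfl⟩
  have hgtop : Tendsto g atTop atTop := by
    rw [tendsto_atTop_atTop]
    intro b
    refine ⟨max (f x₀) (f (max b x₀)), fun y hy => ?_⟩
    have h1 : f x₀ ≤ y := le_trans (le_max_left _ _) hy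
    obtain ⟨hgx, hfg⟩ := hgspec y h1
    have h2 : f (max b x₀) ≤ f (g y) := by
      rw [hfg]; exact le_trans (le_max_right _ _) hy
    have h3 := (hmono.le_iff_le (mem_Ici.2 (le_max_right b x₀)) (mem_Ici.2 hgx)).1 h2
    exact le_trans (le_max_left b x₀) h3
  have hderivg : ∀ y, f x₀ < y → deriv g y = (deriv f (g y))⁻¹ := by
    intro y hy
    obtain ⟨hgx, hfg⟩ := hgspec y hy.le
    have hxgt : x₀ < g y := by
      rcases lt_or_eq_of_le hgx with h | h
      · exact h
      · rw [← h] at hfg; linarith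
    have hcont : ContinuousAt g y := by
      have : Tendsto g (𝓝 y) (𝓝 (g y)) := by
        rw [tendsto_order]
        constructor
        · intro c hc
          have hc' : max c x₀ < g y := max_lt hc hxgt
          have hfc : f (max c x₀) < y := by
            rw [← hfg]
            exact hmono (mem_Ici.2 (le_max_right c x₀)) (mem_Ici.2 hgx) hc'
          filter_upwards [eventually_gt_nhds hfc, eventually_gt_nhds hy] with z h1 h2
          obtain ⟨hgz, hfgz⟩ := hgspec z h2.le
          have h4 : max c x₀ < g z :=
            (hmono.lt_iff_lt (mem_Ici.2 (le_max_right c x₀)) (mem_Ici.2 hgz)).1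
              (by rw [hfgz]; exact h1)
          exact lt_of_le_of_lt (le_max_left c x₀) h4
        · intro c hc
          have hcx : x₀ ≤ c := le_trans hgx hc.le
          have hfc : y < f c := by
            rw [← hfg]
            exact hmono (mem_Ici.2 hgx) (mem_Ici.2 hcx) hc
          filter_upwards [eventually_lt_nhds hfc, eventually_gt_nhds hy] with z h1 h2
          obtain ⟨hgz, hfgz⟩ := hgspec z h2.le
          exact (hmono.lt_iff_lt (mem_Ici.2 hgz) (mem_Ici.2 hcx)).1 (by rw [hfgz]; exact h1)
      exact this
    have hfd : HasDerivAt f (deriv f (g y)) (g y) := (hdiff _ hgx).hasDerivAt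
    have hfg' : ∀ᶠ z in 𝓝 y, f (g z) = z := by
      filter_upwards [eventually_gt_nhds hy] with z hz
      exact (hgspec z hz.le).2
    exact (HasDerivAt.of_local_left_inverse hcont hfd (hpos _ hgx).ne' hfg').deriv
  -- final assembly
  have hinv : Tendsto (fun ε : ℝ => 1 / ε) (𝓝[>] (0:ℝ)) atTop := by
    simpa [one_div] using tendsto_inv_nhdsGT_zero
  have hcomp : Tendsto (fun ε : ℝ => g (1 / ε)) (𝓝[>] (0:ℝ)) atTop := hgtop.comp hinv
  have final := Phi.comp hcomp
  apply final.congr'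
  filter_upwards [self_mem_nhdsWithin, hinv.eventually (eventually_gt_atTop (f x₀))]
    with ε hε hby
  have hε0 : (0:ℝ) < ε := hε
  obtain ⟨hgx, hfg⟩ := hgspec (1 / ε) hby.le
  have hd := hderivg (1 / ε) hby
  have hf' := hpos _ hgx
  have key : deriv g (1 / ε) / ε = f (g (1 / ε)) / deriv f (g (1 / ε)) := by
    rw [hd, hfg]
    field_simp
  have keylog : Real.log (1 / ε) = Real.log (f (g (1 / ε))) := by rw [hfg]
  simp only [Function.comp_apply]
  rw [key, keylog]
end

section
/- Let f satisfy the growth condition with exponent λ ∈ (0, 1]. Let τ(ε) and Δ(ε) be functions of ε > 0 with τ(ε) → ∞, Δ(ε) ≥ 0, and Δ(ε)·τ(ε)^{−λ} → 0 as ε → 0⁺. Then, as ε → 0⁺, uniformly over ω ∈ [0, 2], f(τ(ε) + ω·Δ(ε)) ~ f(τ(ε)) and f'(τ(ε) + ω·Δ(ε)) ~ f'(τ(ε)); that is, sup_{ω∈[0,2]} |f(τ(ε)+ωΔ(ε))/f(τ(ε)) − 1| → 0 and sup_{ω∈[0,2]} |f'(τ(ε)+ωΔ(ε))/f'(τ(ε))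 − 1| → 0. -/
open Filter Set Topology

set_option maxHeartbeats 2000000

/-- If `f` satisfies the growth condition with exponent `lam ∈ (0,1]`, `τ(ε) → ∞`,
`Δ(ε) ≥ 0` and `Δ(ε)·τ(ε)^(-lam) → 0` as `ε → 0⁺`, then uniformly over `ω ∈ [0,2]`
we have `f(τ(ε)+ωΔ(ε)) ~ f(τ(ε))` and `f'(τ(ε)+ωΔ(ε)) ~ f'(τ(ε))`. -/
theorem uniform_equiv_on_window (f : ℝ → ℝ) (lam x₀ : ℝ) (τ Δ : ℝ → ℝ)
    (hlam : lam ∈ Set.Ioc (0 : ℝ) 1)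
    (hf : GrowthCondition f lam x₀)
    (hτ : Tendsto τ (𝓝[>] (0 : ℝ)) atTop)
    (hΔ : ∀ ε : ℝ, 0 < ε → 0 ≤ Δ ε)
    (hΔτ : Tendsto (fun ε => Δ ε * τ ε ^ (-lam)) (𝓝[>] (0 : ℝ)) (𝓝 0)) :
    ∀ δ > (0 : ℝ), ∀ᶠ ε in 𝓝[>] (0 : ℝ), ∀ ω ∈ Set.Icc (0 : ℝ) 2,
      |f (τ ε + ω * Δ ε) / f (τ ε) - 1| < δ ∧
      |deriv f (τ ε + ω * Δ ε) / deriv f (τ ε) - 1| < δ := by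
  obtain ⟨hd1, hd2, hmono, htop, hpos, c₁, c₂, hc₁, hc₁₂, hbnd⟩ := hf
  obtain ⟨lam_pos, lam_le⟩ := hlam
  have hc₂ : 0 < c₂ := hc₁.trans_le hc₁₂
  obtain ⟨X, hX⟩ := eventually_atTop.mp hbnd
  set A : ℝ := max (max x₀ X) 1 with hAdef
  have hAx₀ : x₀ ≤ A := le_max_of_le_left (le_max_left _ _)
  have hAX : X ≤ A := le_max_of_le_left (le_max_right _ _)
  have hA1 : (1:ℝ) ≤ A := le_max_right _ _
  -- basic facts for x ≥ A
  have hmem : ∀ x : ℝ, A ≤ x → x ∈ Ici x₀ := fun x hx => le_trans hAx₀ hx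
  have hxpos : ∀ x : ℝ, A ≤ x → 0 < x := fun x hx => lt_of_lt_of_le one_pos (hA1.trans hx)
  have hfd1 : ∀ x : ℝ, A ≤ x → DifferentiableAt ℝ f x := fun x hx => hd1 x (hmem x hx)
  have hfd2 : ∀ x : ℝ, A ≤ x → DifferentiableAt ℝ (deriv f) x := fun x hx => hd2 x (hmem x hx)
  have hfp : ∀ x : ℝ, A ≤ x → 0 < deriv f x := fun x hx => hpos x (hmem x hx)
  have hbd : ∀ x : ℝ, A ≤ x → c₁ * x ^ (-lam) ≤ deriv (deriv f) x / deriv f x ∧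
      deriv (deriv f) x / deriv f x ≤ c₂ * x ^ (-lam) := fun x hx => hX x (hAX.trans hx)
  -- log-MVT ratio bound for deriv f
  have hratio : ∀ a b : ℝ, A ≤ a → a ≤ b →
      deriv f a ≤ deriv f b ∧ deriv f b ≤ deriv f a * Real.exp (c₂ * ((b - a) * a ^ (-lam))) := by
    intro a b hAa hab
    rcases eq_or_lt_of_le hab with rfl | hab'
    · constructor
      · exact le_refl _
      · simp
    · obtain ⟨c, hc, hceq⟩ :
          ∃ c ∈ Ioo a b, Real.log (deriv f b) - Real.log (deriv f a)
            = (deriv (deriv f) c / deriv f c) * (b - a) := by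
        have hcont : ContinuousOn (fun x => Real.log (deriv f x)) (Icc a b) := by
          intro x hx
          have hAx : A ≤ x := hAa.trans hx.1
          exact (((hfd2 x hAx).continuousAt).log (hfp x hAx).ne').continuousWithinAt
        have hder : ∀ x ∈ Ioo a b, HasDerivAt (fun x => Real.log (deriv f x))
            (deriv (deriv f) x / deriv f x) x := by
          intro x hx
          have hAx : A ≤ x := hAa.trans hx.1.le
          exact (hfd2 x hAx).hasDerivAt.log (hfp x hAx).ne'
        obtain ⟨c, hc1, hc2⟩ := exists_hasDerivAt_eq_slope _ _ hab' hcont hder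
        refine ⟨c, hc1, ?_⟩
        rw [hc2, div_mul_cancel₀ _ (sub_ne_zero.2 hab'.ne')]
      have hAc : A ≤ c := hAa.trans hc.1.le
      have hb1 := (hbd c hAc).1
      have hb2 := (hbd c hAc).2
      have hcpow : c ^ (-lam) ≤ a ^ (-lam) :=
        Real.rpow_le_rpow_of_nonpos (hxpos a hAa) hc.1.le (neg_nonpos.2 lam_pos.le)
      have hcpos' : (0:ℝ) < c₁ * c ^ (-lam) :=
        mul_pos hc₁ (Real.rpow_pos_of_pos (hxpos c hAc) _)
      have hnn : 0 ≤ Real.log (deriv f b) - Real.log (deriv f a) := by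
        rw [hceq]
        exact mul_nonneg (le_trans hcpos'.le hb1) (by linarith)
      have hub : Real.log (deriv f b) - Real.log (deriv f a) ≤ c₂ * ((b - a) * a ^ (-lam)) := by
        rw [hceq]
        have : deriv (deriv f) c / deriv f c ≤ c₂ * a ^ (-lam) :=
          hb2.trans (by nlinarith)
        nlinarith
      have hexpa := Real.exp_log (hfp a hAa)
      have hexpb := Real.exp_log (hfp b (hAa.trans hab))
      constructor
      · rw [← hexpa, ← hexpb]
        exact Real.exp_le_exp.2 (by linarith)
      · calc deriv f b = Real.exp (Real.log (deriv f a) +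
              (Real.log (deriv f b) - Real.log (deriv f a))) := by
              rw [show Real.log (deriv f a) + (Real.log (deriv f b) - Real.log (deriv f a))
                = Real.log (deriv f b) by ring, hexpb]
          _ ≤ Real.exp (Real.log (deriv f a) + c₂ * ((b - a) * a ^ (-lam))) :=
              Real.exp_le_exp.2 (by linarith)
          _ = deriv f a * Real.exp (c₂ * ((b - a) * a ^ (-lam))) := by
              rw [Real.exp_add, hexpa]
  -- the auxiliary function h and its antitonicity
  set h : ℝ → ℝ := fun x => deriv f x * x ^ lam - (c₂ + 1) * f x with hhdef
  have hhder : ∀ x : ℝ, A ≤ x → HasDerivAt h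
      (deriv (deriv f) x * x ^ lam + deriv f x * (lam * x ^ (lam - 1)) - (c₂ + 1) * deriv f x) x := by
    intro x hx
    exact (((hfd2 x hx).hasDerivAt.mul
      (Real.hasDerivAt_rpow_const (Or.inl (hxpos x hx).ne'))).sub
      ((hfd1 x hx).hasDerivAt.const_mul (c₂ + 1)))
  have hanti : AntitoneOn h (Ici A) := by
    apply antitoneOn_of_deriv_nonpos (convex_Ici A)
    · intro x hx
      exact ((hhder x hx).differentiableAt.continuousAt).continuousWithinAt
    · intro x hx
      rw [interior_Ici] at hx
      exact ((hhder x hx.le).differentiableAt).differentiableWithinAt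
    · intro x hx
      rw [interior_Ici] at hx
      rw [(hhder x hx.le).deriv]
      have hxA : A ≤ x := hx.le
      have hx1 : (1:ℝ) ≤ x := hA1.trans hxA
      have hxp : (0:ℝ) < x := hxpos x hxA
      have hfpx := hfp x hxA
      have hb2 := (hbd x hxA).2
      -- deriv (deriv f) x ≤ c₂ * x^(-lam) * deriv f x
      have h1 : deriv (deriv f) x ≤ c₂ * x ^ (-lam) * deriv f x := by
        rw [div_le_iff₀ hfpx] at hb2
        exact hb2
      have hpowmul : x ^ (-lam) * x ^ lam = 1 := by
        rw [← Real.rpow_add hxp]; simp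
      have h2 : deriv (deriv f) x * x ^ lam ≤ c₂ * deriv f x := by
        have hq : (0:ℝ) ≤ x ^ lam := (Real.rpow_pos_of_pos hxp _).le
        calc deriv (deriv f) x * x ^ lam ≤ c₂ * x ^ (-lam) * deriv f x * x ^ lam :=
              mul_le_mul_of_nonneg_right h1 hq
          _ = c₂ * deriv f x * (x ^ (-lam) * x ^ lam) := by ring
          _ = c₂ * deriv f x := by rw [hpowmul, mul_one]
      have h3 : lam * x ^ (lam - 1) ≤ 1 := by
        have := Real.rpow_le_one_of_one_le_of_nonpos hx1 (by linarith : lam - 1 ≤ 0)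
        nlinarith
      nlinarith
  -- threshold B
  obtain ⟨B₁, hB₁⟩ := eventually_atTop.mp (htop.eventually_ge_atTop (max (h A) 1))
  set B : ℝ := max A B₁ with hBdef
  have hBA : A ≤ B := le_max_left _ _
  have hBfacts : ∀ x : ℝ, B ≤ x → 1 ≤ f x ∧ deriv f x * x ^ lam ≤ (c₂ + 2) * f x := by
    intro x hx
    have hAx : A ≤ x := hBA.trans hx
    have hfx := hB₁ x ((le_max_right _ _).trans hx)
    have hfx1 : 1 ≤ f x := le_trans (le_max_right _ _) hfx
    have hfxh : h A ≤ f x := le_trans (le_max_left _ _) hfx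
    have hha := hanti (self_mem_Ici) hAx hAx
    simp only [hhdef] at hha hfxh
    exact ⟨hfx1, by linarith⟩
  -- MVT for f
  have hfMVT : ∀ a b : ℝ, A ≤ a → a < b → f b ≤ f a + deriv f b * (b - a) := by
    intro a b hAa hab
    have hcont : ContinuousOn f (Icc a b) := fun x hx =>
      ((hfd1 x (hAa.trans hx.1)).continuousAt).continuousWithinAt
    have hdiff : DifferentiableOn ℝ f (Ioo a b) := fun x hx =>
      (hfd1 x (hAa.trans hx.1.le)).differentiableWithinAt
    obtain ⟨c, hc, hceq⟩ := exists_deriv_eq_slope f hab hcont hdiff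
    have hle : deriv f c ≤ deriv f b := (hratio c b (hAa.trans hc.1.le) hc.2.le).1
    have : f b - f a = deriv f c * (b - a) := by
      rw [hceq, div_mul_cancel₀ _ (sub_ne_zero.2 hab.ne')]
    nlinarith
  -- main part
  intro δ hδ
  have hev1 : ∀ᶠ ε in 𝓝[>] (0:ℝ),
      max (Real.exp (2*c₂*(Δ ε * τ ε ^ (-lam))) - 1)
        (2*(c₂+2)*(Δ ε * τ ε ^ (-lam))*Real.exp (2*c₂*(Δ ε * τ ε ^ (-lam)))) < δ := by
    have hG : Continuous (fun v : ℝ => max (Real.exp (2*c₂*v) - 1) (2*(c₂+2)*v*Real.exp (2*c₂*v))) := by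
      fun_prop
    have := (hG.continuousAt (x := 0)).tendsto.comp hΔτ
    simp only [Real.exp_zero, mul_zero, zero_mul] at this
    norm_num at this
    exact this.eventually_lt_const hδ
  have hev2 : ∀ᶠ ε in 𝓝[>] (0:ℝ), B ≤ τ ε := hτ.eventually_ge_atTop B
  have hev3 : ∀ᶠ ε in 𝓝[>] (0:ℝ), (0:ℝ) < ε := self_mem_nhdsWithin
  filter_upwards [hev1, hev2, hev3] with ε h1 h2 h3
  intro ω hω
  obtain ⟨hω0, hω2⟩ := hω
  set t := τ ε
  set D := Δ ε with hDdef
  have hD : 0 ≤ D := hΔ ε h3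
  have hAt : A ≤ t := hBA.trans h2
  have htp : 0 < t := hxpos t hAt
  set u : ℝ := D * t ^ (-lam) with hudef
  have hup : (0:ℝ) ≤ t ^ (-lam) := (Real.rpow_pos_of_pos htp _).le
  have hu : 0 ≤ u := mul_nonneg hD hup
  set G : ℝ := max (Real.exp (2*c₂*u) - 1) (2*(c₂+2)*u*Real.exp (2*c₂*u)) with hGdef
  have hGδ : G < δ := h1
  clear_value G
  clear_value u
  clear_value D
  clear_value t
  have hωD : 0 ≤ ω * D := mul_nonneg hω0 hD
  have hle1 : t ≤ t + ω * D := by linarith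
  have hle2 : t + ω * D ≤ t + 2 * D := by nlinarith
  obtain ⟨hft1, hftb⟩ := hBfacts t h2
  have hftp : 0 < f t := lt_of_lt_of_le one_pos hft1
  have hfpt := hfp t hAt
  -- the exponent comparison
  have hexp_le : ∀ s : ℝ, 0 ≤ s → s ≤ 2 * D →
      Real.exp (c₂ * (s * t ^ (-lam))) ≤ Real.exp (2 * c₂ * u) := by
    intro s hs hs2
    apply Real.exp_le_exp.2
    rw [hudef]
    have h9 := mul_le_mul_of_nonneg_right (mul_le_mul_of_nonneg_left hs2 hc₂.le) hup
    nlinarith [h9]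
  have hE1 : (1:ℝ) ≤ Real.exp (2 * c₂ * u) :=
    Real.one_le_exp (by positivity)
  -- deriv f part
  constructor
  · -- f part
    have hmono1 : f t ≤ f (t + ω * D) :=
      (hmono.monotoneOn) (hmem t hAt) (hmem _ (hAt.trans hle1)) hle1
    have hmono2 : f (t + ω * D) ≤ f (t + 2 * D) :=
      (hmono.monotoneOn) (hmem _ (hAt.trans hle1)) (hmem _ (by linarith)) hle2
    have hup2 : f (t + 2 * D) ≤ f t + G * f t := by
      rcases eq_or_lt_of_le (by linarith : t ≤ t + 2 * D) with heq | hlt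
      · have hG0 : (0:ℝ) ≤ G := by
          rw [hGdef]
          exact le_trans (by linarith : (0:ℝ) ≤ Real.exp (2*c₂*u) - 1) (le_max_left _ _)
        rw [← heq]
        have := mul_nonneg hG0 hftp.le
        linarith
      · have hM := hfMVT t (t + 2*D) hAt hlt
        have hr := (hratio t (t + 2*D) hAt (by linarith)).2
        have hexp : Real.exp (c₂ * ((t + 2*D - t) * t ^ (-lam))) ≤ Real.exp (2 * c₂ * u) := by
          apply hexp_le
          · linarith
          · linarith
        have hd2D : deriv f (t + 2*D) ≤ deriv f t * Real.exp (2 * c₂ * u) := by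
          calc deriv f (t + 2*D) ≤ deriv f t * Real.exp (c₂ * ((t + 2*D - t) * t ^ (-lam))) := hr
            _ ≤ deriv f t * Real.exp (2 * c₂ * u) :=
                mul_le_mul_of_nonneg_left hexp hfpt.le
        -- deriv f t ≤ (c₂+2) * f t * t^(-lam)
        have hd_t : deriv f t ≤ (c₂ + 2) * f t * t ^ (-lam) := by
          have hpowmul : t ^ (-lam) * t ^ lam = 1 := by
            rw [← Real.rpow_add htp]; simp
          calc deriv f t = deriv f t * t ^ lam * t ^ (-lam) := by
                rw [mul_assoc, mul_comm (t ^ lam), hpowmul, mul_one]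
            _ ≤ (c₂ + 2) * f t * t ^ (-lam) := mul_le_mul_of_nonneg_right hftb hup
        have hGge : 2*(c₂+2)*u*Real.exp (2*c₂*u) ≤ G := by
          rw [hGdef]; exact le_max_right _ _
        have hEp : 0 < Real.exp (2*c₂*u) := Real.exp_pos _
        have key : deriv f (t + 2*D) * (2*D) ≤ G * f t := by
          have hED : (0:ℝ) ≤ Real.exp (2*c₂*u) * (2*D) := mul_nonneg hEp.le (by linarith)
          have h5 : deriv f (t + 2*D) * (2*D) ≤ deriv f t * (Real.exp (2*c₂*u) * (2*D)) := by
            have := mul_le_mul_of_nonneg_right hd2D (by linarith : (0:ℝ) ≤ 2*D)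
            calc deriv f (t + 2*D) * (2*D) ≤ deriv f t * Real.exp (2*c₂*u) * (2*D) := this
              _ = deriv f t * (Real.exp (2*c₂*u) * (2*D)) := by ring
          have h6 : deriv f t * (Real.exp (2*c₂*u) * (2*D)) ≤
              (c₂ + 2) * f t * t ^ (-lam) * (Real.exp (2*c₂*u) * (2*D)) :=
            mul_le_mul_of_nonneg_right hd_t hED
          have h7 : (c₂ + 2) * f t * t ^ (-lam) * (Real.exp (2*c₂*u) * (2*D))
              = 2*(c₂+2)*u*Real.exp (2*c₂*u) * f t := by
            rw [hudef]; ring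
          calc deriv f (t + 2*D) * (2*D)
              ≤ (c₂ + 2) * f t * t ^ (-lam) * (Real.exp (2*c₂*u) * (2*D)) := le_trans h5 h6
            _ = 2*(c₂+2)*u*Real.exp (2*c₂*u) * f t := h7
            _ ≤ G * f t := mul_le_mul_of_nonneg_right hGge hftp.le
        have : t + 2*D - t = 2*D := by ring
        rw [this] at hM
        linarith
    have hfrac1 : 1 ≤ f (t + ω * D) / f t := (one_le_div hftp).2 hmono1
    have hfrac2 : f (t + ω * D) / f t ≤ 1 + G := by
      rw [div_le_iff₀ hftp]
      nlinarith
    rw [abs_of_nonneg (by linarith)]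
    linarith
  · -- deriv f part
    obtain ⟨hr1, hr2⟩ := hratio t (t + ω * D) hAt hle1
    have hexp : Real.exp (c₂ * ((t + ω*D - t) * t ^ (-lam))) ≤ Real.exp (2 * c₂ * u) := by
      apply hexp_le
      · linarith
      · nlinarith
    have hfrac1 : 1 ≤ deriv f (t + ω * D) / deriv f t := (one_le_div hfpt).2 hr1
    have hfrac2 : deriv f (t + ω * D) / deriv f t ≤ Real.exp (2 * c₂ * u) := by
      rw [div_le_iff₀ hfpt]
      calc deriv f (t + ω * D) ≤ deriv f t * Real.exp (c₂ * ((t + ω*D - t) * t ^ (-lam))) := hr2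
        _ ≤ deriv f t * Real.exp (2 * c₂ * u) := mul_le_mul_of_nonneg_left hexp hfpt.le
        _ = Real.exp (2 * c₂ * u) * deriv f t := by ring
    have hGge : Real.exp (2*c₂*u) - 1 ≤ G := by
      rw [hGdef]; exact le_max_left _ _
    rw [abs_of_nonneg (by linarith)]
    linarith
end

section
/- Let f satisfy the growth condition with exponent λ ∈ (0, 1]. Fix real numbers α ≠ 0 and β. Let γ(ε) and τ₀(ε) be positive functions with γ(ε) → ∞ and τ₀(ε) → ∞ as ε → 0⁺, satisfying f(τ₀(ε))·ε = γ(ε) + o(1/γ(ε)). Let R̃(ε) be any function with R̃(ε) = o(ln γ(ε)), and define Δ(ε) := [ (2/α + β − 2)·ln γ(ε)/γ(ε) + R̃(ε)/γ(ε) ] / (f'(τ₀(ε))·ε). Then for every function η(ε) with η(ε) = o(1/(f'(τ₀(ε))·ε·γ(ε))), one has, as ε → 0⁺, f(τ₀(ε) + Δ(ε) + η(ε))·ε = γ(ε) + (2/α + β − 2)·ln γ(ε)/γ(ε) + R̃(ε)/γ(ε) + o(1/γ(ε)). -/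
open Filter Set Topology

set_option maxHeartbeats 1000000 in
lemma pointwise_bound (f : ℝ → ℝ) (lam x₀ c₁ c₂ X₁ K C₀ D C₁ C₂ : ℝ)
    (hlam0 : 0 < lam) (hlam1 : lam ≤ 1)
    (hc₁ : 0 < c₁) (hc₂ : 0 < c₂)
    (hK : K = 2 / c₁) (hC₁ : C₁ = 2 * K * (|D| + 2)) (hC₂ : C₂ = 6 * c₂ * C₁ * (|D| + 2))
    (hX₁1 : 1 ≤ X₁) (hX₁x₀ : x₀ ≤ X₁)
    (hfd : ∀ x ∈ Set.Ici x₀, DifferentiableAt ℝ f x)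
    (hfd2 : ∀ x ∈ Set.Ici x₀, DifferentiableAt ℝ (deriv f) x)
    (hf'pos : ∀ x ∈ Set.Ici x₀, 0 < deriv f x)
    (hbnd : ∀ x, X₁ ≤ x → c₁ * x ^ (-lam) ≤ deriv (deriv f) x / deriv f x ∧
        deriv (deriv f) x / deriv f x ≤ c₂ * x ^ (-lam))
    (hLA : ∀ x, X₁ ≤ x → f x ≤ K * (x ^ lam * deriv f x) + C₀)
    (ε t g Δv ηv Rv : ℝ)
    (hε : 0 < ε) (hg : 4 ≤ g) (hlog : 1 ≤ Real.log g)
    (ht : 2 * X₁ + 2 ≤ t)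
    (hfg : |(f t * ε - g) * g| ≤ 1)
    (hηb : |ηv * (deriv f t * ε * g)| ≤ 1)
    (hRb : |Rv| ≤ Real.log g)
    (hsm : Real.log g / g ≤ min (1 / (2 * C₁)) (1 / (2 * (c₂ * C₁))))
    (hC0 : |C₀| * ε ≤ 1)
    (hΔv : Δv = (D * Real.log g / g + Rv / g) / (deriv f t * ε)) :
    |ε * g * (f (t + (Δv + ηv)) - f t - deriv f t * (Δv + ηv))| ≤
      C₂ * (Real.log g / g * (Real.log g / g)) := by
  have hg0 : (0:ℝ) < g := by linarith
  have hX₁t : X₁ ≤ t := by linarith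
  have ht0 : (0:ℝ) < t := by linarith
  have hx₀t : x₀ ≤ t := le_trans hX₁x₀ hX₁t
  have hF't : 0 < deriv f t := hf'pos t hx₀t
  have hF'ε : 0 < deriv f t * ε := by positivity
  have hlogg0 : 0 < Real.log g := by linarith
  set L := Real.log g / g with hL
  have hL0 : 0 < L := by positivity
  have hKpos : 0 < K := by rw [hK]; positivity
  have hC₁pos : 0 < C₁ := by rw [hC₁]; positivity
  have htlam0 : 0 < t ^ lam := Real.rpow_pos_of_pos ht0 lam
  -- f t * ε is close to g
  have hfge : g - 1 ≤ f t * ε := by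
    rw [abs_mul, abs_of_pos hg0] at hfg
    have h1 : |f t * ε - g| ≤ 1 := by nlinarith [abs_nonneg (f t * ε - g)]
    linarith [(abs_le.mp h1).1]
  -- lower bound on deriv f t * ε
  have hP : g / 2 ≤ K * (t ^ lam * (deriv f t * ε)) := by
    have h1 := hLA t hX₁t
    have h2 := mul_le_mul_of_nonneg_right h1 hε.le
    have h3 : C₀ * ε ≤ 1 := by
      have := mul_le_mul_of_nonneg_right (le_abs_self C₀) hε.le
      linarith
    have h4 : (K * (t ^ lam * deriv f t) + C₀) * ε =
        K * (t ^ lam * (deriv f t * ε)) + C₀ * ε := by ring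
    rw [h4] at h2
    linarith
  -- bound on the shift A
  have hA : |D * Real.log g / g + Rv / g| ≤ (|D| + 1) * L := by
    have h1 : |D * Real.log g + Rv| ≤ (|D| + 1) * Real.log g := by
      calc |D * Real.log g + Rv| ≤ |D * Real.log g| + |Rv| := abs_add_le _ _
        _ ≤ |D| * Real.log g + Real.log g := by
            rw [abs_mul, abs_of_pos hlogg0]; linarith
        _ = (|D| + 1) * Real.log g := by ring
    have h5 : D * Real.log g / g + Rv / g = (D * Real.log g + Rv) / g := by ring
    rw [h5, abs_div, abs_of_pos hg0, hL, ← mul_div_assoc]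
    gcongr
  have hΔabs : deriv f t * ε * |Δv| ≤ (|D| + 1) * L := by
    rw [hΔv, abs_div, abs_of_pos hF'ε]
    have h6 : deriv f t * ε * (|D * Real.log g / g + Rv / g| / (deriv f t * ε)) =
        |D * Real.log g / g + Rv / g| := by field_simp
    rw [h6]; exact hA
  have hηabs : deriv f t * ε * |ηv| ≤ 1 / g := by
    rw [abs_mul, abs_of_pos (by positivity : (0:ℝ) < deriv f t * ε * g)] at hηb
    rw [le_div_iff₀ hg0]
    calc deriv f t * ε * |ηv| * g = |ηv| * (deriv f t * ε * g) := by ring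
      _ ≤ 1 := hηb
  have hL1 : 1 / g ≤ L := by rw [hL]; gcongr
  have hs1 : deriv f t * ε * |Δv + ηv| ≤ (|D| + 2) * L := by
    have h7 := mul_le_mul_of_nonneg_left (abs_add_le Δv ηv) hF'ε.le
    have h7' : deriv f t * ε * (|Δv| + |ηv|) =
        deriv f t * ε * |Δv| + deriv f t * ε * |ηv| := by ring
    linarith
  have hs2 : |Δv + ηv| ≤ t ^ lam * (C₁ * (L / g)) := by
    have h6 : |Δv + ηv| * g ≤ (|D| + 2) * L * (2 * K * t ^ lam) := by
      calc |Δv + ηv| * g ≤ |Δv + ηv| * (2 * K * (t ^ lam * (deriv f t * ε))) :=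
            mul_le_mul_of_nonneg_left (by linarith) (abs_nonneg _)
        _ = (2 * K * t ^ lam) * (deriv f t * ε * |Δv + ηv|) := by ring
        _ ≤ (2 * K * t ^ lam) * ((|D| + 2) * L) := by
            apply mul_le_mul_of_nonneg_left hs1 (by positivity)
        _ = (|D| + 2) * L * (2 * K * t ^ lam) := by ring
    have h8 := (le_div_iff₀ hg0).mpr h6
    have h9 : (|D| + 2) * L * (2 * K * t ^ lam) / g = t ^ lam * (C₁ * (L / g)) := by
      rw [hC₁]; ring
    linarith [h9 ▸ h8]
  have hLg : L / g ≤ L := div_le_self hL0.le (by linarith)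
  have hC₁L : C₁ * (L / g) ≤ 1 / 2 := by
    have h10 : L ≤ 1 / (2 * C₁) := le_trans hsm (min_le_left _ _)
    calc C₁ * (L / g) ≤ C₁ * (1 / (2 * C₁)) :=
          mul_le_mul_of_nonneg_left (le_trans hLg h10) hC₁pos.le
      _ = 1 / 2 := by field_simp; try ring
  have htlamt : t ^ lam ≤ t := by
    calc t ^ lam ≤ t ^ (1:ℝ) := Real.rpow_le_rpow_of_exponent_le (by linarith) hlam1
      _ = t := Real.rpow_one t
  have hs3 : |Δv + ηv| ≤ t / 2 := by
    calc |Δv + ηv| ≤ t ^ lam * (C₁ * (L / g)) := hs2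
      _ ≤ t * (1 / 2) := mul_le_mul htlamt hC₁L (by positivity) (by linarith)
      _ = t / 2 := by ring
  set s := Δv + ηv with hs
  have hSsub : ∀ y ∈ Set.uIcc t (t + s), t / 2 ≤ y ∧ X₁ ≤ y ∧ x₀ ≤ y ∧ 0 < y := by
    intro y hy
    have habs := abs_le.mp hs3
    have h12 : t / 2 ≤ y := by
      rcases Set.mem_uIcc.mp hy with ⟨h, _⟩ | ⟨h, _⟩ <;> linarith [habs.1]
    refine ⟨h12, by linarith, by linarith, by linarith⟩
  set u := 2 * c₂ * (t ^ (-lam) * |s|) with hu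
  have htlaminv : t ^ (-lam) * t ^ lam = 1 := by
    rw [← Real.rpow_add ht0]; simp
  have htnlam0 : (0:ℝ) < t ^ (-lam) := Real.rpow_pos_of_pos ht0 _
  have hu0 : 0 ≤ u := by positivity
  have hu_le : u ≤ 2 * (c₂ * C₁) * (L / g) := by
    calc u ≤ 2 * c₂ * (t ^ (-lam) * (t ^ lam * (C₁ * (L / g)))) := by
          rw [hu]; gcongr
      _ = (t ^ (-lam) * t ^ lam) * (2 * c₂ * (C₁ * (L / g))) := by ring
      _ = 2 * (c₂ * C₁) * (L / g) := by rw [htlaminv]; ring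
  have hu1 : u ≤ 1 := by
    have h13 : L ≤ 1 / (2 * (c₂ * C₁)) := le_trans hsm (min_le_right _ _)
    have h14 : 2 * (c₂ * C₁) * (L / g) ≤ 2 * (c₂ * C₁) * L :=
      mul_le_mul_of_nonneg_left hLg (by positivity)
    have h15 : 2 * (c₂ * C₁) * L ≤ 2 * (c₂ * C₁) * (1 / (2 * (c₂ * C₁))) :=
      mul_le_mul_of_nonneg_left h13 (by positivity)
    have h16 : 2 * (c₂ * C₁) * (1 / (2 * (c₂ * C₁))) = 1 := by field_simp
    linarith
  -- MVT on log ∘ deriv f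
  have hlogdiff : ∀ y ∈ Set.uIcc t (t + s),
      |Real.log (deriv f y) - Real.log (deriv f t)| ≤ u := by
    intro y hy
    have hderiv : ∀ z ∈ Set.uIcc t (t + s),
        HasDerivWithinAt (fun w => Real.log (deriv f w))
          (deriv (deriv f) z / deriv f z) (Set.uIcc t (t + s)) z := by
      intro z hz
      obtain ⟨-, -, hzx₀, -⟩ := hSsub z hz
      exact (((hfd2 z hzx₀).hasDerivAt).log (ne_of_gt (hf'pos z hzx₀))).hasDerivWithinAt
    have hbound : ∀ z ∈ Set.uIcc t (t + s),
        ‖deriv (deriv f) z / deriv f z‖ ≤ 2 * c₂ * t ^ (-lam) := by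
      intro z hz
      obtain ⟨hz2, hzX₁, -, hz0⟩ := hSsub z hz
      have h8 := hbnd z hzX₁
      have hq0 : 0 ≤ deriv (deriv f) z / deriv f z :=
        le_trans (by positivity) h8.1
      rw [Real.norm_eq_abs, abs_of_nonneg hq0]
      have h9 : z ^ (-lam) ≤ (t / 2) ^ (-lam) :=
        Real.rpow_le_rpow_of_nonpos (by linarith) hz2 (by linarith)
      have h10 : (t / 2) ^ (-lam) ≤ 2 * t ^ (-lam) := by
        have h2lam : (2:ℝ) ^ lam ≤ 2 := by
          calc (2:ℝ) ^ lam ≤ (2:ℝ) ^ (1:ℝ) :=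
                Real.rpow_le_rpow_of_exponent_le one_le_two hlam1
            _ = 2 := Real.rpow_one 2
        have e1 : (t / 2) ^ (-lam) = t ^ (-lam) * (2:ℝ) ^ lam := by
          rw [div_eq_mul_inv, Real.mul_rpow ht0.le (by norm_num),
            Real.inv_rpow (by norm_num : (0:ℝ) ≤ 2),
            ← Real.rpow_neg (by norm_num : (0:ℝ) ≤ 2), neg_neg]
        rw [e1]
        calc t ^ (-lam) * (2:ℝ) ^ lam ≤ t ^ (-lam) * 2 :=
              mul_le_mul_of_nonneg_left h2lam htnlam0.le
          _ = 2 * t ^ (-lam) := by ring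
      calc deriv (deriv f) z / deriv f z ≤ c₂ * z ^ (-lam) := h8.2
        _ ≤ c₂ * (2 * t ^ (-lam)) := by gcongr; linarith
        _ = 2 * c₂ * t ^ (-lam) := by ring
    have h17 := Convex.norm_image_sub_le_of_norm_hasDerivWithin_le hderiv hbound
      (convex_uIcc _ _) (Set.left_mem_uIcc) hy
    rw [Real.norm_eq_abs, Real.norm_eq_abs] at h17
    have hyt : |y - t| ≤ |s| := by
      have habs := abs_le.mp hs3
      rcases Set.mem_uIcc.mp hy with ⟨h, h'⟩ | ⟨h, h'⟩ <;>
        · rw [abs_le]; constructor <;> linarith [neg_abs_le s, le_abs_self s]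
    calc |Real.log (deriv f y) - Real.log (deriv f t)| ≤ 2 * c₂ * t ^ (-lam) * |y - t| := h17
      _ ≤ 2 * c₂ * t ^ (-lam) * |s| := by gcongr
      _ = u := by rw [hu]; ring
  -- comparison of deriv f on the interval
  have hF'close : ∀ y ∈ Set.uIcc t (t + s),
      ‖deriv f y - deriv f t‖ ≤ 3 * u * deriv f t := by
    intro y hy
    obtain ⟨-, -, hyx₀, -⟩ := hSsub y hy
    have hF'y : 0 < deriv f y := hf'pos y hyx₀
    have hLy := hlogdiff y hy
    set Lv := Real.log (deriv f y) - Real.log (deriv f t) with hLv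
    have hexp : deriv f y = deriv f t * Real.exp Lv := by
      rw [hLv, Real.exp_sub, Real.exp_log hF'y, Real.exp_log hF't]
      field_simp
    have ha : 1 - u ≤ Real.exp (-u) := by linarith [Real.add_one_le_exp (-u)]
    have hb : Real.exp u * Real.exp (-u) = 1 := by rw [← Real.exp_add]; simp
    have hc : Real.exp u ≤ Real.exp 1 := Real.exp_le_exp.mpr hu1
    have hd : Real.exp 1 < 3 := by linarith [Real.exp_one_lt_d9]
    have he : Real.exp u * (1 - u) ≤ 1 := by
      have h30 := mul_le_mul_of_nonneg_left ha (Real.exp_pos u).le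
      calc Real.exp u * (1 - u) ≤ Real.exp u * Real.exp (-u) := h30
        _ = 1 := hb
    have h11 : Real.exp Lv - 1 ≤ 3 * u := by
      have h18 : Real.exp Lv ≤ Real.exp u := Real.exp_le_exp.mpr (le_of_abs_le hLy)
      have h31 : u * Real.exp u ≤ u * 3 :=
        mul_le_mul_of_nonneg_left (by linarith) hu0
      have he' := he
      rw [mul_one_sub] at he'
      linarith
    have h13 : 1 - Real.exp Lv ≤ 3 * u := by
      have h19 : Real.exp (-u) ≤ Real.exp Lv :=
        Real.exp_le_exp.mpr (by linarith [(abs_le.mp hLy).1])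
      linarith
    rw [Real.norm_eq_abs, hexp]
    have h20 : deriv f t * Real.exp Lv - deriv f t = deriv f t * (Real.exp Lv - 1) := by ring
    rw [h20, abs_mul, abs_of_pos hF't]
    have h21 : |Real.exp Lv - 1| ≤ 3 * u := abs_le.mpr ⟨by linarith, h11⟩
    have h32 := mul_le_mul_of_nonneg_left h21 hF't.le
    linarith
  -- MVT on f - linear part
  have hG : ∀ y ∈ Set.uIcc t (t + s),
      HasDerivWithinAt (fun z => f z - deriv f t * z)
        (deriv f y - deriv f t) (Set.uIcc t (t + s)) y := by
    intro y hy
    obtain ⟨-, -, hyx₀, -⟩ := hSsub y hy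
    have h33 := ((hfd y hyx₀).hasDerivAt).sub ((hasDerivAt_id y).const_mul (deriv f t))
    have h34 : HasDerivAt (fun z => f z - deriv f t * z) (deriv f y - deriv f t) y := by
      have h35 := h33; simp only [mul_one] at h35; exact h35
    exact h34.hasDerivWithinAt
  have hMVT2 := Convex.norm_image_sub_le_of_norm_hasDerivWithin_le hG
    (fun y hy => by simpa using hF'close y hy)
    (convex_uIcc _ _) (Set.left_mem_uIcc) (Set.right_mem_uIcc)
  rw [Real.norm_eq_abs, Real.norm_eq_abs] at hMVT2
  have h22 : f (t + s) - deriv f t * (t + s) - (f t - deriv f t * t) =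
      f (t + s) - f t - deriv f t * s := by ring
  have h23 : t + s - t = s := by ring
  rw [h22, h23] at hMVT2
  -- final assembly
  have h24 : |ε * g * (f (t + s) - f t - deriv f t * s)| =
      ε * g * |f (t + s) - f t - deriv f t * s| := by
    rw [abs_mul, abs_of_pos (by positivity : (0:ℝ) < ε * g)]
  rw [h24]
  have h25 : ε * g * |f (t + s) - f t - deriv f t * s| ≤ ε * g * (3 * u * deriv f t * |s|) := by
    gcongr
  have h26 : ε * g * (3 * u * deriv f t * |s|) = 3 * u * g * (deriv f t * ε * |s|) := by ring
  have h27 : 3 * u * g * (deriv f t * ε * |s|) ≤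
      3 * (2 * (c₂ * C₁) * (L / g)) * g * ((|D| + 2) * L) := by
    have hug : 0 ≤ 3 * u * g := by positivity
    have h28 : deriv f t * ε * |s| ≤ (|D| + 2) * L := hs1
    have h29 : 3 * u * g ≤ 3 * (2 * (c₂ * C₁) * (L / g)) * g := by gcongr
    exact mul_le_mul h29 h28 (mul_nonneg hF'ε.le (abs_nonneg s)) (by positivity)
  have h30 : 3 * (2 * (c₂ * C₁) * (L / g)) * g * ((|D| + 2) * L) = C₂ * (L * L) := by
    rw [hC₂]; field_simp; ring
  linarith


set_option maxHeartbeats 1000000 in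
lemma growth_linear_bound (f : ℝ → ℝ) (lam x₀ c₁ X₁ K : ℝ)
    (hlam0 : 0 < lam)
    (hc₁ : 0 < c₁) (hK : K = 2 / c₁) (hX₁1 : 1 ≤ X₁) (hX₁x₀ : x₀ ≤ X₁)
    (hfd : ∀ x ∈ Set.Ici x₀, DifferentiableAt ℝ f x)
    (hfd2 : ∀ x ∈ Set.Ici x₀, DifferentiableAt ℝ (deriv f) x)
    (hf'pos : ∀ x ∈ Set.Ici x₀, 0 < deriv f x)
    (hbnd : ∀ x, X₁ ≤ x → c₁ * x ^ (-lam) ≤ deriv (deriv f) x / deriv f x) :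
    ∀ x, X₁ ≤ x →
      f x ≤ K * (x ^ lam * deriv f x) + (f X₁ - K * (X₁ ^ lam * deriv f X₁)) := by
  have hKpos : 0 < K := by rw [hK]; positivity
  have hdiff : ∀ x ∈ Set.Ici X₁, HasDerivAt (fun y => f y - K * (y ^ lam * deriv f y))
      (deriv f x - K * (lam * x ^ (lam - 1) * deriv f x + x ^ lam * deriv (deriv f) x)) x := by
    intro x hx
    have hx0 : (0:ℝ) < x := lt_of_lt_of_le (by linarith) hx
    have hx₀ : x₀ ≤ x := le_trans hX₁x₀ hx
    exact ((hfd x hx₀).hasDerivAt).sub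
      (((Real.hasDerivAt_rpow_const (Or.inl hx0.ne')).mul
        ((hfd2 x hx₀).hasDerivAt)).const_mul K)
  have hanti : AntitoneOn (fun y => f y - K * (y ^ lam * deriv f y)) (Set.Ici X₁) := by
    apply antitoneOn_of_deriv_nonpos (convex_Ici X₁)
    · intro x hx
      exact ((hdiff x hx).differentiableAt).continuousAt.continuousWithinAt
    · intro x hx
      rw [interior_Ici] at hx
      exact ((hdiff x (Set.mem_Ici.mpr (le_of_lt hx))).differentiableAt).differentiableWithinAt
    · intro x hx
      rw [interior_Ici] at hx
      have hxX : X₁ ≤ x := le_of_lt hx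
      rw [(hdiff x hxX).deriv]
      have hx0 : (0:ℝ) < x := lt_of_lt_of_le (by linarith) hxX
      have hf'x : 0 < deriv f x := hf'pos x (le_trans hX₁x₀ hxX)
      have h1 : c₁ * deriv f x ≤ x ^ lam * deriv (deriv f) x := by
        have h2 := (le_div_iff₀ hf'x).mp (hbnd x hxX)
        have h3 : x ^ lam * (c₁ * x ^ (-lam) * deriv f x) ≤ x ^ lam * deriv (deriv f) x :=
          mul_le_mul_of_nonneg_left h2 (Real.rpow_nonneg hx0.le lam)
        have hinv : x ^ lam * x ^ (-lam) = 1 := by rw [← Real.rpow_add hx0]; simp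
        have h4 : x ^ lam * (c₁ * x ^ (-lam) * deriv f x) = c₁ * deriv f x := by
          calc x ^ lam * (c₁ * x ^ (-lam) * deriv f x)
              = (x ^ lam * x ^ (-lam)) * (c₁ * deriv f x) := by ring
            _ = c₁ * deriv f x := by rw [hinv]; ring
        linarith
      have h2 : 0 ≤ lam * x ^ (lam - 1) * deriv f x := by positivity
      have hKc : K * c₁ = 2 := by rw [hK]; field_simp
      have h5 := mul_le_mul_of_nonneg_left h1 hKpos.le
      nlinarith [hf'x]
  intro x hx
  have h6 := hanti Set.self_mem_Ici hx hx
  simp only at h6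
  linarith

set_option maxHeartbeats 1000000 in
/-- Lemma on the shifted boundary value: if `f(τ₀(ε))·ε = γ(ε) + o(1/γ(ε))`,
`R̃(ε) = o(ln γ(ε))` and `Δ(ε)` is the prescribed shift, then for any
`η(ε) = o(1/(f'(τ₀(ε))·ε·γ(ε)))` one has
`f(τ₀+Δ+η)·ε = γ + (2/α+β−2)·ln γ/γ + R̃/γ + o(1/γ)`. -/
theorem boundary_shift_expansion (f : ℝ → ℝ) (lam x₀ α β : ℝ)
    (γ τ₀ R Δ η : ℝ → ℝ)
    (hlam : lam ∈ Set.Ioc (0 : ℝ) 1)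
    (hα : α ≠ 0)
    (hf : GrowthCondition f lam x₀)
    (hγpos : ∀ ε : ℝ, 0 < ε → 0 < γ ε)
    (hτ₀pos : ∀ ε : ℝ, 0 < ε → 0 < τ₀ ε)
    (hγtop : Tendsto γ (𝓝[>] (0 : ℝ)) atTop)
    (hτ₀top : Tendsto τ₀ (𝓝[>] (0 : ℝ)) atTop)
    (hτ₀γ : Tendsto (fun ε => (f (τ₀ ε) * ε - γ ε) * γ ε) (𝓝[>] (0 : ℝ)) (𝓝 0))
    (hR : Tendsto (fun ε => R ε / Real.log (γ ε)) (𝓝[>] (0 : ℝ)) (𝓝 0))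
    (hΔ : ∀ ε : ℝ, Δ ε =
      ((2 / α + β - 2) * Real.log (γ ε) / γ ε + R ε / γ ε) / (deriv f (τ₀ ε) * ε))
    (hη : Tendsto (fun ε => η ε * (deriv f (τ₀ ε) * ε * γ ε)) (𝓝[>] (0 : ℝ)) (𝓝 0)) :
    Tendsto (fun ε =>
        (f (τ₀ ε + Δ ε + η ε) * ε -
          (γ ε + (2 / α + β - 2) * Real.log (γ ε) / γ ε + R ε / γ ε)) * γ ε)
      (𝓝[>] (0 : ℝ)) (𝓝 0) := by
  obtain ⟨hfd, hfd2, -, -, hf'pos, c₁, c₂, hc₁, hc₁₂, hcc⟩ := hf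
  have hc₂ : 0 < c₂ := lt_of_lt_of_le hc₁ hc₁₂
  obtain ⟨X₀, hX₀⟩ := hcc.exists_forall_of_atTop
  set X₁ : ℝ := max X₀ (max x₀ 1) with hX₁def
  have hX₁x₀ : x₀ ≤ X₁ := le_max_of_le_right (le_max_left _ _)
  have hX₁1 : (1:ℝ) ≤ X₁ := le_max_of_le_right (le_max_right _ _)
  have hbnd : ∀ x, X₁ ≤ x → c₁ * x ^ (-lam) ≤ deriv (deriv f) x / deriv f x ∧
      deriv (deriv f) x / deriv f x ≤ c₂ * x ^ (-lam) :=
    fun x hx => hX₀ x (le_trans (le_max_left _ _) hx)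
  set K : ℝ := 2 / c₁ with hKdef
  set D : ℝ := 2 / α + β - 2 with hDdef
  set C₁ : ℝ := 2 * K * (|D| + 2) with hC₁def
  set C₂ : ℝ := 6 * c₂ * C₁ * (|D| + 2) with hC₂def
  set C₀ : ℝ := f X₁ - K * (X₁ ^ lam * deriv f X₁) with hC₀def
  have hLA : ∀ x, X₁ ≤ x → f x ≤ K * (x ^ lam * deriv f x) + C₀ :=
    growth_linear_bound f lam x₀ c₁ X₁ K hlam.1 hc₁ hKdef hX₁1 hX₁x₀
      hfd hfd2 hf'pos (fun x hx => (hbnd x hx).1)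
  have hγcomp : Tendsto (fun ε => Real.log (γ ε) / γ ε) (𝓝[>] (0:ℝ)) (𝓝 0) := by
    have h1 := Real.tendsto_pow_log_div_mul_add_atTop 1 0 1 one_ne_zero
    simp only [pow_one, one_mul, add_zero] at h1
    exact h1.comp hγtop
  have hC₁pos : 0 < C₁ := by rw [hC₁def, hKdef]; positivity
  set δ₀ : ℝ := min (1 / (2 * C₁)) (1 / (2 * (c₂ * C₁))) with hδ₀def
  have hδ₀pos : 0 < δ₀ := by rw [hδ₀def]; apply lt_min <;> positivity
  -- eventual facts
  have e_pos : ∀ᶠ ε in 𝓝[>] (0:ℝ), 0 < ε := self_mem_nhdsWithin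
  have e_γ : ∀ᶠ ε in 𝓝[>] (0:ℝ), max 4 (Real.exp 1) ≤ γ ε :=
    hγtop.eventually_ge_atTop _
  have e_τ : ∀ᶠ ε in 𝓝[>] (0:ℝ), 2 * X₁ + 2 ≤ τ₀ ε :=
    hτ₀top.eventually_ge_atTop _
  have habs_small : ∀ {u : ℝ → ℝ} {r : ℝ}, 0 < r →
      Tendsto u (𝓝[>] (0:ℝ)) (𝓝 0) → ∀ᶠ ε in 𝓝[>] (0:ℝ), |u ε| ≤ r := by
    intro u r hr hu
    filter_upwards [hu (Metric.ball_mem_nhds 0 hr)] with ε hε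
    simp only [Set.mem_preimage, Metric.mem_ball, Real.dist_eq, sub_zero] at hε
    exact hε.le
  have e_fτγ := habs_small one_pos hτ₀γ
  have e_η := habs_small one_pos hη
  have e_R := habs_small one_pos hR
  have e_small := habs_small hδ₀pos hγcomp
  have e_C0 : ∀ᶠ ε in 𝓝[>] (0:ℝ), |C₀| * ε ≤ 1 := by
    have h1 : Set.Iio (1 / (|C₀| + 1)) ∈ 𝓝 (0:ℝ) := Iio_mem_nhds (by positivity)
    filter_upwards [mem_nhdsWithin_of_mem_nhds h1, e_pos] with ε hε hεp
    have h2 : ε * (|C₀| + 1) < 1 := (lt_div_iff₀ (by positivity)).mp hε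
    nlinarith [abs_nonneg C₀]
  -- the middle Taylor term
  have hbound : ∀ᶠ ε in 𝓝[>] (0:ℝ),
      ‖ε * γ ε * (f (τ₀ ε + (Δ ε + η ε)) - f (τ₀ ε) - deriv f (τ₀ ε) * (Δ ε + η ε))‖ ≤
        C₂ * (Real.log (γ ε) / γ ε * (Real.log (γ ε) / γ ε)) := by
    filter_upwards [e_pos, e_γ, e_τ, e_fτγ, e_η, e_R, e_small, e_C0] with
      ε hεp hγε hτε hfgε hηε hRε hsmε hC0ε
    rw [Real.norm_eq_abs]
    have hγ4 : 4 ≤ γ ε := le_trans (le_max_left _ _) hγε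
    have hγ0 : 0 < γ ε := by linarith
    have hlogγ : 1 ≤ Real.log (γ ε) :=
      (Real.le_log_iff_exp_le hγ0).mpr (le_trans (le_max_right _ _) hγε)
    have hR' : |R ε| ≤ Real.log (γ ε) := by
      rw [abs_div] at hRε
      have hlp : (0:ℝ) < |Real.log (γ ε)| := by
        rw [abs_of_pos (by linarith)]; linarith
      have := (div_le_one hlp).mp hRε
      rwa [abs_of_pos (by linarith : (0:ℝ) < Real.log (γ ε))] at this
    have hsm' : Real.log (γ ε) / γ ε ≤ min (1 / (2 * C₁)) (1 / (2 * (c₂ * C₁))) := by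
      have := (le_abs_self (Real.log (γ ε) / γ ε)).trans hsmε
      rwa [hδ₀def] at this
    exact pointwise_bound f lam x₀ c₁ c₂ X₁ K C₀ D C₁ C₂ hlam.1 hlam.2 hc₁ hc₂
      hKdef hC₁def hC₂def hX₁1 hX₁x₀ hfd hfd2 hf'pos hbnd hLA
      ε (τ₀ ε) (γ ε) (Δ ε) (η ε) (R ε) hεp hγ4 hlogγ hτε hfgε hηε hR' hsm' hC0ε (hΔ ε)
  have htendC₂ : Tendsto (fun ε => C₂ * (Real.log (γ ε) / γ ε * (Real.log (γ ε) / γ ε)))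
      (𝓝[>] (0:ℝ)) (𝓝 0) := by
    have h1 := (hγcomp.mul hγcomp).const_mul C₂
    simpa using h1
  have hT2 : Tendsto (fun ε =>
      ε * γ ε * (f (τ₀ ε + (Δ ε + η ε)) - f (τ₀ ε) - deriv f (τ₀ ε) * (Δ ε + η ε)))
      (𝓝[>] (0:ℝ)) (𝓝 0) := squeeze_zero_norm' hbound htendC₂
  have hsum : Tendsto (fun ε =>
      (f (τ₀ ε) * ε - γ ε) * γ ε +
        ε * γ ε * (f (τ₀ ε + (Δ ε + η ε)) - f (τ₀ ε) - deriv f (τ₀ ε) * (Δ ε + η ε)) +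
        η ε * (deriv f (τ₀ ε) * ε * γ ε)) (𝓝[>] (0:ℝ)) (𝓝 0) := by
    have := (hτ₀γ.add hT2).add hη
    simpa using this
  apply Tendsto.congr' _ hsum
  filter_upwards [e_pos, e_τ] with ε hεp hτε
  have hτx₀ : x₀ ≤ τ₀ ε := by
    have : X₁ ≤ τ₀ ε := by linarith
    linarith
  have hF' : 0 < deriv f (τ₀ ε) := hf'pos _ hτx₀
  have hF'ε : deriv f (τ₀ ε) * ε ≠ 0 := by positivity
  have hΔeq : deriv f (τ₀ ε) * ε * Δ ε =
      D * Real.log (γ ε) / γ ε + R ε / γ ε := by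
    rw [hΔ ε]
    field_simp
  rw [add_assoc (τ₀ ε) (Δ ε) (η ε)]
  linear_combination (-(γ ε)) * hΔeq
end

section
/- Let q ∈ (0, 1) and define g(t) := (ln t)^{1/q − 1}/(q·t) for t > 1 (this is the derivative of the inverse of the function f(x) = exp(x^q)). Let γ(ε) be any positive function with γ(ε) → ∞ and ln γ(ε) = o(ln(1/ε)) as ε → 0⁺. Then, as ε → 0⁺: (i) sup_{y ∈ [γ(ε)/2, 2γ(ε)]} | y · g(y/ε) / g(1/ε) − 1 | → 0, i.e., uniformly over y ∈ [γ(ε)/2, 2γ(ε)] one has g(y/ε) ~ y^{−1}·g(1/ε); and (ii) sup_{y ≥ 2γ(ε)} g(y/ε)/g(1/ε) → 0. -/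
open Filter Set Topology

/-- Regularity of the derivative of the inverse of `f(x) = exp(x^q)`, `q ∈ (0,1)`:
with `g(t) = (ln t)^{1/q−1}/(q t)` and any positive `γ(ε) → ∞` with
`ln γ(ε) = o(ln(1/ε))`, one has, as `ε → 0⁺`, `g(y/ε) ~ y⁻¹ g(1/ε)` uniformly over
`y ∈ [γ(ε)/2, 2γ(ε)]`, and `sup_{y ≥ 2γ(ε)} g(y/ε)/g(1/ε) → 0`. -/
theorem exp_boundary_regularity (q : ℝ) (hq : q ∈ Set.Ioo (0 : ℝ) 1)
    (g : ℝ → ℝ)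
    (hgdef : ∀ t : ℝ, g t = Real.log t ^ (1 / q - 1) / (q * t))
    (γ : ℝ → ℝ)
    (hγpos : ∀ ε : ℝ, 0 < ε → 0 < γ ε)
    (hγtop : Tendsto γ (𝓝[>] (0 : ℝ)) atTop)
    (hγsmall : Tendsto (fun ε => Real.log (γ ε) / Real.log (1 / ε)) (𝓝[>] (0 : ℝ)) (𝓝 0)) :
    (∀ δ > (0 : ℝ), ∀ᶠ ε in 𝓝[>] (0 : ℝ), ∀ y ∈ Set.Icc (γ ε / 2) (2 * γ ε),
        |y * g (y / ε) / g (1 / ε) - 1| < δ) ∧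
    (∀ δ > (0 : ℝ), ∀ᶠ ε in 𝓝[>] (0 : ℝ), ∀ y : ℝ, 2 * γ ε ≤ y →
        g (y / ε) / g (1 / ε) < δ) := by
  obtain ⟨hq0, hq1⟩ := hq
  set a : ℝ := 1 / q - 1 with ha_def
  have ha : 0 < a := by
    have : 1 < 1 / q := one_lt_one_div hq0 hq1
    simp only [ha_def]; linarith
  -- key identity
  have key : ∀ ε : ℝ, 0 < ε → ε < 1 → ∀ y : ℝ, 0 < y →
      g (y/ε) / g (1/ε)
        = (Real.log y + Real.log (1/ε)) ^ a / (y * (Real.log (1/ε)) ^ a) := by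
    intro ε hε hε1 y hy
    have hL : 0 < Real.log (1/ε) := Real.log_pos (by rw [lt_div_iff₀ hε]; linarith)
    have hLa : (0:ℝ) < Real.log (1/ε) ^ a := Real.rpow_pos_of_pos hL _
    have hlog : Real.log (y/ε) = Real.log y + Real.log (1/ε) := by
      rw [Real.log_div hy.ne' hε.ne', one_div, Real.log_inv]; ring
    rw [hgdef, hgdef, hlog]
    have h1 : q ≠ 0 := hq0.ne'
    have h2 : ε ≠ 0 := hε.ne'
    have h3 : y ≠ 0 := hy.ne'
    have h4 : Real.log (1/ε) ^ a ≠ 0 := hLa.ne'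
    field_simp
  -- basic eventual facts
  have hev01 : ∀ᶠ ε in 𝓝[>] (0:ℝ), 0 < ε ∧ ε < 1 := by
    filter_upwards [self_mem_nhdsWithin,
      eventually_nhdsWithin_of_eventually_nhds (eventually_lt_nhds one_pos)] with ε h1 h2
    exact ⟨h1, h2⟩
  have hLtop : Tendsto (fun ε : ℝ => Real.log (1/ε)) (𝓝[>] (0:ℝ)) atTop := by
    have h1 : Tendsto (fun ε : ℝ => (1:ℝ)/ε) (𝓝[>] (0:ℝ)) atTop := by
      simpa [one_div] using tendsto_inv_nhdsGT_zero
    exact Real.tendsto_log_atTop.comp h1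
  constructor
  · -- part (i)
    intro δ hδ
    -- continuity of u ↦ (1+u)^a at 0
    have hcont : Tendsto (fun u : ℝ => (1+u) ^ a) (𝓝 0) (𝓝 1) := by
      have h1 : Tendsto (fun u : ℝ => 1+u) (𝓝 (0:ℝ)) (𝓝 1) := by
        simpa using (continuous_add_left (1:ℝ)).tendsto (0:ℝ)
      have h2 : ContinuousAt (fun x : ℝ => x ^ a) 1 :=
        Real.continuousAt_rpow_const 1 a (Or.inl one_ne_zero)
      exact (by simpa [Real.one_rpow] using h2.tendsto :
        Tendsto (fun x : ℝ => x ^ a) (𝓝 1) (𝓝 1)).comp h1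
    have hδ' : ∀ᶠ u in 𝓝 (0:ℝ), |(1+u) ^ a - 1| < δ := by
      have := Metric.tendsto_nhds.mp hcont δ hδ
      simpa [Real.dist_eq] using this
    obtain ⟨u0, hu0pos, hu0⟩ := Metric.eventually_nhds_iff.mp hδ'
    set u1 : ℝ := min u0 (1/2) with hu1_def
    have hu1pos : 0 < u1 := lt_min hu0pos (by norm_num)
    have hu1le : u1 ≤ 1/2 := min_le_right _ _
    have hu1prop : ∀ u : ℝ, |u| < u1 → |(1+u) ^ a - 1| < δ := by
      intro u hu
      exact hu0 (by simpa [Real.dist_eq] using lt_of_lt_of_le hu (min_le_left _ _))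
    -- eventual smallness of (ln γ + ln 2)/L
    have hsum : Tendsto (fun ε => (Real.log (γ ε) + Real.log 2) / Real.log (1/ε))
        (𝓝[>] (0:ℝ)) (𝓝 0) := by
      have h2 : Tendsto (fun ε : ℝ => Real.log 2 / Real.log (1/ε)) (𝓝[>] (0:ℝ)) (𝓝 0) := by
        simpa [div_eq_mul_inv] using hLtop.inv_tendsto_atTop.const_mul (Real.log 2)
      have := hγsmall.add h2
      simpa [add_div] using this
    have hsmall : ∀ᶠ ε in 𝓝[>] (0:ℝ),
        (Real.log (γ ε) + Real.log 2) / Real.log (1/ε) < u1 :=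
      hsum.eventually (eventually_lt_nhds hu1pos)
    filter_upwards [hev01, hγtop.eventually_ge_atTop 2, hsmall] with ε hε hγ2 hsm y hy
    obtain ⟨hε0, hε1⟩ := hε
    have hL : 0 < Real.log (1/ε) := Real.log_pos (by rw [lt_div_iff₀ hε0]; linarith)
    have hγε : 0 < γ ε := hγpos ε hε0
    have hy0 : 0 < y := lt_of_lt_of_le (by linarith) hy.1
    -- |log y| ≤ log γ + log 2
    have hlogy_ub : Real.log y ≤ Real.log (γ ε) + Real.log 2 := by
      calc Real.log y ≤ Real.log (2 * γ ε) := Real.log_le_log hy0 hy.2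
        _ = Real.log 2 + Real.log (γ ε) := Real.log_mul (by norm_num) hγε.ne'
        _ = _ := by ring
    have hlogy_lb : -(Real.log (γ ε) + Real.log 2) ≤ Real.log y := by
      have h1 : Real.log (γ ε / 2) ≤ Real.log y :=
        Real.log_le_log (by linarith) hy.1
      have h2 : Real.log (γ ε / 2) = Real.log (γ ε) - Real.log 2 := by
        rw [Real.log_div hγε.ne' (by norm_num)]
      have h3 : 0 ≤ Real.log 2 := Real.log_nonneg (by norm_num)
      have h4 : 0 ≤ Real.log (γ ε) := Real.log_nonneg (by linarith)
      linarith
    have habs : |Real.log y| < u1 * Real.log (1/ε) := by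
      rw [abs_lt]
      have := (div_lt_iff₀ hL).mp hsm
      constructor <;> linarith
    set u : ℝ := Real.log y / Real.log (1/ε) with hu_def
    have hu_abs : |u| < u1 := by
      rw [hu_def, abs_div, abs_of_pos hL, div_lt_iff₀ hL]
      exact habs
    have hupos : 0 < 1 + u := by
      have := abs_lt.mp hu_abs
      have : -(1/2:ℝ) < u := by linarith [this.1, hu1le]
      linarith
    have hkey := key ε hε0 hε1 y hy0
    have hrw : y * g (y / ε) / g (1 / ε) = (1 + u) ^ a := by
      rw [mul_div_assoc, hkey]
      rw [show Real.log y + Real.log (1/ε) = (1 + u) * Real.log (1/ε) by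
        rw [hu_def]; field_simp; ring]
      rw [Real.mul_rpow hupos.le hL.le]
      field_simp
    rw [hrw]
    exact hu1prop u hu_abs
  · -- part (ii)
    intro δ hδ
    set C : ℝ := (1 + 2*a) ^ a with hC_def
    have hCpos : 0 < C := Real.rpow_pos_of_pos (by linarith) _
    filter_upwards [hev01, hγtop.eventually_ge_atTop 1,
      hγtop.eventually_ge_atTop ((C/δ)^2), hLtop.eventually_ge_atTop 1] with ε hε hγ1 hγC hL1
      y hy
    obtain ⟨hε0, hε1⟩ := hε
    have hL : 0 < Real.log (1/ε) := lt_of_lt_of_le one_pos hL1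
    have hy1 : 1 ≤ y := le_trans (by linarith) hy
    have hy0 : 0 < y := lt_of_lt_of_le one_pos hy1
    have hlogy : 0 ≤ Real.log y := Real.log_nonneg hy1
    rw [key ε hε0 hε1 y hy0]
    -- step 1: (log y + L)^a ≤ L^a * (1 + log y)^a
    have hstep1 : (Real.log y + Real.log (1/ε)) ^ a
        ≤ Real.log (1/ε) ^ a * (1 + Real.log y) ^ a := by
      rw [← Real.mul_rpow hL.le (by linarith)]
      apply Real.rpow_le_rpow (by linarith) _ ha.le
      have : Real.log y ≤ Real.log (1/ε) * Real.log y := le_mul_of_one_le_left hlogy hL1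
      nlinarith
    -- step 2: (1 + log y)^a ≤ C * y^(1/2)
    have hb : (0:ℝ) < 1/(2*a) := by positivity
    have hstep2 : (1 + Real.log y) ^ a ≤ C * y ^ (1/2 : ℝ) := by
      have h1 : Real.log y ≤ y ^ (1/(2*a)) / (1/(2*a)) := Real.log_le_rpow_div hy0.le hb
      have h2 : (1:ℝ) ≤ y ^ (1/(2*a)) := Real.one_le_rpow hy1 hb.le
      have h3 : 1 + Real.log y ≤ (1 + 2*a) * y ^ (1/(2*a)) := by
        have : y ^ (1/(2*a)) / (1/(2*a)) = 2*a * y ^ (1/(2*a)) := by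
          field_simp
        nlinarith
      calc (1 + Real.log y) ^ a ≤ ((1 + 2*a) * y ^ (1/(2*a))) ^ a :=
            Real.rpow_le_rpow (by linarith) h3 ha.le
        _ = C * (y ^ (1/(2*a))) ^ a := Real.mul_rpow (by linarith) (by positivity)
        _ = C * y ^ (1/2 : ℝ) := by
            rw [← Real.rpow_mul hy0.le, show 1/(2*a)*a = (1/2:ℝ) by
              field_simp]
    have hLa : (0:ℝ) < Real.log (1/ε) ^ a := Real.rpow_pos_of_pos hL _
    have hchain : (Real.log y + Real.log (1/ε)) ^ a / (y * Real.log (1/ε) ^ a)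
        ≤ C * y ^ (1/2 : ℝ) / y := by
      have hnum : (Real.log y + Real.log (1/ε)) ^ a
          ≤ Real.log (1/ε) ^ a * (C * y ^ (1/2 : ℝ)) :=
        le_trans hstep1 (mul_le_mul_of_nonneg_left hstep2 hLa.le)
      calc (Real.log y + Real.log (1/ε)) ^ a / (y * Real.log (1/ε) ^ a)
          ≤ (Real.log (1/ε) ^ a * (C * y ^ (1/2 : ℝ))) / (y * Real.log (1/ε) ^ a) := by
            gcongr
        _ = C * y ^ (1/2 : ℝ) / y := by
            field_simp
    have hfinal : C * y ^ (1/2 : ℝ) / y < δ := by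
      rw [← Real.sqrt_eq_rpow]
      have hsy : 0 < Real.sqrt y := Real.sqrt_pos.mpr hy0
      have h1 : C * Real.sqrt y / y = C / Real.sqrt y := by
        rw [eq_div_iff hsy.ne', div_mul_eq_mul_div, mul_assoc,
          Real.mul_self_sqrt hy0.le, mul_div_assoc, div_self hy0.ne', mul_one]
      rw [h1, div_lt_iff₀ hsy]
      have h2 : C / δ < Real.sqrt (2 * γ ε) := by
        rw [Real.lt_sqrt (by positivity)]
        have hγ1' : (1:ℝ) ≤ γ ε := hγ1
        nlinarith
      have h3 : Real.sqrt (2 * γ ε) ≤ Real.sqrt y := Real.sqrt_le_sqrt hy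
      have h4 := (div_lt_iff₀ hδ).mp h2
      have h5 : Real.sqrt (2 * γ ε) * δ ≤ Real.sqrt y * δ :=
        mul_le_mul_of_nonneg_right h3 hδ.le
      linarith
    exact lt_of_le_of_lt hchain hfinal
end
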